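/- arXiv:1005.1186 — 4 statements merged into one kernel-verified Lean document; each statement's English description precedes it below -/
import Mathlib

section
/- For a subset J of S, every element w of W with ℓ(sw) ≥ ℓ(w) for all s ∈ J satisfies ℓ(w⁻¹uw) ≥ ℓ(u) for all u in the parabolic subgroup W_J. -/
namespace StrongExchangeAux

open CoxeterSystem List

open scoped Classical

variable {B W : Type*} [Group W] {M : CoxeterMatrix B} (cs : CoxeterSystem M W)

local prefix:100 "s" => cs.simple
local prefix:100 "π" => cs.wordProd
local prefix:100 "ℓ" => cs.length

lemma simple_conj_eq_simple_iff (i : B) (t : W) :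
    s i * t * s i = s i ↔ t = s i := by
  constructor
  · intro h
    have h2 : s i * t = 1 := by
      have := congrArg (· * s i) h
      simpa [mul_assoc, cs.simple_mul_simple_self] using this
    have h3 := eq_inv_of_mul_eq_one_right h2
    rw [h3, cs.inv_simple]
  · intro h; subst h
    rw [cs.simple_mul_simple_self, one_mul]

/-- The involution of `W × ZMod 2` attached to the simple reflection `s i`. -/
noncomputable def sigma (i : B) : Equiv.Perm (W × ZMod 2) :=
  Function.Involutive.toPerm
    (fun p => (s i * p.1 * s i, p.2 + if p.1 = s i then 1 else 0))
    (by
      rintro ⟨t, ε⟩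
      simp only [Prod.mk.injEq]
      constructor
      · rw [← mul_assoc, ← mul_assoc, cs.simple_mul_simple_self, one_mul,
          mul_assoc, cs.simple_mul_simple_self, mul_one]
      · rw [simple_conj_eq_simple_iff]
        by_cases ht : t = s i
        · subst ht
          rw [if_pos rfl, add_assoc, (by decide : (1 : ZMod 2) + 1 = 0), add_zero]
        · simp [ht])

@[simp] lemma sigma_apply (i : B) (t : W) (ε : ZMod 2) :
    sigma cs i (t, ε) = (s i * t * s i, ε + if t = s i then 1 else 0) := rfl

lemma aux_conj_iff (x y t : W) : x * t * x⁻¹ = y ↔ t = x⁻¹ * y * x := by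
  constructor
  · intro h; rw [← h]; group
  · intro h; rw [h]; group

lemma aux_shift (a b t : W) (ha : a * a = 1) (hb : b * b = 1) (k : ℕ) :
    ((a * b) * t * (a * b)⁻¹ = b * (a * b) ^ k) ↔ (t = b * (a * b) ^ (k + 2)) := by
  have ha' : a⁻¹ = a := inv_eq_of_mul_eq_one_right ha
  have hb' : b⁻¹ = b := inv_eq_of_mul_eq_one_right hb
  have hinv : (a * b)⁻¹ * (b * (a * b) ^ k) * (a * b) = b * (a * b) ^ (k + 2) := by
    rw [mul_inv_rev, ha', hb', pow_succ, pow_succ']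
    simp only [mul_assoc]
  rw [aux_conj_iff, hinv]

lemma aux_one (a b t : W) (hb : b * b = 1) :
    (b * t * b = a) ↔ (t = b * (a * b) ^ 1) := by
  have hb' : b⁻¹ = b := inv_eq_of_mul_eq_one_right hb
  rw [pow_one]
  have : b * t * b = b * t * b⁻¹ := by rw [hb']
  rw [this, aux_conj_iff, hb']
  simp only [mul_assoc]

lemma sigma_mul_pow_apply (i j : B) (n : ℕ) (t : W) (ε : ZMod 2) :
    ((sigma cs i * sigma cs j) ^ n) (t, ε) =
      ((s i * s j) ^ n * t * ((s i * s j) ^ n)⁻¹,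
        ε + ∑ k ∈ Finset.range (2 * n), if t = s j * (s i * s j) ^ k then 1 else 0) := by
  induction n generalizing t ε with
  | zero => simp
  | succ n ih =>
    have happ : ((sigma cs i * sigma cs j) ^ (n + 1)) (t, ε)
        = ((sigma cs i * sigma cs j) ^ n) ((sigma cs i) ((sigma cs j) (t, ε))) := by
      rw [pow_succ]
      rfl
    have h1 : (sigma cs j) (t, ε) = (s j * t * s j, ε + if t = s j then 1 else 0) := rfl
    have hstep : (sigma cs i) ((sigma cs j) (t, ε)) =
        ((s i * s j) * t * (s i * s j)⁻¹,
          ε + ((if t = s j * (s i * s j) ^ 0 then 1 else 0)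
            + if t = s j * (s i * s j) ^ 1 then 1 else 0)) := by
      rw [h1, sigma_apply]
      have hconj : s i * (s j * t * s j) * s i = (s i * s j) * t * (s i * s j)⁻¹ := by
        rw [mul_inv_rev, cs.inv_simple, cs.inv_simple]
        group
      rw [Prod.mk.injEq]
      refine ⟨hconj, ?_⟩
      rw [add_assoc, pow_zero, mul_one]
      congr 2
      exact if_congr (aux_one (s i) (s j) t (cs.simple_mul_simple_self j)) rfl rfl
    rw [happ, hstep, ih]
    rw [Prod.mk.injEq]
    constructor
    · simp only [pow_succ, mul_inv_rev, mul_assoc]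
    · have hsum : ∑ k ∈ Finset.range (2 * n),
            (if (s i * s j) * t * (s i * s j)⁻¹ = s j * (s i * s j) ^ k then (1 : ZMod 2) else 0)
          = ∑ k ∈ Finset.range (2 * n),
            (if t = s j * (s i * s j) ^ (k + 2) then (1 : ZMod 2) else 0) := by
        refine Finset.sum_congr rfl fun k _ => if_congr
          (aux_shift (s i) (s j) t (cs.simple_mul_simple_self i) (cs.simple_mul_simple_self j) k)
          rfl rfl
      rw [hsum]
      have h2 : (2 : ℕ) * (n + 1) = (2 * n + 1) + 1 := by ring
      rw [h2, Finset.sum_range_succ', Finset.sum_range_succ']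
      simp only [show ∀ k : ℕ, k + 1 + 1 = k + 2 from fun _ => rfl]
      ring

lemma isLiftable_sigma : M.IsLiftable (fun i => sigma cs i) := by
  intro i j
  have key : ∀ p : W × ZMod 2, ((sigma cs i * sigma cs j) ^ M.M i j) p = p := by
    rintro ⟨t, ε⟩
    rw [sigma_mul_pow_apply, cs.simple_mul_simple_pow i j]
    rw [Prod.mk.injEq]
    constructor
    · rw [one_mul, inv_one, mul_one]
    · have hper : ∀ k : ℕ, (if t = s j * (s i * s j) ^ (M.M i j + k) then (1 : ZMod 2) else 0)
          = if t = s j * (s i * s j) ^ k then 1 else 0 := by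
        intro k
        have hp : (s i * s j) ^ (M.M i j + k) = (s i * s j) ^ k := by
          rw [pow_add, cs.simple_mul_simple_pow i j, one_mul]
        rw [hp]
      rw [two_mul, Finset.sum_range_add]
      simp only [hper]
      rw [← two_mul]
      have : (2 : ZMod 2) = 0 := by decide
      rw [this, zero_mul, add_zero]
  exact Equiv.ext key

/-- The homomorphism from `W` to permutations of `W × ZMod 2`. -/
noncomputable def Phi : W →* Equiv.Perm (W × ZMod 2) :=
  cs.lift ⟨fun i => sigma cs i, isLiftable_sigma cs⟩

lemma Phi_simple (i : B) : Phi cs (s i) = sigma cs i :=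
  cs.lift_apply_simple (isLiftable_sigma cs) i

lemma Phi_inv_wordProd_apply (ω : List B) (t : W) (ε : ZMod 2) :
    Phi cs (π ω)⁻¹ (t, ε) =
      ((π ω)⁻¹ * t * (π ω), ε + ((cs.leftInvSeq ω).count t : ZMod 2)) := by
  induction ω generalizing t ε with
  | nil => simp
  | cons i ω ih =>
    have hm : (π (i :: ω))⁻¹ = (π ω)⁻¹ * s i := by
      rw [cs.wordProd_cons, mul_inv_rev, cs.inv_simple]
    rw [hm, map_mul, Equiv.Perm.mul_apply, Phi_simple, sigma_apply, ih]
    rw [Prod.mk.injEq]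
    constructor
    · rw [cs.wordProd_cons]
      simp only [mul_inv_rev, cs.inv_simple, mul_assoc]
    · have hcount : (cs.leftInvSeq (i :: ω)).count t
          = (if t = s i then 1 else 0) + (cs.leftInvSeq ω).count (s i * t * s i) := by
        show ((s i :: List.map (MulAut.conj (s i)) (cs.leftInvSeq ω)).count t) = _
        rw [List.count_cons, add_comm]
        have ht : t = (MulAut.conj (s i)) (s i * t * s i) := by
          simp [MulAut.conj_apply, mul_assoc]
        congr 1
        · simp only [beq_iff_eq]
          exact if_congr eq_comm rfl rfl
        · conv_lhs => rw [ht]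
          exact List.count_map_of_injective _ _ (MulAut.conj (s i)).injective _
      rw [hcount]
      push_cast
      ring

lemma count_leftInvSeq_parity {ω₁ ω₂ : List B} (h : π ω₁ = π ω₂) (t : W) :
    (((cs.leftInvSeq ω₁).count t : ZMod 2)) = ((cs.leftInvSeq ω₂).count t : ZMod 2) := by
  have h1 := Phi_inv_wordProd_apply cs ω₁ t 0
  have h2 := Phi_inv_wordProd_apply cs ω₂ t 0
  rw [h] at h1
  have := congrArg Prod.snd (h1.symm.trans h2)
  simpa using this

/-- Strong exchange for simple reflections. -/
lemma exchange_simple {ω : List B} {i : B}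
    (h : cs.IsLeftDescent (π ω) i) :
    ∃ j < ω.length, s i * π ω = π (ω.eraseIdx j) := by
  obtain ⟨ω₂, hred₂, hprod₂⟩ := cs.exists_reduced_word' (s i * π ω)
  have hword : π (i :: ω₂) = π ω := by
    rw [cs.wordProd_cons, ← hprod₂, cs.simple_mul_simple_cancel_left]
  have hlen₂ : ω₂.length = ℓ (s i * π ω) := hred₂.symm ▸ congrArg _ hprod₂.symm
  have hred : cs.IsReduced (i :: ω₂) := by
    unfold CoxeterSystem.IsReduced
    rw [hword, List.length_cons, hlen₂]
    have := cs.isLeftDescent_iff.mp h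
    omega
  have hmem : s i ∈ cs.leftInvSeq (i :: ω₂) := by
    show s i ∈ s i :: _
    exact List.mem_cons_self
  have hone : (cs.leftInvSeq (i :: ω₂)).count (s i) = 1 :=
    List.count_eq_one_of_mem (hred.nodup_leftInvSeq) hmem
  have hpar := count_leftInvSeq_parity cs hword (s i)
  rw [hone] at hpar
  have hmemω : s i ∈ cs.leftInvSeq ω := by
    by_contra hcon
    rw [List.count_eq_zero_of_not_mem hcon] at hpar
    simp at hpar
  obtain ⟨j, hj, hgj⟩ := List.getElem_of_mem hmemω
  have hj' : j < ω.length := by simpa using hj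
  refine ⟨j, hj', ?_⟩
  have := cs.getD_leftInvSeq_mul_wordProd ω j
  rw [List.getD_eq_getElem _ _ hj, hgj] at this
  exact this

variable (J : Set B)

lemma wordProd_mem_closure {l : List B} (hl : ∀ b ∈ l, b ∈ J) :
    π l ∈ Subgroup.closure (cs.simple '' J) := by
  induction l with
  | nil =>
    rw [cs.wordProd_nil]
    exact one_mem _
  | cons i l ih =>
    rw [cs.wordProd_cons]
    exact mul_mem (Subgroup.subset_closure ⟨i, hl i (List.mem_cons_self), rfl⟩)
      (ih fun b hb => hl b (List.mem_cons_of_mem i hb))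

lemma exists_Jword {u : W} (hu : u ∈ Subgroup.closure (cs.simple '' J)) :
    ∃ l : List B, (∀ b ∈ l, b ∈ J) ∧ π l = u := by
  induction hu using Subgroup.closure_induction with
  | mem x hx =>
    obtain ⟨b, hb, rfl⟩ := hx
    exact ⟨[b], by simpa using hb, by simp⟩
  | one => exact ⟨[], by simp, by simp⟩
  | mul x y hx hy ihx ihy =>
    obtain ⟨l₁, hl₁, rfl⟩ := ihx
    obtain ⟨l₂, hl₂, rfl⟩ := ihy
    exact ⟨l₁ ++ l₂, fun b hb => (List.mem_append.mp hb).elim (hl₁ b) (hl₂ b),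
      cs.wordProd_append l₁ l₂⟩
  | inv x hx ihx =>
    obtain ⟨l, hl, rfl⟩ := ihx
    exact ⟨l.reverse, fun b hb => hl b (List.mem_reverse.mp hb), cs.wordProd_reverse l⟩

lemma exists_reduced_Jword {l : List B} (hl : ∀ b ∈ l, b ∈ J) :
    ∃ l' : List B, (∀ b ∈ l', b ∈ J) ∧ π l' = π l ∧ cs.IsReduced l' := by
  induction l with
  | nil => exact ⟨[], by simp, rfl, by simp [CoxeterSystem.IsReduced]⟩
  | cons i l ih =>
    obtain ⟨a, haJ, haprod, hared⟩ := ih fun b hb => hl b (List.mem_cons_of_mem i hb)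
    have hiJ : i ∈ J := hl i (List.mem_cons_self)
    by_cases hd : cs.IsLeftDescent (π a) i
    · obtain ⟨j, hj, hex⟩ := exchange_simple cs hd
      refine ⟨a.eraseIdx j, fun b hb => haJ b ((a.eraseIdx_sublist j).mem hb), ?_, ?_⟩
      · rw [← hex, haprod, cs.wordProd_cons]
      · unfold CoxeterSystem.IsReduced
        rw [← hex]
        have h1 := cs.isLeftDescent_iff.mp hd
        have h2 : (a.eraseIdx j).length = a.length - 1 := by
          rw [List.length_eraseIdx]
          simp [hj]
        rw [h2, ← hared]
        omega
    · refine ⟨i :: a, ?_, ?_, ?_⟩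
      · intro b hb
        rcases List.mem_cons.mp hb with rfl | hb
        · exact hiJ
        · exact haJ b hb
      · rw [cs.wordProd_cons, cs.wordProd_cons, haprod]
      · unfold CoxeterSystem.IsReduced
        rw [cs.wordProd_cons, List.length_cons]
        have h1 := cs.not_isLeftDescent_iff.mp hd
        rw [h1, ← hared]

lemma length_mul_of_min {w : W}
    (hmin : ∀ v ∈ Subgroup.closure (cs.simple '' J), ℓ w ≤ ℓ (v * w)) :
    ∀ u ∈ Subgroup.closure (cs.simple '' J), ℓ (u * w) = ℓ u + ℓ w := by
  suffices H : ∀ n : ℕ, ∀ u ∈ Subgroup.closure (cs.simple '' J), ℓ u = n →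
      ℓ (u * w) = ℓ u + ℓ w from fun u hu => H (ℓ u) u hu rfl
  intro n
  induction n using Nat.strong_induction_on with
  | _ n ih =>
  intro u hu hn
  rcases eq_or_ne u 1 with rfl | hne
  · simp
  obtain ⟨l₀, hl₀J, hl₀⟩ := exists_Jword cs J hu
  obtain ⟨l, hlJ, hlprod, hlred⟩ := exists_reduced_Jword cs J hl₀J
  rw [hl₀] at hlprod
  match l, hlJ, hlprod, hlred with
  | [], _, hlprod, _ => exact absurd hlprod.symm hne
  | i :: l₂, hlJ, hlprod, hlred =>
  set v := π l₂ with hv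
  have hvJ : v ∈ Subgroup.closure (cs.simple '' J) :=
    wordProd_mem_closure cs J fun b hb => hlJ b (List.mem_cons_of_mem i hb)
  have hl₂red : cs.IsReduced l₂ := by
    have := CoxeterSystem.IsReduced.drop hlred (j := 1)
    simpa using this
  have hu_eq : u = s i * v := by rw [← hlprod, cs.wordProd_cons]
  have hlu : ℓ u = l₂.length + 1 := by
    rw [← hlprod, hlred]
    simp
  have hlv : ℓ v = l₂.length := hl₂red
  have hIH : ℓ (v * w) = ℓ v + ℓ w :=
    ih l₂.length (by omega) v hvJ hlv
  rcases cs.length_simple_mul (v * w) i with hup | hdown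
  · rw [hu_eq, mul_assoc, hup, hIH, ← hu_eq]
    omega
  · exfalso
    have hne2 := cs.length_simple_mul_ne (v * w) i
    have hdesc : cs.IsLeftDescent (v * w) i := by
      unfold CoxeterSystem.IsLeftDescent
      omega
    obtain ⟨b, hbred, hbw⟩ := cs.exists_reduced_word' w
    have hcat : π (l₂ ++ b) = v * w := by rw [cs.wordProd_append, ← hbw]
    have hdesc' : cs.IsLeftDescent (π (l₂ ++ b)) i := by rwa [hcat]
    obtain ⟨j, hj, hex⟩ := exchange_simple cs hdesc'
    rw [hcat] at hex
    rw [List.length_append] at hj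
    by_cases hjl : j < l₂.length
    · rw [List.eraseIdx_append_of_lt_length hjl] at hex
      have heq : u * w = π (l₂.eraseIdx j) * w := by
        rw [hu_eq, mul_assoc, hex, cs.wordProd_append, ← hbw]
      have hu2 : u = π (l₂.eraseIdx j) := mul_right_cancel heq
      have hle : ℓ u ≤ (l₂.eraseIdx j).length := hu2 ▸ cs.length_wordProd_le _
      have hlen2 := List.length_eraseIdx_add_one hjl
      omega
    · push_neg at hjl
      rw [List.eraseIdx_append_of_length_le hjl] at hex
      have hjb : j - l₂.length < b.length := by omega
      have heq : (v⁻¹ * u) * w = π (b.eraseIdx (j - l₂.length)) := by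
        calc (v⁻¹ * u) * w = v⁻¹ * (s i * (v * w)) := by rw [hu_eq]; group
          _ = v⁻¹ * (π l₂ * π (b.eraseIdx (j - l₂.length))) := by
              rw [hex, cs.wordProd_append]
          _ = π (b.eraseIdx (j - l₂.length)) := by rw [← hv, inv_mul_cancel_left]
      have hle : ℓ ((v⁻¹ * u) * w) ≤ (b.eraseIdx (j - l₂.length)).length :=
        heq ▸ cs.length_wordProd_le _
      have hlen2 := List.length_eraseIdx_add_one hjb
      have hmem : v⁻¹ * u ∈ Subgroup.closure (cs.simple '' J) := mul_mem (inv_mem hvJ) hu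
      have hm := hmin _ hmem
      have hlw : ℓ w = b.length := by rw [hbw]; exact hbred
      omega

end StrongExchangeAux

/-- If `w` is a minimal length coset representative for `W_J` (i.e. `ℓ(sw) ≥ ℓ(w)` for all
`s ∈ J`), then conjugation by `w` does not decrease length on the parabolic subgroup `W_J`. -/
theorem stmt_1 {B W : Type*} [Group W] [Finite W] {M : CoxeterMatrix B}
    (cs : CoxeterSystem M W) (J : Set B) (w : W)
    (hw : ∀ b ∈ J, cs.length w ≤ cs.length (cs.simple b * w)) :
    ∀ u ∈ Subgroup.closure (cs.simple '' J),
      cs.length u ≤ cs.length (w⁻¹ * u * w) := by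
  classical
  intro u hu
  set K := Subgroup.closure (cs.simple '' J) with hK
  have hne : {n | ∃ v ∈ K, cs.length (v * w) = n}.Nonempty :=
    ⟨cs.length w, 1, one_mem _, by rw [one_mul]⟩
  obtain ⟨u₀, hu₀K, hu₀⟩ := Nat.sInf_mem hne
  have hmin : ∀ v ∈ K, cs.length (u₀ * w) ≤ cs.length (v * (u₀ * w)) := by
    intro v hv
    rw [hu₀]
    exact Nat.sInf_le ⟨v * u₀, mul_mem hv hu₀K, by rw [mul_assoc]⟩
  have hADD := StrongExchangeAux.length_mul_of_min cs J hmin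
  have hq : u₀⁻¹ = 1 := by
    by_contra hne1
    obtain ⟨l₀, hl₀J, hl₀⟩ := StrongExchangeAux.exists_Jword cs J (inv_mem hu₀K)
    obtain ⟨l, hlJ, hlprod, hlred⟩ := StrongExchangeAux.exists_reduced_Jword cs J hl₀J
    rw [hl₀] at hlprod
    match l, hlJ, hlprod, hlred with
    | [], _, hlprod, _ => exact hne1 hlprod.symm
    | i :: l₂, hlJ, hlprod, hlred =>
    have hiJ : i ∈ J := hlJ i (List.mem_cons_self)
    have hvJ : cs.wordProd l₂ ∈ K :=
      StrongExchangeAux.wordProd_mem_closure cs J fun b hb => hlJ b (List.mem_cons_of_mem i hb)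
    have hl₂red : cs.IsReduced l₂ := by
      have := CoxeterSystem.IsReduced.drop hlred (j := 1)
      simpa using this
    have h1 : cs.length u₀⁻¹ = l₂.length + 1 := by
      rw [← hlprod, hlred]
      simp
    have h3 := hADD u₀⁻¹ (inv_mem hu₀K)
    rw [inv_mul_cancel_left] at h3
    have hweq : w = (cs.simple i * cs.wordProd l₂) * (u₀ * w) := by
      rw [← cs.wordProd_cons, hlprod, inv_mul_cancel_left]
    have h4 : cs.simple i * w = cs.wordProd l₂ * (u₀ * w) := by
      calc cs.simple i * w
          = cs.simple i * (cs.simple i * (cs.wordProd l₂ * (u₀ * w))) := by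
            conv_lhs => rw [hweq]
            rw [mul_assoc]
        _ = cs.wordProd l₂ * (u₀ * w) := cs.simple_mul_simple_cancel_left i
    have h5 : cs.length (cs.simple i * w)
        = cs.length (cs.wordProd l₂) + cs.length (u₀ * w) := by
      rw [h4]
      exact hADD _ hvJ
    have h6 : cs.length (cs.wordProd l₂) = l₂.length := hl₂red
    have h7 := hw i hiJ
    rw [cs.length_inv] at h1
    have h8 : cs.length u₀⁻¹ = cs.length u₀ := cs.length_inv u₀
    omega
  have hu₀1 : u₀ = 1 := by rwa [inv_eq_one] at hq
  rw [hu₀1, one_mul] at hADD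
  have hADD' := hADD u hu
  have hfin : cs.length (u * w) ≤ cs.length w + cs.length (w⁻¹ * u * w) := by
    have huw : u * w = w * (w⁻¹ * u * w) := by group
    rw [huw]
    exact cs.length_mul_le _ _
  omega
end

section
/- Let J, K ⊆ S and let x be a minimal length (W_J, W_K)-double coset representative. Then x⁻¹W_J x ∩ W_K = W_L where L = (x⁻¹ J x) ∩ K; in particular the intersection of x⁻¹W_Jx with W_K is again a standard parabolic subgroup. -/
open List

namespace StmtAux

variable {B W : Type*} [Group W] {M : CoxeterMatrix B} (cs : CoxeterSystem M W)

local prefix:100 "s" => cs.simple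
local prefix:100 "π" => cs.wordProd
local prefix:100 "ℓ" => cs.length

theorem rightInvSeq_append (α β : List B) :
    cs.rightInvSeq (α ++ β) =
      (cs.rightInvSeq α).map (fun t => (π β)⁻¹ * t * π β) ++ cs.rightInvSeq β := by
  induction α with
  | nil => simp
  | cons i α ih =>
      rw [cons_append, CoxeterSystem.rightInvSeq, ih, CoxeterSystem.rightInvSeq]
      simp only [map_cons, cs.wordProd_append, cons_append, mul_inv_rev]
      congr 1
      group

theorem leftInvSeq_append (α β : List B) :
    cs.leftInvSeq (α ++ β) =
      cs.leftInvSeq α ++ (cs.leftInvSeq β).map (fun t => π α * t * (π α)⁻¹) := by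
  induction α with
  | nil => simp
  | cons i α ih =>
      rw [cons_append, CoxeterSystem.leftInvSeq, ih]
      have h : (⇑(MulAut.conj (s i)) ∘ fun t => π α * t * (π α)⁻¹)
          = fun t => (s i * π α) * t * (s i * π α)⁻¹ := by
        funext t
        simp [MulAut.conj_apply, mul_assoc]
      simp only [CoxeterSystem.leftInvSeq, map_append, map_map, cs.wordProd_cons, cons_append, h]


open Classical in
/-- The sign representation on `W × ℤˣ`. -/
noncomputable def eta (i : B) : Equiv.Perm (W × ℤˣ) :=
  Function.Involutive.toPerm
    (fun p => (s i * p.1 * s i, if p.1 = s i then -p.2 else p.2))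
    (by
      rintro ⟨w, e⟩
      have h1 : s i * (s i * w * s i) * s i = w := by
        calc s i * (s i * w * s i) * s i = (s i * s i) * w * (s i * s i) := by group
        _ = w := by rw [cs.simple_mul_simple_self]; group
      have h2 : (s i * w * s i = s i) ↔ (w = s i) := by
        constructor
        · intro h
          have h' := congrArg (fun z => s i * z * s i) h
          rw [h1] at h'
          rw [h', cs.simple_mul_simple_self, one_mul]
        · intro h
          rw [h, cs.simple_mul_simple_self, one_mul]
      simp only
      rw [h1, if_congr h2 rfl rfl]
      by_cases hw : w = s i <;> simp [hw])

open Classical in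
theorem eta_apply (i : B) (w : W) (e : ℤˣ) :
    eta cs i (w, e) = (s i * w * s i, if w = s i then -e else e) := rfl

open Classical in
theorem prod_map_eta (ω : List B) (w : W) (e : ℤˣ) :
    (List.map (eta cs) ω).prod (w, e) =
      (π ω * w * (π ω)⁻¹, (-1 : ℤˣ) ^ ((cs.rightInvSeq ω).count w) * e) := by
  induction ω generalizing w e with
  | nil => simp
  | cons i ω ih =>
      rw [map_cons, prod_cons, Equiv.Perm.mul_apply, ih, eta_apply, cs.wordProd_cons,
        CoxeterSystem.rightInvSeq, count_cons]
      have hcond : (π ω * w * (π ω)⁻¹ = s i) ↔ (w = (π ω)⁻¹ * s i * π ω) := by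
        constructor
        · intro h; rw [← h]; group
        · intro h; rw [h]; group
      simp only [Prod.mk.injEq]
      constructor
      · rw [mul_inv_rev, cs.inv_simple]; group
      · by_cases hw : w = (π ω)⁻¹ * s i * π ω
        · rw [if_pos (hcond.mpr hw), if_pos (by exact beq_iff_eq.mpr hw.symm), pow_succ]
          simp [mul_comm, mul_left_comm]
        · rw [if_neg (fun h => hw (hcond.mp h)),
            if_neg (by simp only [beq_iff_eq]; exact fun h => hw h.symm)]
          simp

open CoxeterSystem

theorem alternatingWord_drop (i i' : B) (c : ℕ) : ∀ m : ℕ,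
    (alternatingWord i i' m).drop c = alternatingWord i i' (m - c) := by
  induction c with
  | zero => simp
  | succ c ih =>
      intro m
      match m with
      | 0 => simp [alternatingWord]
      | m + 1 =>
          rw [alternatingWord_succ', List.drop_succ_cons, ih m]
          congr 1
          omega

theorem alternatingWord_get? (i i' : B) (m j : ℕ) (h : j < m) :
    (alternatingWord i i' m)[j]? = some (if Even (m - j - 1) then i' else i) := by
  have h1 := List.getElem?_drop (xs := alternatingWord i i' m) (i := j) (j := 0)
  rw [Nat.add_zero] at h1
  rw [← h1, alternatingWord_drop]
  obtain ⟨k, hk⟩ : ∃ k, m - j = k + 1 := ⟨m - j - 1, by omega⟩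
  have hk' : m - j - 1 = k := by omega
  rw [hk', hk, alternatingWord_succ']
  rfl

theorem getD_ris_alt (i i' : B) (m j : ℕ) (h : j < m) :
    (cs.rightInvSeq (alternatingWord i i' m)).getD j 1 =
      (π (alternatingWord i i' (m - j - 1)))⁻¹
        * s (if Even (m - j - 1) then i' else i)
        * π (alternatingWord i i' (m - j - 1)) := by
  rw [cs.getD_rightInvSeq]
  rw [show (alternatingWord i i' m).drop (j + 1) = alternatingWord i i' (m - j - 1) by
    rw [alternatingWord_drop, show m - (j+1) = m - j - 1 by omega]]
  rw [alternatingWord_get? i i' m j h]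
  rfl

theorem prodAlt_even (i i' : B) (n a : ℕ) (h : n = 2 * a) :
    π (alternatingWord i i' n) = (s i * s i') ^ a := by
  rw [cs.prod_alternatingWord_eq_mul_pow, h]
  have h1 : Even (2 * a) := ⟨a, by omega⟩
  rw [if_pos h1, one_mul]
  congr 1
  omega

theorem prodAlt_odd (i i' : B) (n a : ℕ) (h : n = 2 * a + 1) :
    π (alternatingWord i i' n) = s i' * (s i * s i') ^ a := by
  rw [cs.prod_alternatingWord_eq_mul_pow, h]
  have h1 : ¬ Even (2 * a + 1) := by simp [parity_simps]
  rw [if_neg h1]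
  congr 2
  omega

theorem simple_mul_pow (i i' : B) (n : ℕ) :
    s i' * (s i * s i') ^ n = ((s i * s i') ^ n)⁻¹ * s i' := by
  have h0 : SemiconjBy (s i') (s i * s i') (s i * s i')⁻¹ := by
    unfold SemiconjBy
    rw [mul_inv_rev, cs.inv_simple, cs.inv_simple, ← mul_assoc]
  have h1 := (h0.pow_right n).eq
  rw [h1, inv_pow]

theorem qEntry (i i' : B) (k : ℕ) :
    (π (alternatingWord i i' k))⁻¹ * π (alternatingWord i i' (k + 1)) =
      ((s i * s i') ^ k)⁻¹ * s i' := by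
  rcases Nat.even_or_odd k with hk | hk
  · obtain ⟨a, ha⟩ := hk
    have ha' : k = 2 * a := by omega
    rw [prodAlt_even cs i i' k a ha', prodAlt_odd cs i i' (k+1) a (by omega),
      simple_mul_pow cs i i' a, ha']
    calc ((s i * s i') ^ a)⁻¹ * (((s i * s i') ^ a)⁻¹ * s i')
        = ((s i * s i') ^ a * (s i * s i') ^ a)⁻¹ * s i' := by group
      _ = ((s i * s i') ^ (2 * a))⁻¹ * s i' := by rw [← pow_add, show a + a = 2 * a by omega]
  · obtain ⟨a, ha⟩ := hk
    rw [prodAlt_odd cs i i' k a ha, prodAlt_even cs i i' (k+1) (a+1) (by omega)]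
    rw [mul_inv_rev, cs.inv_simple]
    calc ((s i * s i') ^ a)⁻¹ * s i' * (s i * s i') ^ (a + 1)
        = ((s i * s i') ^ a)⁻¹ * (s i' * (s i * s i') ^ (a + 1)) := by group
      _ = ((s i * s i') ^ a)⁻¹ * (((s i * s i') ^ (a + 1))⁻¹ * s i') := by
          rw [simple_mul_pow cs i i' (a+1)]
      _ = ((s i * s i') ^ (a + 1) * (s i * s i') ^ a)⁻¹ * s i' := by group
      _ = ((s i * s i') ^ k)⁻¹ * s i' := by rw [← pow_add, show a + 1 + a = k by omega]

theorem getD_ris_alt' (i i' : B) (m j : ℕ) (h : j < m) :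
    (cs.rightInvSeq (alternatingWord i i' m)).getD j 1 =
      ((s i * s i') ^ (m - j - 1))⁻¹ * s i' := by
  rw [getD_ris_alt cs i i' m j h, mul_assoc]
  rw [show s (if Even (m - j - 1) then i' else i) * π (alternatingWord i i' (m - j - 1))
      = π (alternatingWord i i' ((m - j - 1) + 1)) by
    rw [alternatingWord_succ', cs.wordProd_cons]]
  rw [qEntry cs i i' (m - j - 1)]

theorem ris_braid_doubling (i i' : B) :
    cs.rightInvSeq (alternatingWord i i' (2 * M i i')) =
      cs.rightInvSeq (alternatingWord i i' (M i i'))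
        ++ cs.rightInvSeq (alternatingWord i i' (M i i')) := by
  have hp : (s i * s i') ^ (M i i') = 1 := cs.simple_mul_simple_pow i i'
  have hpow : ∀ a : ℕ, (s i * s i') ^ (M i i' + a) = (s i * s i') ^ a := by
    intro a
    rw [pow_add, hp, one_mul]
  apply List.ext_getElem
  · simp [length_append]; omega
  · intro j h1 h2
    have hm : j < 2 * M i i' := by simpa using h1
    have hL : (cs.rightInvSeq (alternatingWord i i' (M i i'))).length = M i i' := by simp
    rw [← List.getD_eq_getElem _ 1 h1, ← List.getD_eq_getElem _ 1 h2]
    rw [getD_ris_alt' cs i i' _ j hm]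
    by_cases hj : j < M i i'
    · rw [List.getD_append _ _ 1 j (by rw [hL]; exact hj), getD_ris_alt' cs i i' _ j hj]
      rw [show 2 * M i i' - j - 1 = M i i' + (M i i' - j - 1) by omega, hpow]
    · rw [List.getD_append_right _ _ 1 j (by rw [hL]; omega), hL,
        getD_ris_alt' cs i i' _ (j - M i i') (by omega)]
      rw [show M i i' - (j - M i i') - 1 = 2 * M i i' - j - 1 by omega]

open Classical in
theorem count_ris_braid_even (i i' : B) (w : W) :
    Even ((cs.rightInvSeq (alternatingWord i i' (2 * M i i'))).count w) := by
  rw [ris_braid_doubling cs i i', List.count_append]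
  exact ⟨_, rfl⟩

theorem prod_map_eta_alt (i i' : B) (n : ℕ) :
    ((alternatingWord i i' (2 * n)).map (eta cs)).prod = (eta cs i * eta cs i') ^ n := by
  induction n with
  | zero => simp [alternatingWord]
  | succ n ih =>
      rw [show 2 * (n + 1) = (2 * n) + 1 + 1 by omega, alternatingWord_succ',
        alternatingWord_succ']
      have h1 : ¬ Even (2 * n + 1) := by simp [parity_simps]
      have h2 : Even (2 * n) := ⟨n, by omega⟩
      rw [if_neg h1, if_pos h2, List.map_cons, List.map_cons, List.prod_cons, List.prod_cons, ih,
        pow_succ']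
      rw [← mul_assoc]

theorem eta_liftable : M.IsLiftable (eta cs) := by
  intro i i'
  by_cases hM : M i i' = 0
  · rw [hM, pow_zero]
  · have := prod_map_eta_alt cs i i' (M i i')
    rw [← this]
    apply Equiv.ext
    rintro ⟨w, e⟩
    rw [prod_map_eta]
    have h1 : π (alternatingWord i i' (2 * M i i')) = 1 := by
      rw [prodAlt_even cs i i' _ (M i i') rfl, cs.simple_mul_simple_pow i i']
    rw [h1]
    obtain ⟨c, hc⟩ := count_ris_braid_even cs i i' w
    rw [hc, show c + c = 2 * c by omega, pow_mul]
    simp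

/-- The sign homomorphism. -/
noncomputable def phi : W →* Equiv.Perm (W × ℤˣ) := cs.lift ⟨eta cs, eta_liftable cs⟩

theorem phi_simple (i : B) : phi cs (s i) = eta cs i := cs.lift_apply_simple (eta_liftable cs) i

open Classical in
theorem phi_wordProd (ω : List B) (w : W) (e : ℤˣ) :
    phi cs (π ω) (w, e) = (π ω * w * (π ω)⁻¹, (-1 : ℤˣ) ^ ((cs.rightInvSeq ω).count w) * e) := by
  rw [← prod_map_eta]
  congr 1
  unfold CoxeterSystem.wordProd
  rw [map_list_prod]
  congr 1
  rw [List.map_map]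
  congr 1
  funext j
  exact phi_simple cs j

open Classical in
theorem count_parity_invariant {ω ω' : List B} (h : π ω = π ω') (t : W) :
    (Odd ((cs.rightInvSeq ω).count t) ↔ Odd ((cs.rightInvSeq ω').count t)) := by
  have h1 := phi_wordProd cs ω t 1
  have h2 := phi_wordProd cs ω' t 1
  rw [h] at h1
  rw [h1] at h2
  have h3 := congrArg Prod.snd h2
  simp only at h3
  constructor
  · intro ho
    by_contra he
    rw [Nat.not_odd_iff_even] at he
    rw [ho.neg_one_pow, he.neg_one_pow] at h3
    simp at h3
  · intro ho
    by_contra he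
    rw [Nat.not_odd_iff_even] at he
    rw [ho.neg_one_pow, he.neg_one_pow] at h3
    simp at h3

open Classical in
theorem exists_word_odd_count (ωv : List B) (i : B) :
    ∃ ω : List B, π ω = π ωv * s i * (π ωv)⁻¹ ∧
      Odd ((cs.rightInvSeq ω).count (π ωv * s i * (π ωv)⁻¹)) := by
  induction ωv with
  | nil => exact ⟨[i], by simp, by simp⟩
  | cons j ωv ih =>
      obtain ⟨ω', h1, h2⟩ := ih
      set t' := π ωv * s i * (π ωv)⁻¹ with ht'
      have hreft' : cs.IsReflection t' := ⟨π ωv, i, rfl⟩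
      have ht'inv : t'⁻¹ = t' := hreft'.inv
      set t := s j * t' * s j with ht
      have htt : π (j :: ωv) * s i * (π (j :: ωv))⁻¹ = t := by
        rw [cs.wordProd_cons, ht, ht', mul_inv_rev, cs.inv_simple]
        group
      rw [htt]
      refine ⟨j :: (ω' ++ [j]), ?_, ?_⟩
      · rw [cs.wordProd_cons, cs.wordProd_append, h1, cs.wordProd_singleton, ht, ← mul_assoc]
      · rw [CoxeterSystem.rightInvSeq, rightInvSeq_append cs ω' [j]]
        rw [cs.wordProd_append, h1, cs.wordProd_singleton, cs.rightInvSeq_singleton]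
        have hd : (t' * s j)⁻¹ * s j * (t' * s j) = s j * t' * s j * t' * s j := by
          rw [mul_inv_rev, ht'inv, cs.inv_simple]
          group
        rw [hd, List.count_cons, List.count_append, List.count_cons, List.count_nil]
        have hmap : ((cs.rightInvSeq ω').map fun r => (s j)⁻¹ * r * s j).count t
            = (cs.rightInvSeq ω').count t' := by
          have hinj : Function.Injective (fun r : W => (s j)⁻¹ * r * s j) := by
            intro a b hab
            simp only at hab
            have := congrArg (fun z => s j * z * (s j)⁻¹) hab
            simpa [mul_assoc] using this
          have htft : t = (fun r : W => (s j)⁻¹ * r * s j) t' := by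
            simp only [cs.inv_simple, ht]
          rw [htft, List.count_map_of_injective _ _ hinj]
        rw [hmap]
        by_cases hts : t' = s j
        · have h3 : t = s j := by rw [ht, hts, cs.simple_mul_simple_self, one_mul]
          have h4 : s j * t' * s j * t' * s j = t := by
            rw [hts, h3, cs.simple_mul_simple_self, one_mul, cs.simple_mul_simple_self, one_mul]
          have cb1 : ((s j : W) == t) = true := by rw [beq_iff_eq]; exact h3.symm
          have cb2 : ((s j * t' * s j * t' * s j : W) == t) = true := by rw [beq_iff_eq]; exact h4
          rw [cb1, cb2]
          simp only [if_true]
          obtain ⟨c, hc⟩ := h2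
          rw [hc]
          exact ⟨c + 1, by omega⟩
        · have h3 : t ≠ s j := by
            intro hcon
            apply hts
            calc t' = (s j * s j) * t' * (s j * s j) := by rw [cs.simple_mul_simple_self]; group
            _ = s j * (s j * t' * s j) * s j := by group
            _ = s j * s j * s j := by rw [← ht, hcon]
            _ = s j := by rw [cs.simple_mul_simple_self, one_mul]
          have h4 : s j * t' * s j * t' * s j ≠ t := by
            intro hcon
            apply hts
            have h5' : s j * t' * s j * t' * s j = s j * t' * s j := by rw [hcon, ht]
            have h6 : (s j * t' * s j) * (t' * s j) = (s j * t' * s j) * 1 := by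
              rw [mul_one]
              calc (s j * t' * s j) * (t' * s j) = s j * t' * s j * t' * s j := by group
              _ = s j * t' * s j := h5'
            have h5 : t' * s j = 1 := mul_left_cancel h6
            calc t' = t' * s j * s j := by rw [mul_assoc, cs.simple_mul_simple_self, mul_one]
            _ = s j := by rw [h5, one_mul]
          have cb1 : ((s j : W) == t) = false := by
            rw [beq_eq_false_iff_ne]
            exact fun hcon => h3 hcon.symm
          have cb2 : ((s j * t' * s j * t' * s j : W) == t) = false := by
            rw [beq_eq_false_iff_ne]
            exact h4
          rw [cb1, cb2]
          simpa using h2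

open Classical in
theorem odd_count_of_isRightInversion {w t : W} (hwt : cs.IsRightInversion w t)
    (ω : List B) (hω : π ω = w) : Odd ((cs.rightInvSeq ω).count t) := by
  obtain ⟨href, hlt⟩ := hwt
  obtain ⟨v, i, htvi⟩ := href
  obtain ⟨ωv, hv⟩ := cs.wordProd_surjective v
  have hT := exists_word_odd_count cs ωv i
  rw [hv, ← htvi] at hT
  obtain ⟨ωt, ht1, ht2⟩ := hT
  obtain ⟨ω₀, hred, hw0⟩ := cs.exists_reduced_word' (w * t)
  have htt : t * t = 1 := by
    have : cs.IsReflection t := ⟨v, i, htvi⟩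
    exact this.mul_self
  have hz : (cs.rightInvSeq ω₀).count t = 0 := by
    by_contra hz
    have hmem : t ∈ cs.rightInvSeq ω₀ := by
      rcases List.count_pos_iff.mp (Nat.pos_of_ne_zero hz) with h
      exact h
    have hinv := cs.isRightInversion_of_mem_rightInvSeq hred hmem
    rw [← hw0] at hinv
    have : ℓ (w * t * t) < ℓ (w * t) := hinv.2
    rw [mul_assoc, htt, mul_one] at this
    omega
  have hπ : π (ω₀ ++ ωt) = w := by
    rw [cs.wordProd_append, ← hw0, ht1, mul_assoc, htt, mul_one]
  have hcnt : Odd ((cs.rightInvSeq (ω₀ ++ ωt)).count t) := by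
    rw [rightInvSeq_append, List.count_append, ht1]
    have hmap : ((cs.rightInvSeq ω₀).map fun r => t⁻¹ * r * t).count t
        = (cs.rightInvSeq ω₀).count t := by
      have hinj : Function.Injective (fun r : W => t⁻¹ * r * t) := by
        intro a b hab
        simp only at hab
        have := congrArg (fun z => t * z * t⁻¹) hab
        simpa [mul_assoc] using this
      have htft : t = (fun r : W => t⁻¹ * r * t) t := by
        simp only
        group
      nth_rw 1 [htft]
      rw [List.count_map_of_injective _ _ hinj]
    rw [hmap, hz, zero_add]
    exact ht2
  have := count_parity_invariant cs (by rw [hπ, hω] : π (ω₀ ++ ωt) = π ω) t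
  exact this.mp hcnt

theorem mem_rightInvSeq_of_isRightInversion {w t : W} (hwt : cs.IsRightInversion w t)
    (ω : List B) (hω : π ω = w) : t ∈ cs.rightInvSeq ω := by
  classical
  have hodd := odd_count_of_isRightInversion cs hwt ω hω
  have hpos : 0 < (cs.rightInvSeq ω).count t := by
    rcases hodd with ⟨c, hc⟩
    omega
  exact List.count_pos_iff.mp hpos

theorem mem_leftInvSeq_of_isLeftInversion {w t : W} (hwt : cs.IsLeftInversion w t)
    (ω : List B) (hω : π ω = w) : t ∈ cs.leftInvSeq ω := by
  have h' : cs.IsRightInversion w⁻¹ t := cs.isRightInversion_inv_iff.mpr hwt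
  have := mem_rightInvSeq_of_isRightInversion cs h' ω.reverse
    (by rw [cs.wordProd_reverse, hω])
  rw [cs.rightInvSeq_reverse] at this
  exact List.mem_reverse.mp this

theorem exchange_right {ω : List B} {i : B} (h : ℓ (π ω * s i) < ℓ (π ω)) :
    ∃ k < ω.length, π ω * s i = π (ω.eraseIdx k) := by
  have hri : cs.IsRightInversion (π ω) (s i) := ⟨cs.isReflection_simple i, h⟩
  have hmem := mem_rightInvSeq_of_isRightInversion cs hri ω rfl
  obtain ⟨k, hk, hkt⟩ := List.mem_iff_getElem.mp hmem
  refine ⟨k, by simpa using hk, ?_⟩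
  have h2 := cs.wordProd_mul_getD_rightInvSeq ω k
  rw [List.getD_eq_getElem _ 1 hk, hkt] at h2
  exact h2

theorem exists_reduced_subword_in (J : Set B) :
    ∀ n (ω : List B), ω.length = n → (∀ b ∈ ω, b ∈ J) →
      ∃ ω', (∀ b ∈ ω', b ∈ J) ∧ cs.IsReduced ω' ∧ π ω' = π ω := by
  intro n
  induction n using Nat.strong_induction_on with
  | _ n ih =>
    intro ω hlen hJ
    by_cases hred : cs.IsReduced ω
    · exact ⟨ω, hJ, hred, rfl⟩
    · have hlen0 : 0 < ω.length := by
        rcases Nat.eq_zero_or_pos ω.length with h0 | h0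
        · exfalso
          apply hred
          rw [List.length_eq_zero_iff] at h0
          rw [h0]
          unfold CoxeterSystem.IsReduced
          simp
        · exact h0
      have hPex : ∃ j, ¬ cs.IsReduced (ω.take (j + 1)) := by
        refine ⟨ω.length - 1, ?_⟩
        rw [show ω.length - 1 + 1 = ω.length by omega, List.take_length]
        exact hred
      classical
      set j₀ := Nat.find hPex with hj₀def
      have hj₀ : ¬ cs.IsReduced (ω.take (j₀ + 1)) := Nat.find_spec hPex
      have hj₀min : ∀ j < j₀, cs.IsReduced (ω.take (j + 1)) := by
        intro j hj
        by_contra hcon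
        have := Nat.find_min' hPex hcon
        omega
      have hj₀len : j₀ < ω.length := by
        have := Nat.find_min' hPex (show ¬ cs.IsReduced (ω.take (ω.length - 1 + 1)) by
          rw [show ω.length - 1 + 1 = ω.length by omega, List.take_length]; exact hred)
        omega
      have htake_red : cs.IsReduced (ω.take j₀) := by
        rcases Nat.eq_zero_or_pos j₀ with h0 | h0
        · rw [h0]
          unfold CoxeterSystem.IsReduced
          simp
        · have := hj₀min (j₀ - 1) (by omega)
          rw [show j₀ - 1 + 1 = j₀ by omega] at this
          exact this
      obtain ⟨i, hi⟩ : ∃ i, ω[j₀]? = some i := ⟨ω[j₀], List.getElem?_eq_getElem hj₀len⟩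
      have htakesucc : ω.take (j₀ + 1) = ω.take j₀ ++ [i] := by
        rw [List.take_succ, hi]
        rfl
      have hπsucc : π (ω.take (j₀ + 1)) = π (ω.take j₀) * s i := by
        rw [htakesucc, cs.wordProd_append, cs.wordProd_singleton]
      have hlentake : (ω.take j₀).length = j₀ := by
        rw [List.length_take]
        omega
      have hℓtake : ℓ (π (ω.take j₀)) = j₀ := by
        rw [htake_red, hlentake]
      have hdesc : ℓ (π (ω.take j₀) * s i) < ℓ (π (ω.take j₀)) := by
        rcases cs.length_mul_simple (π (ω.take j₀)) i with hh | hh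
        · exfalso
          apply hj₀
          unfold CoxeterSystem.IsReduced
          rw [hπsucc, hh, hℓtake, List.length_take]
          omega
        · omega
      obtain ⟨k, hk, hke⟩ := exchange_right cs hdesc
      set ω' : List B := ((ω.take j₀).eraseIdx k) ++ ω.drop (j₀ + 1) with hω'def
      have hπω' : π ω' = π ω := by
        rw [hω'def, cs.wordProd_append, ← hke, ← hπsucc, ← cs.wordProd_append,
          List.take_append_drop]
      have hk' : k < j₀ := by
        rw [hlentake] at hk
        exact hk
      have hlenω' : ω'.length = ω.length - 2 := by
        rw [hω'def, List.length_append, List.length_eraseIdx, hlentake, List.length_drop,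
          if_pos hk']
        omega
      have hJω' : ∀ b ∈ ω', b ∈ J := by
        intro b hb
        rw [hω'def, List.mem_append] at hb
        rcases hb with hb | hb
        · exact hJ b (List.Sublist.mem hb (((ω.take j₀).eraseIdx_sublist k).trans
            (ω.take_sublist j₀)))
        · exact hJ b (List.Sublist.mem hb (ω.drop_sublist (j₀ + 1)))
      obtain ⟨ω'', hJ'', hred'', hπ''⟩ := ih ω'.length (by omega) ω' rfl hJω'
      exact ⟨ω'', hJ'', hred'', by rw [hπ'', hπω']⟩

theorem wordProd_mem_closure {J : Set B} {ω : List B} (h : ∀ b ∈ ω, b ∈ J) :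
    π ω ∈ Subgroup.closure (cs.simple '' J) := by
  induction ω with
  | nil =>
      rw [cs.wordProd_nil]
      exact Subgroup.one_mem _
  | cons i ω ih =>
      rw [cs.wordProd_cons]
      exact mul_mem (Subgroup.subset_closure ⟨i, h i (List.mem_cons_self), rfl⟩)
        (ih fun b hb => h b (List.mem_cons_of_mem i hb))

theorem exists_reduced_word_of_mem_closure {J : Set B} {u : W}
    (hu : u ∈ Subgroup.closure (cs.simple '' J)) :
    ∃ ω, (∀ b ∈ ω, b ∈ J) ∧ cs.IsReduced ω ∧ π ω = u := by
  have hword : ∃ ω, (∀ b ∈ ω, b ∈ J) ∧ π ω = u := by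
    induction hu using Subgroup.closure_induction with
    | mem x hx =>
        obtain ⟨b, hb, rfl⟩ := hx
        exact ⟨[b], by simpa using hb, by simp⟩
    | one => exact ⟨[], by simp, by simp⟩
    | mul x y hx hy ihx ihy =>
        obtain ⟨ω₁, h₁, hπ₁⟩ := ihx
        obtain ⟨ω₂, h₂, hπ₂⟩ := ihy
        refine ⟨ω₁ ++ ω₂, ?_, by rw [cs.wordProd_append, hπ₁, hπ₂]⟩
        intro b hb
        rcases List.mem_append.mp hb with hb | hb
        · exact h₁ b hb
        · exact h₂ b hb
    | inv x hx ihx =>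
        obtain ⟨ω₁, h₁, hπ₁⟩ := ihx
        exact ⟨ω₁.reverse, fun b hb => h₁ b (List.mem_reverse.mp hb),
          by rw [cs.wordProd_reverse, hπ₁]⟩
  obtain ⟨ω, hJ, hπ⟩ := hword
  obtain ⟨ω', hJ', hred', hπ'⟩ := exists_reduced_subword_in cs J ω.length ω rfl hJ
  exact ⟨ω', hJ', hred', by rw [hπ', hπ]⟩

theorem min_coset_additive {J : Set B} {x₀ : W}
    (hmin : ∀ v ∈ Subgroup.closure (cs.simple '' J), ℓ x₀ ≤ ℓ (v * x₀)) :
    ∀ u ∈ Subgroup.closure (cs.simple '' J), ℓ (u * x₀) = ℓ u + ℓ x₀ := by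
  intro u hu
  obtain ⟨ωJ, hωJmem, hωJred, hωJprod⟩ := exists_reduced_word_of_mem_closure cs hu
  obtain ⟨ω₀, hω₀red, hω₀prod⟩ := cs.exists_reduced_word' x₀
  set n := ωJ.length with hn
  set m := ω₀.length with hm
  have hℓu : ℓ u = n := by rw [← hωJprod, hωJred]
  have hℓx : ℓ x₀ = m := by rw [hω₀prod, hω₀red]
  have hle : ℓ (u * x₀) ≤ ℓ u + ℓ x₀ := cs.length_mul_le u x₀
  rcases eq_or_lt_of_le hle with heq | hlt
  · exact heq
  exfalso
  set ω : List B := ωJ ++ ω₀ with hω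
  have hπω : π ω = u * x₀ := by
    rw [hω, cs.wordProd_append, hωJprod, ← hω₀prod]
  have hlenω : ω.length = n + m := by
    rw [hω, List.length_append]
  have hred : ¬ cs.IsReduced ω := by
    intro hcon
    rw [CoxeterSystem.IsReduced, hπω, hlenω] at hcon
    omega
  have hlen0 : 0 < ω.length := by
    rcases Nat.eq_zero_or_pos ω.length with h0 | h0
    · exfalso
      apply hred
      rw [List.length_eq_zero_iff] at h0
      rw [h0, CoxeterSystem.IsReduced]
      simp
    · exact h0
  have hPex : ∃ j, ¬ cs.IsReduced (ω.take (j + 1)) := by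
    refine ⟨ω.length - 1, ?_⟩
    rw [show ω.length - 1 + 1 = ω.length by omega, List.take_length]
    exact hred
  classical
  set j₀ := Nat.find hPex with hj₀def
  have hj₀ : ¬ cs.IsReduced (ω.take (j₀ + 1)) := Nat.find_spec hPex
  have hj₀min : ∀ j < j₀, cs.IsReduced (ω.take (j + 1)) := by
    intro j hj
    by_contra hcon
    have := Nat.find_min' hPex hcon
    omega
  have hj₀len : j₀ < ω.length := by
    have := Nat.find_min' hPex (show ¬ cs.IsReduced (ω.take (ω.length - 1 + 1)) by
      rw [show ω.length - 1 + 1 = ω.length by omega, List.take_length]; exact hred)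
    omega
  have htake_red : cs.IsReduced (ω.take j₀) := by
    rcases Nat.eq_zero_or_pos j₀ with h0 | h0
    · rw [h0, List.take_zero, CoxeterSystem.IsReduced]
      simp
    · have := hj₀min (j₀ - 1) (by omega)
      rw [show j₀ - 1 + 1 = j₀ by omega] at this
      exact this
  have hj₀n : n ≤ j₀ := by
    by_contra hcon
    apply hj₀
    rw [hω, List.take_append_of_le_length (show j₀ + 1 ≤ ωJ.length by omega)]
    exact hωJred.take (j₀ + 1)
  -- the letter at position j₀
  obtain ⟨i, hi⟩ : ∃ i, ω[j₀]? = some i := ⟨ω[j₀], List.getElem?_eq_getElem hj₀len⟩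
  have hi' : ω₀[j₀ - n]? = some i := by
    rw [← hi, hω, List.getElem?_append_right (by omega : ωJ.length ≤ j₀)]
  have htakesucc : ω.take (j₀ + 1) = ω.take j₀ ++ [i] := by
    rw [List.take_succ, hi]
    rfl
  have hπsucc : π (ω.take (j₀ + 1)) = π (ω.take j₀) * s i := by
    rw [htakesucc, cs.wordProd_append, cs.wordProd_singleton]
  have hlentake : (ω.take j₀).length = j₀ := by
    rw [List.length_take]
    omega
  have hℓtake : ℓ (π (ω.take j₀)) = j₀ := by
    rw [htake_red, hlentake]
  have hdesc : ℓ (π (ω.take j₀) * s i) < ℓ (π (ω.take j₀)) := by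
    rcases cs.length_mul_simple (π (ω.take j₀)) i with hh | hh
    · exfalso
      apply hj₀
      rw [CoxeterSystem.IsReduced, hπsucc, hh, hℓtake, List.length_take]
      omega
    · omega
  -- the take-j₀ part splits as ωJ ++ γ
  set γ := ω₀.take (j₀ - n) with hγ
  have hγlen : γ.length = j₀ - n := by
    rw [hγ, List.length_take]
    omega
  have htakesplit : ω.take j₀ = ωJ ++ γ := by
    rw [hω, hγ, show j₀ = ωJ.length + (j₀ - n) by omega, List.take_append,
      show ωJ.length + (j₀ - n) - n = j₀ - n by omega, List.take_of_length_le (by omega)]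
  set g := π γ with hg
  have hπtake : π (ω.take j₀) = u * g := by
    rw [htakesplit, cs.wordProd_append, hωJprod, hg]
  -- the γ-part extended by the letter i is reduced
  have hγi_red : cs.IsReduced (γ ++ [i]) := by
    have h1 : ω₀.take (j₀ - n + 1) = γ ++ [i] := by
      rw [List.take_succ, hi', hγ]
      rfl
    rw [← h1]
    exact hω₀red.take (j₀ - n + 1)
  have hγi_len : (γ ++ [i]).length = j₀ - n + 1 := by
    rw [List.length_append, hγlen]
    rfl
  -- exchange
  obtain ⟨k, hk, hke⟩ := exchange_right cs hdesc
  rw [hlentake] at hk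
  rcases Nat.lt_or_ge k n with hkn | hkn
  · -- erased letter is in the ωJ part; contradicts minimality of x₀
    have herase : (ω.take j₀).eraseIdx k = ωJ.eraseIdx k ++ γ := by
      rw [htakesplit, List.eraseIdx_append_of_lt_length (by omega) γ]
    set u₁ := π (ωJ.eraseIdx k) with hu₁
    have hu₁mem : u₁ ∈ Subgroup.closure (cs.simple '' J) :=
      wordProd_mem_closure cs (fun b hb =>
        hωJmem b (List.Sublist.mem hb (ωJ.eraseIdx_sublist k)))
    have heq1 : u * g * s i = u₁ * g := by
      rw [← hπtake, hke, herase, cs.wordProd_append, hu₁]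
    -- x₀ = g * s i * (rest)
    have hx₀split : x₀ = g * s i * π (ω₀.drop (j₀ - n + 1)) := by
      have h1 : ω₀.take (j₀ - n + 1) = γ ++ [i] := by
        rw [List.take_succ, hi', hγ]
        rfl
      calc x₀ = π ω₀ := hω₀prod
        _ = π (ω₀.take (j₀ - n + 1) ++ ω₀.drop (j₀ - n + 1)) := by
            rw [List.take_append_drop]
        _ = g * s i * π (ω₀.drop (j₀ - n + 1)) := by
            rw [cs.wordProd_append, h1, cs.wordProd_append, cs.wordProd_singleton, hg]
    set v := u₁⁻¹ * u with hv
    have hvmem : v ∈ Subgroup.closure (cs.simple '' J) :=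
      mul_mem (inv_mem hu₁mem) hu
    have hvx : v * x₀ = g * π (ω₀.drop (j₀ - n + 1)) := by
      have h2 : g * s i = u⁻¹ * (u₁ * g) := by
        rw [← heq1]
        group
      rw [hv, hx₀split, ← mul_assoc, mul_assoc (u₁⁻¹ * u), h2]
      group
    have hvlen : ℓ (v * x₀) ≤ m - 1 := by
      rw [hvx]
      calc ℓ (g * π (ω₀.drop (j₀ - n + 1)))
          ≤ ℓ g + ℓ (π (ω₀.drop (j₀ - n + 1))) := cs.length_mul_le _ _
        _ ≤ γ.length + (ω₀.drop (j₀ - n + 1)).length := by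
            have ha1 := cs.length_wordProd_le γ
            have ha2 := cs.length_wordProd_le (ω₀.drop (j₀ - n + 1))
            rw [hg]
            omega
        _ ≤ m - 1 := by
            rw [hγlen, List.length_drop]
            omega
    have := hmin v hvmem
    omega
  · -- erased letter is in the γ part; contradicts the reducedness of ω₀
    have herase : (ω.take j₀).eraseIdx k = ωJ ++ γ.eraseIdx (k - n) := by
      rw [htakesplit, List.eraseIdx_append_of_length_le (by omega) γ]
    have heq2 : g * s i = π (γ.eraseIdx (k - n)) := by
      apply mul_left_cancel (a := u)
      rw [← mul_assoc, ← hπtake, hke, herase, cs.wordProd_append, hωJprod]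
    have h3 : ℓ (g * s i) ≤ j₀ - n - 1 := by
      rw [heq2]
      calc ℓ (π (γ.eraseIdx (k - n))) ≤ (γ.eraseIdx (k - n)).length :=
            cs.length_wordProd_le _
        _ ≤ j₀ - n - 1 := by
            rw [List.length_eraseIdx, hγlen, if_pos (by omega)]
    have h4 : ℓ (g * s i) = j₀ - n + 1 := by
      have h5 : π (γ ++ [i]) = g * s i := by
        rw [cs.wordProd_append, cs.wordProd_singleton, hg]
      rw [← h5, hγi_red, hγi_len]
    omega

theorem additive_of_no_left_descent {J : Set B} {x : W}
    (hx : ∀ b ∈ J, ℓ x < ℓ (s b * x)) :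
    ∀ u ∈ Subgroup.closure (cs.simple '' J), ℓ (u * x) = ℓ u + ℓ x := by
  -- find the minimal length element of the coset
  set S : Set ℕ := {r | ∃ v ∈ Subgroup.closure (cs.simple '' J), ℓ (v * x) = r} with hS
  have hSne : S.Nonempty := ⟨ℓ x, 1, Subgroup.one_mem _, by rw [one_mul]⟩
  obtain ⟨v, hvmem, hvlen⟩ := Nat.sInf_mem hSne
  set x₀ := v * x with hx₀
  have hmin : ∀ w ∈ Subgroup.closure (cs.simple '' J), ℓ x₀ ≤ ℓ (w * x₀) := by
    intro w hw
    have h1 : ℓ (w * x₀) ∈ S := ⟨w * v, mul_mem hw hvmem, by rw [mul_assoc]⟩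
    have h2 := Nat.sInf_le h1
    omega
  have hadd := min_coset_additive cs hmin
  -- show v = 1
  by_cases hv1 : v⁻¹ = 1
  · have hveq : v = 1 := by
      rwa [inv_eq_one] at hv1
    intro u hu
    have h1 := hadd u hu
    rw [hx₀, hveq, one_mul] at h1
    exact h1
  · exfalso
    obtain ⟨ωv, hωvmem, hωvred, hωvprod⟩ :=
      exists_reduced_word_of_mem_closure cs (inv_mem hvmem)
    have hωvne : ωv ≠ [] := by
      intro hcon
      rw [hcon] at hωvprod
      rw [← hωvprod] at hv1
      exact hv1 (by simp)
    obtain ⟨b, ωv', rfl⟩ := List.exists_cons_of_ne_nil hωvne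
    have hbJ : b ∈ J := hωvmem b (List.mem_cons_self)
    have hsbv : s b * v⁻¹ = π ωv' := by
      rw [← hωvprod, cs.wordProd_cons, ← mul_assoc, cs.simple_mul_simple_self, one_mul]
    have hℓv : ℓ v⁻¹ = ωv'.length + 1 := by
      rw [← hωvprod, hωvred]
      rfl
    have hωv'red : cs.IsReduced ωv' := by
      have := hωvred.drop 1
      simpa using this
    have hℓsbv : ℓ (s b * v⁻¹) = ωv'.length := by
      rw [hsbv, hωv'red]
    have hxv : x = v⁻¹ * x₀ := by
      rw [hx₀]
      group
    have h6 : ℓ x = ℓ v⁻¹ + ℓ x₀ := by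
      rw [hxv]
      exact hadd v⁻¹ (inv_mem hvmem)
    have h7 : ℓ (s b * x) = ℓ (s b * v⁻¹) + ℓ x₀ := by
      rw [hxv, ← mul_assoc]
      exact hadd (s b * v⁻¹) (mul_mem (Subgroup.subset_closure ⟨b, hbJ, rfl⟩) (inv_mem hvmem))
    have h8 := hx b hbJ
    omega

theorem mem_closure_of_mem_leftInvSeq (J : Set B) :
    ∀ ω : List B, (∀ b ∈ ω, b ∈ J) →
      ∀ t ∈ cs.leftInvSeq ω, t ∈ Subgroup.closure (cs.simple '' J) := by
  intro ω
  induction ω with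
  | nil =>
      intro _ t ht
      simp [CoxeterSystem.leftInvSeq] at ht
  | cons i ω ih =>
      intro hω t ht
      rw [CoxeterSystem.leftInvSeq] at ht
      have hsi : s i ∈ Subgroup.closure (cs.simple '' J) :=
        Subgroup.subset_closure ⟨i, hω i (List.mem_cons_self), rfl⟩
      rcases List.mem_cons.mp ht with h | h
      · rw [h]
        exact hsi
      · obtain ⟨r, hr, hrfl⟩ := List.mem_map.mp h
        have hrmem := ih (fun b hb => hω b (List.mem_cons_of_mem i hb)) r hr
        rw [← hrfl, MulAut.conj_apply]
        exact mul_mem (mul_mem hsi hrmem) (inv_mem hsi)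

end StmtAux

open StmtAux

/-- If `x` is a minimal length `(W_J, W_K)`-double coset representative, then
`x⁻¹ W_J x ⊓ W_K = W_L` where `L = (x⁻¹ J x) ∩ K` (as a subset of `S`, identified
with a subset of the index set). -/
theorem stmt_3 {B W : Type*} [Group W] [Finite W] {M : CoxeterMatrix B}
    (cs : CoxeterSystem M W) (J K : Set B) (x : W)
    (hxJ : ∀ b ∈ J, cs.length x < cs.length (cs.simple b * x))
    (hxK : ∀ b ∈ K, cs.length x⁻¹ < cs.length (cs.simple b * x⁻¹)) :
    (Subgroup.closure (cs.simple '' J)).map (MulAut.conj x⁻¹).toMonoidHom ⊓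
        Subgroup.closure (cs.simple '' K) =
      Subgroup.closure (cs.simple ''
        {b : B | b ∈ K ∧ ∃ j ∈ J, x⁻¹ * cs.simple j * x = cs.simple b}) := by
  classical
  have hI1 : ∀ u ∈ Subgroup.closure (cs.simple '' J),
      cs.length (u * x) = cs.length u + cs.length x :=
    additive_of_no_left_descent cs hxJ
  have hI2' : ∀ v ∈ Subgroup.closure (cs.simple '' K),
      cs.length (v * x⁻¹) = cs.length v + cs.length x⁻¹ :=
    additive_of_no_left_descent cs hxK
  have hI2 : ∀ v ∈ Subgroup.closure (cs.simple '' K),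
      cs.length (x * v) = cs.length x + cs.length v := by
    intro v hv
    have h1 := hI2' v⁻¹ (inv_mem hv)
    rw [cs.length_inv v, cs.length_inv x] at h1
    calc cs.length (x * v) = cs.length ((x * v)⁻¹) := (cs.length_inv _).symm
      _ = cs.length (v⁻¹ * x⁻¹) := by rw [mul_inv_rev]
      _ = cs.length v + cs.length x := h1
      _ = cs.length x + cs.length v := by omega
  apply _root_.le_antisymm
  · -- the hard direction
    have main : ∀ n : ℕ, ∀ w : W,
        w ∈ (Subgroup.closure (cs.simple '' J)).map (MulAut.conj x⁻¹).toMonoidHom →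
        w ∈ Subgroup.closure (cs.simple '' K) → cs.length w = n →
        w ∈ Subgroup.closure (cs.simple ''
          {b : B | b ∈ K ∧ ∃ j ∈ J, x⁻¹ * cs.simple j * x = cs.simple b}) := by
      intro n
      induction n using Nat.strong_induction_on with
      | _ n ih =>
        intro w hwP hwQ hlen
        by_cases hw1 : w = 1
        · rw [hw1]
          exact Subgroup.one_mem _
        -- find a left descent of w within K
        obtain ⟨ωw, hωwmem, hωwred, hωwprod⟩ := exists_reduced_word_of_mem_closure cs hwQ
        have hωwne : ωw ≠ [] := by
          intro hcon
          apply hw1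
          rw [← hωwprod, hcon, cs.wordProd_nil]
        obtain ⟨b, ωw', rfl⟩ := List.exists_cons_of_ne_nil hωwne
        have hbK : b ∈ K := hωwmem b (List.mem_cons_self)
        have hsbQ : cs.simple b ∈ Subgroup.closure (cs.simple '' K) :=
          Subgroup.subset_closure ⟨b, hbK, rfl⟩
        have hsbw : cs.simple b * w = cs.wordProd ωw' := by
          rw [← hωwprod, cs.wordProd_cons, ← mul_assoc, cs.simple_mul_simple_self, one_mul]
        have hωw'red : cs.IsReduced ωw' := by
          have := hωwred.drop 1
          simpa using this
        have hℓw : cs.length w = ωw'.length + 1 := by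
          rw [← hωwprod, hωwred]
          rfl
        have hℓsbw : cs.length (cs.simple b * w) = ωw'.length := by
          rw [hsbw, hωw'red]
        have hsbwQ : cs.simple b * w ∈ Subgroup.closure (cs.simple '' K) :=
          mul_mem hsbQ hwQ
        -- the conjugated element u₀ ∈ W_J
        obtain ⟨u₀, hu₀mem, hu₀conj⟩ := Subgroup.mem_map.mp hwP
        have hu₀w : x⁻¹ * u₀ * x = w := by
          rw [← hu₀conj]
          simp [MulAut.conj_apply]
        have hu₀x : u₀ * x = x * w := by
          rw [← hu₀w]
          group
        have hℓu₀ : cs.length u₀ = cs.length w := by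
          have h1 := hI1 u₀ hu₀mem
          have h2 := hI2 w hwQ
          rw [hu₀x, h2] at h1
          omega
        -- reduced words
        obtain ⟨ωJ, hωJmem, hωJred, hωJprod⟩ := exists_reduced_word_of_mem_closure cs hu₀mem
        obtain ⟨ωx, hωxred, hωxprod⟩ := cs.exists_reduced_word' x
        have hπJx : cs.wordProd (ωJ ++ ωx) = u₀ * x := by
          rw [cs.wordProd_append, hωJprod, ← hωxprod]
        -- the reflection t
        set t := x * cs.simple b * x⁻¹ with ht
        have hrt : cs.IsReflection t := ⟨x, b, rfl⟩
        have hkey : t * (u₀ * x) = x * (cs.simple b * w) := by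
          rw [ht, hu₀x]
          group
        have hdesc : cs.length (t * (u₀ * x)) < cs.length (u₀ * x) := by
          rw [hkey, hu₀x, hI2 w hwQ, hI2 (cs.simple b * w) hsbwQ]
          omega
        have hLinv : cs.IsLeftInversion (u₀ * x) t := ⟨hrt, hdesc⟩
        have hmem := mem_leftInvSeq_of_isLeftInversion cs hLinv (ωJ ++ ωx) hπJx
        rw [leftInvSeq_append, hωJprod] at hmem
        rcases List.mem_append.mp hmem with hm | hm
        · -- t lies in W_J; it must be a simple reflection s j with j ∈ J
          have htJ : t ∈ Subgroup.closure (cs.simple '' J) :=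
            mem_closure_of_mem_leftInvSeq cs J ωJ hωJmem _ hm
          have hℓt : cs.length t = 1 := by
            have h1 := hI1 t htJ
            have h2 : t * x = x * cs.simple b := by
              rw [ht]
              group
            rw [h2, hI2 (cs.simple b) hsbQ, cs.length_simple] at h1
            omega
          obtain ⟨ωt, hωtmem, hωtred, hωtprod⟩ := exists_reduced_word_of_mem_closure cs htJ
          have hωtlen : ωt.length = 1 := by
            rw [← hωtred, hωtprod, hℓt]
          obtain ⟨j, rfl⟩ := List.length_eq_one_iff.mp hωtlen
          have hjJ : j ∈ J := hωtmem j (List.mem_cons_self)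
          have htsj : t = cs.simple j := by
            rw [← hωtprod, cs.wordProd_singleton]
          have hconjb : x⁻¹ * cs.simple j * x = cs.simple b := by
            rw [← htsj, ht]
            group
          have hbL : b ∈ {b : B | b ∈ K ∧ ∃ j ∈ J, x⁻¹ * cs.simple j * x = cs.simple b} :=
            ⟨hbK, j, hjJ, hconjb⟩
          have hsbR : cs.simple b ∈ Subgroup.closure (cs.simple ''
              {b : B | b ∈ K ∧ ∃ j ∈ J, x⁻¹ * cs.simple j * x = cs.simple b}) :=
            Subgroup.subset_closure ⟨b, hbL, rfl⟩
          have hsbP : cs.simple b ∈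
              (Subgroup.closure (cs.simple '' J)).map (MulAut.conj x⁻¹).toMonoidHom := by
            refine Subgroup.mem_map.mpr ⟨cs.simple j, Subgroup.subset_closure ⟨j, hjJ, rfl⟩, ?_⟩
            show MulAut.conj x⁻¹ (cs.simple j) = cs.simple b
            rw [MulAut.conj_apply, inv_inv]
            exact hconjb
          have hw'P : cs.simple b * w ∈
              (Subgroup.closure (cs.simple '' J)).map (MulAut.conj x⁻¹).toMonoidHom :=
            mul_mem hsbP hwP
          have hw'R := ih ωw'.length (by omega) (cs.simple b * w) hw'P hsbwQ hℓsbw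
          have hw : w = cs.simple b * (cs.simple b * w) := by
            rw [← mul_assoc, cs.simple_mul_simple_self, one_mul]
          rw [hw]
          exact mul_mem hsbR hw'R
        · -- impossible case: t would give an inversion of x inside W_K
          exfalso
          obtain ⟨r, hr, hrconj⟩ := List.mem_map.mp hm
          have hrinv : cs.IsLeftInversion x r := by
            have := cs.isLeftInversion_of_mem_leftInvSeq hωxred hr
            rwa [← hωxprod] at this
          have hrx : r * x = x * (w⁻¹ * (cs.simple b * w)) := by
            have h1 : r = u₀⁻¹ * t * u₀ := by
              rw [← hrconj]
              group
            have h2 : u₀⁻¹ * x = x * w⁻¹ := by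
              rw [← hu₀w]
              group
            calc r * x = u₀⁻¹ * (t * (u₀ * x)) := by rw [h1]; group
              _ = u₀⁻¹ * (x * (cs.simple b * w)) := by rw [hkey]
              _ = (u₀⁻¹ * x) * (cs.simple b * w) := by group
              _ = x * (w⁻¹ * (cs.simple b * w)) := by rw [h2]; group
          have hvQ : w⁻¹ * (cs.simple b * w) ∈ Subgroup.closure (cs.simple '' K) :=
            mul_mem (inv_mem hwQ) hsbwQ
          have h3 := hI2 _ hvQ
          have h4 := hrinv.2
          rw [hrx, h3] at h4
          omega
    intro w hw
    obtain ⟨hwP, hwQ⟩ := Subgroup.mem_inf.mp hw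
    exact main (cs.length w) w hwP hwQ rfl
  · -- the easy direction
    rw [Subgroup.closure_le]
    rintro w ⟨b, ⟨hbK, j, hjJ, hj⟩, rfl⟩
    refine Subgroup.mem_inf.mpr ⟨?_, Subgroup.subset_closure ⟨b, hbK, rfl⟩⟩
    refine Subgroup.mem_map.mpr ⟨cs.simple j, Subgroup.subset_closure ⟨j, hjJ, rfl⟩, ?_⟩
    show MulAut.conj x⁻¹ (cs.simple j) = cs.simple b
    rw [MulAut.conj_apply, inv_inv]
    exact hj
end

section
/- Let w be of minimal length in its conjugacy class in W, J = J(w), and suppose x ∈ X_J satisfies ℓ(x⁻¹wx) = ℓ(w). Then J(x⁻¹wx) = x⁻¹ J x. -/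
open List

/-- The set `J(w)` of simple reflections occurring in a reduced expression for `w`. -/
def coxSupport {B W : Type*} [Group W] {M : CoxeterMatrix B}
    (cs : CoxeterSystem M W) (w : W) : Set B :=
  {b : B | ∃ ω : List B, cs.IsReduced ω ∧ cs.wordProd ω = w ∧ b ∈ ω}

namespace CoxAux

open CoxeterSystem

variable {B W : Type*} [Group W] {M : CoxeterMatrix B} (cs : CoxeterSystem M W)

local prefix:100 "σ" => cs.simple
local prefix:100 "π" => cs.wordProd
local prefix:100 "ℓ" => cs.length

noncomputable local instance : DecidableEq W := Classical.decEq W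

/-- The sign-twisted conjugation action of a simple reflection. -/
noncomputable def etaFun (i : B) : W × ℤˣ → W × ℤˣ :=
  fun p => (σ i * p.1 * σ i, if p.1 = σ i then -p.2 else p.2)

lemma etaFun_involutive (i : B) : Function.Involutive (etaFun cs i) := by
  rintro ⟨u, e⟩
  simp only [etaFun]
  have h : (σ i * u * σ i = σ i) ↔ (u = σ i) := by
    constructor
    · intro h
      have := congrArg (fun z => σ i * z * σ i) h
      simpa [mul_assoc, cs.simple_mul_simple_cancel_left] using this
    · rintro rfl; simp [cs.simple_mul_simple_self]
  by_cases hu : u = σ i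
  · simp [hu, h, cs.simple_mul_simple_self, mul_assoc]
  · rw [if_neg hu, if_neg (fun hh => hu (h.mp hh))]
    rw [Prod.ext_iff]
    refine ⟨?_, rfl⟩
    simp only [← mul_assoc, cs.simple_mul_simple_cancel_left]
    simp [mul_assoc, cs.simple_mul_simple_cancel_right]

noncomputable def eta (i : B) : Equiv.Perm (W × ℤˣ) := (etaFun_involutive cs i).toPerm

lemma eta_apply (i : B) (u : W) (e : ℤˣ) :
    eta cs i (u, e) = (σ i * u * σ i, if u = σ i then -e else e) := rfl

lemma prodEta_apply (ω : List B) (u : W) (e : ℤˣ) :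
    ((ω.map (eta cs)).prod) (u, e)
      = (π ω * u * (π ω)⁻¹, (-1 : ℤˣ) ^ ((cs.rightInvSeq ω).count u) * e) := by
  induction ω with
  | nil => simp
  | cons i ω ih =>
    have hris : cs.rightInvSeq (i :: ω) = ((π ω)⁻¹ * (σ i) * (π ω)) :: cs.rightInvSeq ω := rfl
    rw [map_cons, prod_cons, Equiv.Perm.mul_apply, ih, eta_apply, hris, count_cons]
    have hcond : (π ω * u * (π ω)⁻¹ = σ i) ↔ ((π ω)⁻¹ * σ i * π ω = u) := by
      constructor
      · intro h
        rw [← h]; group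
      · intro h
        rw [← h]; group
    rw [Prod.ext_iff]
    refine ⟨by simp [cs.wordProd_cons, mul_assoc], ?_⟩
    by_cases hc : (π ω)⁻¹ * σ i * π ω = u
    · rw [if_pos (hcond.mpr hc), if_pos (by simpa using hc)]
      rw [pow_succ]
      show -((-1:ℤˣ) ^ count u (cs.rightInvSeq ω) * e) = (-1:ℤˣ) ^ count u (cs.rightInvSeq ω) * -1 * e
      simp [mul_assoc]
    · rw [if_neg (fun h => hc (hcond.mp h)), if_neg (by simpa using hc)]
      simp


lemma alternatingWord_two_mul_succ (i j : B) (m : ℕ) :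
    alternatingWord i j (2 * (m + 1)) = i :: j :: alternatingWord i j (2 * m) := by
  have h1 : 2 * (m + 1) = (2 * m + 1) + 1 := by ring
  rw [h1, alternatingWord_succ' i j (2 * m + 1), alternatingWord_succ' i j (2 * m)]
  simp [Nat.even_add_one, Nat.not_even_iff_odd, parity_simps]

lemma prod_map_eta_alt (i j : B) (m : ℕ) :
    ((alternatingWord i j (2 * m)).map (eta cs)).prod = ((eta cs i) * (eta cs j)) ^ m := by
  induction m with
  | zero => simp [alternatingWord]
  | succ m ih =>
    rw [alternatingWord_two_mul_succ, map_cons, map_cons, prod_cons, prod_cons, ih,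
      pow_succ']
    rw [← mul_assoc]

lemma mul_pow_swap (a b : W) (r : ℕ) : a * (b * a) ^ r = (a * b) ^ r * a := by
  induction r with
  | zero => simp
  | succ r ih =>
    calc a * (b * a) ^ (r + 1) = a * ((b * a) * (b * a) ^ r) := by rw [pow_succ']
      _ = (a * b) * (a * (b * a) ^ r) := by
            rw [← mul_assoc, ← mul_assoc a b a, mul_assoc (a * b) a ((b * a) ^ r)]
      _ = (a * b) * ((a * b) ^ r * a) := by rw [ih]
      _ = (a * b) ^ (r + 1) * a := by
            rw [← mul_assoc (a * b) ((a * b) ^ r) a, ← pow_succ']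

lemma ris_alternatingWord (i j : B) (n : ℕ) :
    cs.rightInvSeq (alternatingWord i j n)
      = ((List.range n).reverse).map (fun q => (σ j * σ i) ^ q * σ j) := by
  have hinv : (σ i * σ j)⁻¹ = σ j * σ i := by
    rw [mul_inv_rev, cs.inv_simple, cs.inv_simple]
  induction n with
  | zero => simp [alternatingWord]
  | succ n ih =>
    rw [alternatingWord_succ' i j n]
    have hris : ∀ (k : B) (ω : List B), cs.rightInvSeq (k :: ω)
        = ((π ω)⁻¹ * (σ k) * (π ω)) :: cs.rightInvSeq ω := fun _ _ => rfl
    rw [hris, ih, range_succ, reverse_append]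
    simp only [reverse_singleton, singleton_append, map_cons]
    congr 1
    rw [cs.prod_alternatingWord_eq_mul_pow i j n]
    rcases Nat.even_or_odd n with he | ho
    · obtain ⟨r, hr⟩ := id he
      have hn2 : n / 2 = r := by omega
      simp only [if_pos he, hn2, one_mul]
      have h1 : ((σ i * σ j) ^ r)⁻¹ = (σ j * σ i) ^ r := by rw [← inv_pow, hinv]
      have h2 : (σ j) * (σ i * σ j) ^ r = (σ j * σ i) ^ r * σ j := mul_pow_swap _ _ _
      calc ((σ i * σ j) ^ r)⁻¹ * (σ j) * ((σ i * σ j) ^ r)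
          = (σ j * σ i) ^ r * ((σ j) * ((σ i * σ j) ^ r)) := by rw [h1, mul_assoc]
        _ = (σ j * σ i) ^ r * ((σ j * σ i) ^ r * σ j) := by rw [h2]
        _ = (σ j * σ i) ^ (r + r) * σ j := by
              rw [pow_add, mul_assoc ((σ j * σ i) ^ r) ((σ j * σ i) ^ r) (σ j)]
        _ = (σ j * σ i) ^ n * σ j := by rw [← hr]
    · have hno : ¬ Even n := Nat.not_even_iff_odd.mpr ho
      obtain ⟨r, hr⟩ := id ho
      have hn2 : n / 2 = r := by omega
      simp only [if_neg hno, hn2]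
      have h1 : (σ j * (σ i * σ j) ^ r)⁻¹ = (σ j * σ i) ^ r * σ j := by
        rw [mul_inv_rev, ← inv_pow, hinv, cs.inv_simple]
      have h2 : (σ j) * (σ i * σ j) ^ r = (σ j * σ i) ^ r * σ j := mul_pow_swap _ _ _
      calc (σ j * (σ i * σ j) ^ r)⁻¹ * (σ i) * (σ j * (σ i * σ j) ^ r)
          = (σ j * σ i) ^ r * (σ j * σ i) * ((σ j) * ((σ i * σ j) ^ r)) := by
            rw [h1, mul_assoc ((σ j * σ i) ^ r) (σ j) (σ i)]
        _ = (σ j * σ i) ^ r * (σ j * σ i) * ((σ j * σ i) ^ r * σ j) := by rw [h2]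
        _ = (σ j * σ i) ^ (r + 1 + r) * σ j := by
              rw [pow_add, pow_add, pow_one,
                mul_assoc ((σ j * σ i) ^ r * (σ j * σ i)) ((σ j * σ i) ^ r) (σ j)]
        _ = (σ j * σ i) ^ n * σ j := by rw [hr]; congr 2; omega

lemma count_ris_alt_even (i j : B) (u : W) :
    Even ((cs.rightInvSeq (alternatingWord i j (2 * M i j))).count u) := by
  rw [ris_alternatingWord, map_reverse, count_reverse]
  have h2m : 2 * M i j = M i j + M i j := by omega
  rw [h2m, range_add, map_append]
  have heq : (map (fun x => M i j + x) (range (M i j))).map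
      (fun q => (σ j * σ i) ^ q * σ j)
      = (range (M i j)).map (fun q => (σ j * σ i) ^ q * σ j) := by
    rw [map_map]
    apply map_congr_left
    intro q _
    simp only [Function.comp_apply]
    rw [add_comm (M i j) q, pow_add, cs.simple_mul_simple_pow' i j]
    simp
  rw [heq, count_append]
  exact ⟨_, rfl⟩

lemma eta_liftable : M.IsLiftable (eta cs) := by
  intro i j
  have hπ : π (alternatingWord i j (2 * M i j)) = 1 := by
    rw [cs.prod_alternatingWord_eq_mul_pow i j]
    rw [if_pos (by exact even_two_mul _)]
    have h2 : 2 * M i j / 2 = M i j := by omega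
    rw [h2, one_mul, cs.simple_mul_simple_pow i j]
  rw [← prod_map_eta_alt]
  apply Equiv.ext
  rintro ⟨u, e⟩
  have hev := count_ris_alt_even cs i j u
  rw [prodEta_apply, hπ, Even.neg_one_pow hev]
  simp

noncomputable def perMap : W →* Equiv.Perm (W × ℤˣ) := cs.lift ⟨eta cs, eta_liftable cs⟩

lemma perMap_wordProd (ω : List B) : perMap cs (π ω) = (ω.map (eta cs)).prod := by
  induction ω with
  | nil => simp [cs.wordProd_nil]
  | cons i ω ih =>
    rw [cs.wordProd_cons, map_mul, ih, map_cons, prod_cons]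
    congr 1
    exact cs.lift_apply_simple (eta_liftable cs) i

/-- The parity of the number of times `u` occurs in the right inversion sequence
depends only on the product of the word. -/
lemma count_parity_intrinsic {ω ω' : List B} (h : π ω = π ω') (u : W) :
    (-1 : ℤˣ) ^ ((cs.rightInvSeq ω).count u) = (-1 : ℤˣ) ^ ((cs.rightInvSeq ω').count u) := by
  have h1 := prodEta_apply cs ω u 1
  have h2 := prodEta_apply cs ω' u 1
  rw [← perMap_wordProd, h] at h1
  rw [← perMap_wordProd] at h2
  rw [h1] at h2
  have := congrArg Prod.snd h2
  simpa using this


lemma ris_cons (k : B) (ω : List B) : cs.rightInvSeq (k :: ω)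
    = ((π ω)⁻¹ * (σ k) * (π ω)) :: cs.rightInvSeq ω := rfl

lemma ris_append (ω₁ ω₂ : List B) :
    cs.rightInvSeq (ω₁ ++ ω₂)
      = (cs.rightInvSeq ω₁).map (fun t => (π ω₂)⁻¹ * t * π ω₂) ++ cs.rightInvSeq ω₂ := by
  induction ω₁ with
  | nil => simp
  | cons i ω₁ ih =>
    rw [cons_append, ris_cons, ris_cons, ih, map_cons, cons_append]
    congr 1
    simp [cs.wordProd_append, mul_assoc, mul_inv_rev]

lemma conj_injective (g : W) : Function.Injective (fun t : W => g⁻¹ * t * g) := by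
  intro t₁ t₂ h
  simpa [mul_assoc] using congrArg (fun z => g * z * g⁻¹) h

lemma count_ris_palindrome_odd (γ : List B) (a : B) :
    ¬ Even ((cs.rightInvSeq (γ ++ [a] ++ γ.reverse)).count (π (γ ++ [a] ++ γ.reverse))) := by
  induction γ with
  | nil =>
    simp [ris_cons]
  | cons c γ ih =>
    have hlist : ((c :: γ) ++ [a] ++ (c :: γ).reverse)
        = c :: ((γ ++ [a] ++ γ.reverse) ++ [c]) := by
      simp [List.append_assoc]
    rw [hlist]
    set σ' : List B := γ ++ [a] ++ γ.reverse with hσ'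
    have hrev : σ'.reverse = σ' := by
      rw [hσ']
      simp [List.reverse_append, List.append_assoc]
    have hinvt : (π σ')⁻¹ = π σ' := by
      rw [← cs.wordProd_reverse, hrev]
    set t' : W := π σ' with ht'
    have hπc : π (σ' ++ [c]) = t' * σ c := by
      rw [cs.wordProd_append, cs.wordProd_singleton]
    have hπ : π (c :: (σ' ++ [c])) = σ c * t' * σ c := by
      rw [cs.wordProd_cons, hπc, ← mul_assoc]
    have hhead : (π (σ' ++ [c]))⁻¹ * σ c * π (σ' ++ [c]) = σ c * t' * σ c * t' * σ c := by
      rw [hπc, mul_inv_rev, hinvt, cs.inv_simple]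
      group
    rw [ris_cons, ris_append, hπ, hhead, cs.rightInvSeq_singleton, cs.wordProd_singleton]
    rw [count_cons, count_append, count_cons, count_nil]
    have hcmap : count (σ c * t' * σ c) ((cs.rightInvSeq σ').map (fun r => (σ c)⁻¹ * r * σ c))
        = count t' (cs.rightInvSeq σ') := by
      have h0 : σ c * t' * σ c = (fun r : W => (σ c)⁻¹ * r * σ c) t' := by
        simp [cs.inv_simple]
      rw [h0, count_map_of_injective _ _ (conj_injective (σ c)) t']
    rw [hcmap]
    have hAiff : (σ c * t' * σ c * t' * σ c = σ c * t' * σ c) ↔ t' = σ c := by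
      constructor
      · intro h
        have h1 : σ c * t' * σ c * t' = σ c * t' := mul_right_cancel h
        rw [mul_assoc (σ c * t') (σ c) t'] at h1
        have h2 : σ c * t' = 1 := mul_left_cancel (h1.trans (mul_one (σ c * t')).symm)
        have h3 := inv_eq_of_mul_eq_one_right h2
        rw [← h3]
        exact cs.inv_simple c
      · intro h
        rw [h]
        simp
    have hBiff : (σ c = σ c * t' * σ c) ↔ t' = σ c := by
      constructor
      · intro h
        have h1 : 1 * σ c = σ c * t' * σ c := by rw [one_mul]; exact h
        have h2 : σ c * t' = 1 := (mul_right_cancel h1).symm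
        have h3 := inv_eq_of_mul_eq_one_right h2
        rw [← h3]
        exact cs.inv_simple c
      · intro h
        rw [h]
        simp
    by_cases h : t' = σ c
    · rw [if_pos (beq_iff_eq.mpr (hAiff.mpr h)), if_pos (beq_iff_eq.mpr (hBiff.mpr h))]
      intro hev
      apply ih
      rw [Nat.even_iff] at hev ⊢
      omega
    · rw [if_neg (fun hc => h (hAiff.mp (beq_iff_eq.mp hc))),
        if_neg (fun hc => h (hBiff.mp (beq_iff_eq.mp hc)))]
      simpa using ih


lemma parity_eq_of_neg_one_pow {a b : ℕ} (h : (-1 : ℤˣ) ^ a = (-1 : ℤˣ) ^ b) :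
    (Even a ↔ Even b) := by
  constructor
  · intro ha
    by_contra hb
    rw [Even.neg_one_pow ha, Odd.neg_one_pow (Nat.not_even_iff_odd.mp hb)] at h
    exact (by decide : (1 : ℤˣ) ≠ -1) h
  · intro hb
    by_contra ha
    rw [Even.neg_one_pow hb, Odd.neg_one_pow (Nat.not_even_iff_odd.mp ha)] at h
    exact (by decide : (1 : ℤˣ) ≠ -1) h.symm

/-- Strong exchange (membership form, right version). -/
theorem mem_rightInvSeq_of_isRightInversion {ω : List B} (hω : cs.IsReduced ω) {t : W}
    (ht : cs.IsReflection t) (hlt : ℓ (π ω * t) < ℓ (π ω)) : t ∈ cs.rightInvSeq ω := by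
  obtain ⟨z, a, hza⟩ := ht
  obtain ⟨ζ, hζ⟩ := cs.wordProd_surjective z
  have htr : cs.IsReflection t := ⟨z, a, hza⟩
  have hπσ : π (ζ ++ [a] ++ ζ.reverse) = t := by
    rw [cs.wordProd_append, cs.wordProd_append, cs.wordProd_singleton, cs.wordProd_reverse,
      hζ, hza]
  obtain ⟨ρ, hρred, hρ⟩ := cs.exists_reduced_word' (π ω * t)
  have hprod : π (ρ ++ (ζ ++ [a] ++ ζ.reverse)) = π ω := by
    rw [cs.wordProd_append, hπσ, ← hρ, mul_assoc, htr.mul_self, mul_one]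
  have hpar := count_parity_intrinsic cs hprod t
  rw [ris_append] at hpar
  have h0 : t = (fun r : W => (π (ζ ++ [a] ++ ζ.reverse))⁻¹ * r * π (ζ ++ [a] ++ ζ.reverse)) t := by
    show t = (π (ζ ++ [a] ++ ζ.reverse))⁻¹ * t * π (ζ ++ [a] ++ ζ.reverse)
    rw [hπσ, htr.inv, htr.mul_self, one_mul]
  have hc1 : count t ((cs.rightInvSeq ρ).map
      (fun r => (π (ζ ++ [a] ++ ζ.reverse))⁻¹ * r * π (ζ ++ [a] ++ ζ.reverse)))
      = count t (cs.rightInvSeq ρ) := by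
    conv_lhs => rw [h0]
    exact count_map_of_injective _ _ (conj_injective _) t
  have hc0 : count t (cs.rightInvSeq ρ) = 0 := by
    rw [count_eq_zero]
    intro hmem
    have h2 := (cs.isRightInversion_of_mem_rightInvSeq hρred hmem).2
    rw [← hρ, mul_assoc, htr.mul_self, mul_one] at h2
    omega
  rw [count_append, hc1, hc0, zero_add] at hpar
  have hodd := count_ris_palindrome_odd cs ζ a
  rw [hπσ] at hodd
  have hiff := parity_eq_of_neg_one_pow hpar
  have hne : ¬ Even (count t (cs.rightInvSeq ω)) := fun h => hodd (hiff.mpr h)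
  by_contra hnmem
  rw [count_eq_zero.mpr hnmem] at hne
  exact hne Even.zero

/-- Strong exchange (membership form, left version). -/
theorem mem_leftInvSeq_of_isLeftInversion {ω : List B} (hω : cs.IsReduced ω) {t : W}
    (ht : cs.IsReflection t) (hlt : ℓ (t * π ω) < ℓ (π ω)) : t ∈ cs.leftInvSeq ω := by
  have hred : cs.IsReduced ω.reverse := (cs.isReduced_reverse_iff ω).mpr hω
  have hlt' : ℓ (π ω.reverse * t) < ℓ (π ω.reverse) := by
    rw [cs.wordProd_reverse]
    have h1 : ℓ ((π ω)⁻¹ * t) = ℓ (t * π ω) := by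
      rw [← cs.length_inv ((π ω)⁻¹ * t), mul_inv_rev, inv_inv, ht.inv]
    rw [h1, cs.length_inv]
    exact hlt
  have hmem := mem_rightInvSeq_of_isRightInversion cs hred ht hlt'
  rw [cs.rightInvSeq_reverse] at hmem
  exact (mem_reverse.mp hmem)

lemma exists_eraseIdx_of_mem_leftInvSeq {ω : List B} {t : W} (h : t ∈ cs.leftInvSeq ω) :
    ∃ j, j < ω.length ∧ t * π ω = π (ω.eraseIdx j) := by
  obtain ⟨j, hj, hgetD⟩ := List.getElem_of_mem h
  refine ⟨j, by simpa using hj, ?_⟩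
  have hg : (cs.leftInvSeq ω).getD j 1 = t := by
    rw [List.getD_eq_getElem _ _ hj, hgetD]
  rw [← hg]
  exact cs.getD_leftInvSeq_mul_wordProd ω j

/-- Deletion: every word contains a reduced word for its product among its letters. -/
lemma exists_reduced_subword (ω : List B) :
    ∃ ω' : List B, cs.IsReduced ω' ∧ π ω' = π ω ∧ ∀ b ∈ ω', b ∈ ω := by
  induction ω with
  | nil => exact ⟨[], by simp [CoxeterSystem.IsReduced], by simp, by simp⟩
  | cons i ω ih =>
    obtain ⟨ω', hred, hπ, hsub⟩ := ih
    rcases cs.length_simple_mul (π ω') i with hup | hdown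
    · refine ⟨i :: ω', ?_, ?_, ?_⟩
      · rw [CoxeterSystem.IsReduced, cs.wordProd_cons, hup, hred]
        simp
      · rw [cs.wordProd_cons, cs.wordProd_cons, hπ]
      · intro b hb
        rcases mem_cons.mp hb with h | h
        · exact mem_cons.mpr (Or.inl h)
        · exact mem_cons.mpr (Or.inr (hsub b h))
    · have hlt : ℓ (σ i * π ω') < ℓ (π ω') := by omega
      have hmem := mem_leftInvSeq_of_isLeftInversion cs hred (cs.isReflection_simple i) hlt
      obtain ⟨j, hj, herase⟩ := exists_eraseIdx_of_mem_leftInvSeq cs hmem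
      refine ⟨ω'.eraseIdx j, ?_, ?_, ?_⟩
      · show ℓ (π (ω'.eraseIdx j)) = (ω'.eraseIdx j).length
        rw [← herase]
        have hlen : (ω'.eraseIdx j).length = ω'.length - 1 := by
          rw [List.length_eraseIdx]
          simp [hj]
        have hred' : ℓ (π ω') = ω'.length := hred
        omega
      · rw [← herase, cs.wordProd_cons, hπ]
      · intro b hb
        exact mem_cons.mpr (Or.inr (hsub b ((ω'.eraseIdx_sublist j).subset hb)))


/-! ### Words with letters in a set -/

def inP (J : Set B) (u : W) : Prop := ∃ γ : List B, (∀ b ∈ γ, b ∈ J) ∧ π γ = u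

variable {cs}

lemma inP_one {J : Set B} : inP cs J 1 := ⟨[], by simp, by simp⟩

lemma inP_simple {J : Set B} {b : B} (hb : b ∈ J) : inP cs J (cs.simple b) :=
  ⟨[b], by simpa using hb, by simp⟩

lemma inP_mul {J : Set B} {u v : W} (hu : inP cs J u) (hv : inP cs J v) :
    inP cs J (u * v) := by
  obtain ⟨γ, hγ, rfl⟩ := hu
  obtain ⟨δ, hδ, rfl⟩ := hv
  refine ⟨γ ++ δ, ?_, by rw [cs.wordProd_append]⟩
  intro b hb
  rcases mem_append.mp hb with h | h
  exacts [hγ b h, hδ b h]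

lemma inP_inv {J : Set B} {u : W} (hu : inP cs J u) : inP cs J u⁻¹ := by
  obtain ⟨γ, hγ, rfl⟩ := hu
  exact ⟨γ.reverse, fun b hb => hγ b (mem_reverse.mp hb), by rw [cs.wordProd_reverse]⟩

lemma inP_mono {J J' : Set B} (hJ : J ⊆ J') {u : W} (hu : inP cs J u) : inP cs J' u := by
  obtain ⟨γ, hγ, rfl⟩ := hu
  exact ⟨γ, fun b hb => hJ (hγ b hb), rfl⟩

lemma inP_exists_reduced {J : Set B} {u : W} (hu : inP cs J u) :
    ∃ γ : List B, cs.IsReduced γ ∧ (∀ b ∈ γ, b ∈ J) ∧ π γ = u := by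
  obtain ⟨γ, hγ, rfl⟩ := hu
  obtain ⟨γ', hred, hπ, hsub⟩ := exists_reduced_subword cs γ
  exact ⟨γ', hred, fun b hb => hγ b (hsub b hb), hπ⟩

lemma inP_simple_eq {J : Set B} {u : W} (hu : inP cs J u) (h1 : ℓ u = 1) :
    ∃ b ∈ J, u = cs.simple b := by
  obtain ⟨γ, hred, hγ, rfl⟩ := inP_exists_reduced hu
  have hlen : γ.length = 1 := by
    have := hred
    rw [CoxeterSystem.IsReduced] at this
    omega
  obtain ⟨b, rfl⟩ := List.length_eq_one_iff.mp hlen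
  exact ⟨b, hγ b (by simp), by rw [cs.wordProd_singleton]⟩

lemma inP_descent {J : Set B} {u : W} (hu : inP cs J u) (h1 : u ≠ 1) :
    ∃ b ∈ J, ∃ u', inP cs J u' ∧ u = cs.simple b * u' ∧ ℓ u' + 1 = ℓ u := by
  obtain ⟨γ, hred, hγ, rfl⟩ := inP_exists_reduced hu
  match γ, hred, hγ with
  | [], _, _ => exact absurd (by simp) h1
  | b :: γ', hred, hγ =>
    have hred' : cs.IsReduced γ' := by
      have := hred.drop 1
      simpa using this
    refine ⟨b, hγ b (by simp), π γ', ⟨γ', fun c hc => hγ c (by simp [hc]), rfl⟩,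
      by rw [cs.wordProd_cons], ?_⟩
    have e1 : ℓ (π γ') = γ'.length := hred'
    have e2 : ℓ (π (b :: γ')) = γ'.length + 1 := by
      have := hred
      rw [CoxeterSystem.IsReduced] at this
      simpa using this
    omega

/-- Additivity of lengths over a coset with distinguished minimal representative. -/
lemma coset_additivity {J : Set B} {x : W}
    (hx : ∀ b ∈ J, ℓ x < ℓ (cs.simple b * x)) :
    ∀ u, inP cs J u → ℓ (u * x) = ℓ u + ℓ x := by
  classical
  set S : Set ℕ := {n | ∃ u, inP cs J u ∧ n = ℓ (u * x)} with hS
  have hSne : S.Nonempty := ⟨ℓ (1 * x), 1, inP_one, rfl⟩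
  obtain ⟨u₀, hu₀P, hu₀⟩ := Nat.sInf_mem hSne
  set x₀ := u₀ * x with hx₀
  have hmin : ∀ u, inP cs J u → ℓ x₀ ≤ ℓ (u * x) := by
    intro u hu
    rw [← hu₀]
    exact Nat.sInf_le ⟨u, hu, rfl⟩
  have stepA : ∀ n u, inP cs J u → ℓ u = n → ℓ (u * x₀) = ℓ u + ℓ x₀ := by
    intro n
    induction n using Nat.strong_induction_on with
    | _ n ihn =>
    intro u huP hlen
    by_cases h1 : u = 1
    · simp [h1]
    obtain ⟨b, hbJ, u', hu'P, hdecomp, hlen'⟩ := inP_descent huP h1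
    have ih' := ihn (ℓ u') (by omega) u' hu'P rfl
    rcases cs.length_simple_mul (u' * x₀) b with hup | hdown
    · have hsb : ℓ (cs.simple b * u') = ℓ u' + 1 := by
        rw [← hdecomp]
        omega
      rw [hdecomp, mul_assoc, hup, ih', hsb]
      omega
    · exfalso
      obtain ⟨γ', hγred, hγJ, hγπ⟩ := inP_exists_reduced hu'P
      obtain ⟨α₀, hαred, hαπ⟩ := cs.exists_reduced_word' x₀
      have hcatπ : π (γ' ++ α₀) = u' * x₀ := by
        rw [cs.wordProd_append, hγπ, ← hαπ]
      have hcatred : cs.IsReduced (γ' ++ α₀) := by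
        rw [CoxeterSystem.IsReduced, hcatπ, ih', length_append]
        have e1 : ℓ (π γ') = γ'.length := hγred
        have e2 : ℓ (π α₀) = α₀.length := hαred
        rw [hγπ] at e1
        rw [← hαπ] at e2
        omega
      have hlt : ℓ (cs.simple b * π (γ' ++ α₀)) < ℓ (π (γ' ++ α₀)) := by
        rw [hcatπ]; omega
      have hmem := mem_leftInvSeq_of_isLeftInversion cs hcatred (cs.isReflection_simple b) hlt
      obtain ⟨j, hj, herase⟩ := exists_eraseIdx_of_mem_leftInvSeq cs hmem
      rw [hcatπ] at herase
      by_cases hcase : j < γ'.length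
      · rw [List.eraseIdx_append_of_lt_length hcase] at herase
        rw [cs.wordProd_append] at herase
        have hcancel : cs.simple b * u' = π (γ'.eraseIdx j) := by
          have : cs.simple b * u' * x₀ = π (γ'.eraseIdx j) * x₀ := by
            rw [mul_assoc]
            rw [herase, hαπ]
          exact mul_right_cancel this
        have hle := cs.length_wordProd_le (γ'.eraseIdx j)
        rw [← hcancel] at hle
        have hglen : (γ'.eraseIdx j).length ≤ γ'.length - 1 := by
          rw [List.length_eraseIdx]
          simp [hcase]
        have e1 : ℓ (π γ') = γ'.length := hγred
        rw [hγπ] at e1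
        rw [← hdecomp] at hle
        omega
      · push_neg at hcase
        rw [List.eraseIdx_append_of_length_le hcase] at herase
        rw [cs.wordProd_append] at herase
        have hx₁ : π (α₀.eraseIdx (j - γ'.length)) = (u'⁻¹ * cs.simple b * u') * x₀ := by
          have h7 : u' * π (α₀.eraseIdx (j - γ'.length)) = cs.simple b * (u' * x₀) := by
            rw [herase, hγπ]
          have h8 := congrArg (fun z => u'⁻¹ * z) h7
          simpa [mul_assoc] using h8
        have hx₂ : (u'⁻¹ * cs.simple b * u') * x₀ = (u'⁻¹ * cs.simple b * u' * u₀) * x := by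
          rw [hx₀]
          group
        have hinP : inP cs J (u'⁻¹ * cs.simple b * u' * u₀) :=
          inP_mul (inP_mul (inP_mul (inP_inv hu'P) (inP_simple hbJ)) hu'P) hu₀P
        have hge := hmin _ hinP
        rw [← hx₂, ← hx₁] at hge
        have hle := cs.length_wordProd_le (α₀.eraseIdx (j - γ'.length))
        have hjlen : j - γ'.length < α₀.length := by
          rw [length_append] at hj
          omega
        have hglen : (α₀.eraseIdx (j - γ'.length)).length = α₀.length - 1 := by
          rw [List.length_eraseIdx]
          simp [hjlen]
        have e2 : ℓ (π α₀) = α₀.length := hαred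
        rw [← hαπ] at e2
        omega
  intro u huP
  have hu₀1 : u₀⁻¹ = 1 := by
    by_contra h1
    obtain ⟨b, hbJ, u', hu'P, hdec, hlen'⟩ := inP_descent (inP_inv hu₀P) h1
    have hx0eq : x = u₀⁻¹ * x₀ := by rw [hx₀]; group
    have h2 : cs.simple b * x = u' * x₀ := by
      have h2' : cs.simple b * (u₀⁻¹ * x₀) = u' * x₀ := by
        rw [hdec, ← mul_assoc (cs.simple b) (cs.simple b * u') x₀,
          cs.simple_mul_simple_cancel_left]
      rw [← hx0eq] at h2'
      exact h2'
    have h3 := stepA _ u' hu'P rfl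
    have h4 := stepA _ u₀⁻¹ (inP_inv hu₀P) rfl
    have h5 : ℓ x = ℓ u₀⁻¹ + ℓ x₀ := by rw [hx0eq, h4]
    have h6 : ℓ (cs.simple b * x) = ℓ u' + ℓ x₀ := by rw [h2, h3]
    have := hx b hbJ
    omega
  have hxx : x₀ = x := by
    have hu1 : u₀ = 1 := by simpa using hu₀1
    rw [hx₀, hu1, one_mul]
  rw [← hxx]
  exact stepA _ u huP rfl


lemma lis_cons (i : B) (ω : List B) :
    cs.leftInvSeq (i :: ω) = cs.simple i ::
      (cs.leftInvSeq ω).map (fun t => cs.simple i * t * cs.simple i) := by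
  show (cs.simple i :: List.map (⇑(MulAut.conj (cs.simple i))) (cs.leftInvSeq ω)) = _
  congr 1
  apply map_congr_left
  intro t _
  rw [MulAut.conj_apply, cs.inv_simple]

lemma lis_append (ω₁ ω₂ : List B) :
    cs.leftInvSeq (ω₁ ++ ω₂) = cs.leftInvSeq ω₁ ++
      (cs.leftInvSeq ω₂).map (fun t => π ω₁ * t * (π ω₁)⁻¹) := by
  induction ω₁ with
  | nil => simp
  | cons i ω₁ ih =>
    rw [cons_append, lis_cons, ih, lis_cons, map_append, cons_append, map_map]
    congr 2
    apply map_congr_left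
    intro t _
    simp only [Function.comp_apply]
    rw [cs.wordProd_cons]
    simp [mul_assoc, mul_inv_rev, cs.inv_simple]

lemma lis_mem_inP {ω : List B} {t : W} (ht : t ∈ cs.leftInvSeq ω) :
    inP cs {b | b ∈ ω} t := by
  induction ω generalizing t with
  | nil => simp at ht
  | cons i ω ih =>
    rw [lis_cons] at ht
    rcases mem_cons.mp ht with h | h
    · rw [h]
      exact inP_simple (by simp)
    · obtain ⟨t', ht', rfl⟩ := mem_map.mp h
      have h1 : inP cs {b | b ∈ ω} t' := ih ht'
      have h2 : inP cs {b | b ∈ i :: ω} t' :=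
        inP_mono (fun b hb => by simp [Set.mem_setOf_eq] at hb ⊢; exact Or.inr hb) h1
      exact inP_mul (inP_mul (inP_simple (by simp)) h2) (inP_simple (by simp))

lemma prod_take_lis (ω : List B) (j : ℕ) :
    ((cs.leftInvSeq ω).take j).prod = (π (ω.take j))⁻¹ := by
  rw [← cs.leftInvSeq_take ω j]
  exact cs.prod_leftInvSeq _

lemma simple_eq_conj_lis (ω : List B) (j : ℕ) (hj : j < ω.length) :
    cs.simple (ω.get ⟨j, hj⟩)
      = (π (ω.take j))⁻¹ * ((cs.leftInvSeq ω).getD j 1) * π (ω.take j) := by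
  rw [cs.getD_leftInvSeq, List.getElem?_eq_getElem hj]
  simp [mul_assoc]

lemma inP_conj_prod {J : Set B} (g : W) (L : List W)
    (h : ∀ r ∈ L, inP cs J (g * r * g⁻¹)) : inP cs J (g * L.prod * g⁻¹) := by
  induction L with
  | nil =>
    simp only [prod_nil, mul_one]
    simpa using (inP_one : inP cs J 1)
  | cons r L ih =>
    rw [prod_cons]
    have heq : g * (r * L.prod) * g⁻¹ = (g * r * g⁻¹) * (g * L.prod * g⁻¹) := by group
    rw [heq]
    exact inP_mul (h r (by simp)) (ih fun r' hr' => h r' (by simp [hr']))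

lemma inP_conj_simple_of_word {J : Set B} (g : W) {ω : List B} {j : ℕ} (hj : j < ω.length)
    (h : ∀ r ∈ cs.leftInvSeq ω, inP cs J (g * r * g⁻¹)) :
    inP cs J (g * cs.simple (ω.get ⟨j, hj⟩) * g⁻¹) := by
  rw [simple_eq_conj_lis ω j hj]
  have h1 : inP cs J (g * (π (ω.take j))⁻¹ * g⁻¹) := by
    have := inP_conj_prod g ((cs.leftInvSeq ω).take j)
      (fun r hr => h r (List.mem_of_mem_take hr))
    rwa [prod_take_lis] at this
  have h2 : inP cs J (g * (π (ω.take j)) * g⁻¹) := by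
    have h2' := inP_inv h1
    have heq : (g * (π (ω.take j))⁻¹ * g⁻¹)⁻¹ = g * (π (ω.take j)) * g⁻¹ := by group
    rwa [heq] at h2'
  have h3 : inP cs J (g * ((cs.leftInvSeq ω).getD j 1) * g⁻¹) := by
    apply h
    have hjl : j < (cs.leftInvSeq ω).length := by
      rw [cs.length_leftInvSeq]; exact hj
    rw [List.getD_eq_getElem _ _ hjl]
    exact List.getElem_mem _
  have heq : g * ((π (ω.take j))⁻¹ * ((cs.leftInvSeq ω).getD j 1) * π (ω.take j)) * g⁻¹
      = (g * (π (ω.take j))⁻¹ * g⁻¹) * (g * ((cs.leftInvSeq ω).getD j 1) * g⁻¹)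
        * (g * (π (ω.take j)) * g⁻¹) := by group
  rw [heq]
  exact inP_mul (inP_mul h1 h3) h2


/-- Main theorem: conjugation by a minimal coset representative which preserves the
length of `w` maps the support of `w` bijectively onto the support of `x⁻¹ w x`. -/
theorem support_conj_eq (w x : W)
    (hx : ∀ b ∈ coxSupport cs w, ℓ x < ℓ (cs.simple b * x))
    (hlen : ℓ (x⁻¹ * w * x) = ℓ w) :
    cs.simple '' coxSupport cs (x⁻¹ * w * x)
      = (fun g => x⁻¹ * g * x) '' (cs.simple '' coxSupport cs w) := by
  set J : Set B := coxSupport cs w with hJ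
  set v : W := x⁻¹ * w * x with hv
  set K : Set B := coxSupport cs v with hK
  -- basic facts
  have hJw : inP cs J w := by
    obtain ⟨β, hβred, hβπ⟩ := cs.exists_reduced_word' w
    exact ⟨β, fun b hb => ⟨β, hβred, hβπ.symm, hb⟩, hβπ.symm⟩
  have AD : ∀ u, inP cs J u → ℓ (u * x) = ℓ u + ℓ x := coset_additivity hx
  have hwx : ℓ (w * x) = ℓ w + ℓ x := AD w hJw
  have hxv : x * v = w * x := by rw [hv]; group
  obtain ⟨α, hαred, hαπ⟩ := cs.exists_reduced_word' x
  -- the key claim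
  have key : ∀ (β : List B), cs.IsReduced β → π β = w →
      ∀ (γ : List B), cs.IsReduced γ → π γ = v →
      ∀ t ∈ cs.leftInvSeq β, x⁻¹ * t * x ∈ cs.leftInvSeq γ := by
    intro β hβred hβπ γ hγred hγπ t ht
    have htref : cs.IsReflection t := cs.isReflection_of_mem_leftInvSeq β ht
    have htinv : ℓ (t * w) < ℓ w := by
      have := (cs.isLeftInversion_of_mem_leftInvSeq hβred ht).2
      rwa [hβπ] at this
    have htJ : inP cs J t := by
      refine inP_mono ?_ (lis_mem_inP ht)
      intro b hb
      exact ⟨β, hβred, hβπ, hb⟩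
    have hαγπ : π (α ++ γ) = w * x := by
      rw [cs.wordProd_append, ← hαπ, hγπ, hxv]
    have hαγred : cs.IsReduced (α ++ γ) := by
      rw [CoxeterSystem.IsReduced, hαγπ, hwx, length_append]
      have e1 : ℓ (π α) = α.length := hαred
      have e2 : ℓ (π γ) = γ.length := hγred
      rw [← hαπ] at e1
      rw [hγπ] at e2
      rw [hv] at e2
      rw [hlen] at e2
      omega
    have hlt : ℓ (t * π (α ++ γ)) < ℓ (π (α ++ γ)) := by
      rw [hαγπ, ← mul_assoc, AD (t * w) (inP_mul htJ hJw), hwx]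
      omega
    have hmem := mem_leftInvSeq_of_isLeftInversion cs hαγred htref hlt
    rw [lis_append] at hmem
    rcases mem_append.mp hmem with hin | hin
    · exfalso
      have h1 := (cs.isLeftInversion_of_mem_leftInvSeq hαred hin).2
      rw [← hαπ] at h1
      have h2 := AD t htJ
      have h3 := htref.odd_length
      rw [Nat.odd_iff] at h3
      omega
    · obtain ⟨r, hr, heq⟩ := mem_map.mp hin
      rw [← hαπ] at heq
      have : x⁻¹ * t * x = r := by
        rw [← heq]
        group
      rwa [this]
  -- fixed reduced words
  obtain ⟨β₀, hβ₀red, hβ₀π⟩ := cs.exists_reduced_word' w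
  obtain ⟨γ₀, hγ₀red, hγ₀π⟩ := cs.exists_reduced_word' v
  -- surjectivity via counting
  have key2 : ∀ (γ : List B), cs.IsReduced γ → π γ = v →
      ∀ r ∈ cs.leftInvSeq γ, ∃ t ∈ cs.leftInvSeq β₀, x⁻¹ * t * x = r := by
    intro γ hγred hγπ r hr
    classical
    set L : List W := (cs.leftInvSeq β₀).map (fun t => x⁻¹ * t * x) with hL
    have hsub : L ⊆ cs.leftInvSeq γ := by
      intro z hz
      obtain ⟨t, ht, rfl⟩ := mem_map.mp hz
      exact key β₀ hβ₀red hβ₀π.symm γ hγred hγπ t ht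
    have hnodup : L.Nodup :=
      (hβ₀red.nodup_leftInvSeq).map (conj_injective x)
    have hlenL : L.length = (cs.leftInvSeq γ).length := by
      rw [hL, length_map, cs.length_leftInvSeq, cs.length_leftInvSeq]
      have e1 : ℓ (π β₀) = β₀.length := hβ₀red
      have e2 : ℓ (π γ) = γ.length := hγred
      rw [← hβ₀π] at e1
      rw [hγπ, hv, hlen] at e2
      omega
    have hperm : L ~ cs.leftInvSeq γ :=
      (List.subperm_of_subset hnodup hsub).perm_of_length_le (by omega)
    have hrL : r ∈ L := hperm.mem_iff.mpr hr
    obtain ⟨t, ht, heq⟩ := mem_map.mp hrL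
    exact ⟨t, ht, heq⟩
  -- C1
  have C1 : ∀ (γ : List B), cs.IsReduced γ → π γ = v →
      ∀ r ∈ cs.leftInvSeq γ, inP cs J (x * r * x⁻¹) := by
    intro γ hγred hγπ r hr
    obtain ⟨t, ht, heq⟩ := key2 γ hγred hγπ r hr
    have htJ : inP cs J t := by
      refine inP_mono ?_ (lis_mem_inP ht)
      intro b hb
      exact ⟨β₀, hβ₀red, hβ₀π.symm, hb⟩
    have : x * r * x⁻¹ = t := by
      rw [← heq]; group
    rwa [this]
  -- C2
  have C2 : ∀ k ∈ K, inP cs J (x * cs.simple k * x⁻¹) := by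
    intro k hk
    obtain ⟨γ, hγred, hγπ, hkγ⟩ := hk
    obtain ⟨⟨j, hj⟩, hget⟩ := List.mem_iff_get.mp hkγ
    have := inP_conj_simple_of_word (cs := cs) (J := J) x hj (C1 γ hγred hγπ)
    rwa [hget] at this
  -- minimality on the K side
  have hd' : ∀ k ∈ K, ℓ x⁻¹ < ℓ (cs.simple k * x⁻¹) := by
    intro k hk
    have hu : inP cs J (x * cs.simple k * x⁻¹) := C2 k hk
    have h1 : ℓ ((x * cs.simple k * x⁻¹) * x) = ℓ (x * cs.simple k * x⁻¹) + ℓ x := AD _ hu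
    have h2 : (x * cs.simple k * x⁻¹) * x = x * cs.simple k := by group
    have h3 : x * cs.simple k * x⁻¹ ≠ 1 := by
      intro h0
      have : cs.simple k = 1 := by
        have := congrArg (fun z => x⁻¹ * z * x) h0
        simpa [mul_assoc] using this
      have hk1 := cs.length_simple k
      rw [this, cs.length_one] at hk1
      omega
    have h4 : ℓ (x * cs.simple k * x⁻¹) ≠ 0 := fun h0 => h3 (cs.length_eq_zero_iff.mp h0)
    have h5 : ℓ (cs.simple k * x⁻¹) = ℓ (x * cs.simple k) := by
      rw [← cs.length_inv (cs.simple k * x⁻¹), mul_inv_rev, inv_inv, cs.inv_simple]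
    rw [h5, cs.length_inv, ← h2, h1]
    omega
  have ADK : ∀ u, inP cs K u → ℓ (u * x⁻¹) = ℓ u + ℓ x⁻¹ := coset_additivity hd'
  -- C3
  have C3 : ∀ b ∈ J, inP cs K (x⁻¹ * cs.simple b * x) := by
    intro b hb
    obtain ⟨β, hβred, hβπ, hbβ⟩ := hb
    obtain ⟨⟨j, hj⟩, hget⟩ := List.mem_iff_get.mp hbβ
    have hall : ∀ r ∈ cs.leftInvSeq β, inP cs K (x⁻¹ * r * (x⁻¹)⁻¹) := by
      intro r hr
      have hrmem := key β hβred hβπ γ₀ hγ₀red hγ₀π.symm r hr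
      have h1 : inP cs K (x⁻¹ * r * x) := by
        refine inP_mono ?_ (lis_mem_inP hrmem)
        intro c hc
        exact ⟨γ₀, hγ₀red, hγ₀π.symm, hc⟩
      rwa [inv_inv]
    have := inP_conj_simple_of_word (cs := cs) (J := K) x⁻¹ hj hall
    rw [hget, inv_inv] at this
    exact this
  -- conjugation maps inP J into inP K
  have hconjJK : ∀ u, inP cs J u → inP cs K (x⁻¹ * u * x) := by
    have haux : ∀ δ : List B, (∀ b ∈ δ, b ∈ J) → inP cs K (x⁻¹ * π δ * x) := by
      intro δ
      induction δ with
      | nil =>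
        intro _
        have : x⁻¹ * π ([] : List B) * x = 1 := by
          rw [cs.wordProd_nil]
          group
        rw [this]
        exact inP_one
      | cons c δ ih =>
        intro hδ
        rw [cs.wordProd_cons]
        have heq : x⁻¹ * (cs.simple c * π δ) * x
            = (x⁻¹ * cs.simple c * x) * (x⁻¹ * π δ * x) := by group
        rw [heq]
        exact inP_mul (C3 c (hδ c (by simp))) (ih (fun b hb => hδ b (by simp [hb])))
    intro u hu
    obtain ⟨δ, hδ, rfl⟩ := hu
    exact haux δ hδ
  -- conjugation preserves length on inP J
  have S7 : ∀ u, inP cs J u → ℓ (x⁻¹ * u * x) = ℓ u := by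
    intro u hu
    have h1 : ℓ (u * x) = ℓ u + ℓ x := AD u hu
    have h2 : u * x = x * (x⁻¹ * u * x) := by group
    have h3 : inP cs K ((x⁻¹ * u * x)⁻¹) := inP_inv (hconjJK u hu)
    have h4 : ℓ ((x⁻¹ * u * x)⁻¹ * x⁻¹) = ℓ ((x⁻¹ * u * x)⁻¹) + ℓ x⁻¹ := ADK _ h3
    have h5 : ℓ (x * (x⁻¹ * u * x)) = ℓ (x⁻¹ * u * x) + ℓ x := by
      rw [← cs.length_inv (x * (x⁻¹ * u * x)), mul_inv_rev, h4, cs.length_inv, cs.length_inv]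
    rw [h2, h5] at h1
    omega
  -- final set equality
  ext z
  constructor
  · rintro ⟨k, hk, rfl⟩
    have hu : inP cs J (x * cs.simple k * x⁻¹) := C2 k hk
    have h1 : ℓ (x⁻¹ * (x * cs.simple k * x⁻¹) * x) = ℓ (x * cs.simple k * x⁻¹) := S7 _ hu
    have h2 : x⁻¹ * (x * cs.simple k * x⁻¹) * x = cs.simple k := by group
    rw [h2, cs.length_simple] at h1
    obtain ⟨b, hbJ, hub⟩ := inP_simple_eq hu h1.symm
    refine ⟨cs.simple b, ⟨b, hbJ, rfl⟩, ?_⟩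
    show x⁻¹ * cs.simple b * x = cs.simple k
    rw [← hub]
    group
  · rintro ⟨z', ⟨b, hbJ, rfl⟩, rfl⟩
    have hu' : inP cs K (x⁻¹ * cs.simple b * x) := C3 b hbJ
    have h1 : ℓ (x⁻¹ * cs.simple b * x) = ℓ (cs.simple b) := S7 _ (inP_simple hbJ)
    rw [cs.length_simple] at h1
    obtain ⟨k, hkK, huk⟩ := inP_simple_eq hu' h1
    show x⁻¹ * cs.simple b * x ∈ cs.simple '' K
    exact ⟨k, hkK, huk.symm⟩

end CoxAux

/-- If `w` has minimal length in its conjugacy class, `x ∈ X_{J(w)}` and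
`ℓ(x⁻¹ w x) = ℓ(w)`, then `J(x⁻¹ w x) = x⁻¹ J(w) x` (as sets of simple reflections). -/
theorem stmt_5 {B W : Type*} [Group W] [Finite W] {M : CoxeterMatrix B}
    (cs : CoxeterSystem M W) (w : W)
    (hmin : ∀ v : W, cs.length w ≤ cs.length (v⁻¹ * w * v))
    (x : W)
    (hx : ∀ b ∈ coxSupport cs w, cs.length x < cs.length (cs.simple b * x))
    (hlen : cs.length (x⁻¹ * w * x) = cs.length w) :
    cs.simple '' coxSupport cs (x⁻¹ * w * x) =
      (fun g => x⁻¹ * g * x) '' (cs.simple '' coxSupport cs w) :=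
  CoxAux.support_conj_eq (cs := cs) w x hx hlen
end

section
/- Let w have minimal length in its conjugacy class in a finite Coxeter group W. Then for v ∈ W, the equality J(v⁻¹wv) = D(v⁻¹) holds if and only if v is the longest element of W_{J(w)}. -/
open List

namespace StmtAux

variable {B W : Type*} [Group W] [DecidableEq W] {M : CoxeterMatrix B} (cs : CoxeterSystem M W)

local prefix:100 "s" => cs.simple
local prefix:100 "π" => cs.wordProd
local prefix:100 "ℓ" => cs.length
local prefix:100 "ris" => cs.rightInvSeq
local prefix:100 "lis" => cs.leftInvSeq

/-- The Bourbaki/Bjorner–Brenti permutation action on `W × ℤˣ` attached to a simple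
reflection. -/
def refPerm (i : B) : Equiv.Perm (W × ℤˣ) :=
  Function.Involutive.toPerm
    (fun p => (s i * p.1 * s i, if p.1 = s i then -p.2 else p.2))
    (by
      intro p
      by_cases h : p.1 = s i
      · refine Prod.ext ?_ ?_
        · simp [h]
        · simp [h, Prod.snd]
      · have h2 : ¬ (s i * p.1 * s i = s i) := by
          intro hc
          apply h
          have := congrArg (fun x => s i * x * s i) hc
          rw [← mul_assoc] at this
          simpa [mul_assoc] using this
        simp only [h2, if_neg, h]
        simp [← mul_assoc])

@[simp] lemma refPerm_apply (i : B) (p : W × ℤˣ) :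
    refPerm cs i p = (s i * p.1 * s i, if p.1 = s i then -p.2 else p.2) := rfl

lemma prod_map_refPerm (ω : List B) (p : W × ℤˣ) :
    ((ω.map (refPerm cs)).prod) p
      = (π ω * p.1 * (π ω)⁻¹, (-1) ^ ((ris ω).count p.1) * p.2) := by
  induction ω generalizing p with
  | nil => simp
  | cons i ω ih =>
    have hris : ris (i :: ω) = ((π ω)⁻¹ * (s i) * (π ω)) :: ris ω := rfl
    rw [List.map_cons, List.prod_cons]
    have hstep : (refPerm cs i * (ω.map (refPerm cs)).prod) p
        = refPerm cs i ((ω.map (refPerm cs)).prod p) := rfl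
    rw [hstep, ih, refPerm_apply]
    have hcond : (π ω * p.1 * (π ω)⁻¹ = s i) ↔ (p.1 = (π ω)⁻¹ * s i * π ω) := by
      constructor
      · intro h
        have := congrArg (fun x => (π ω)⁻¹ * x * (π ω)) h
        rw [← this]; group
      · intro h
        rw [h]; group
    rw [cs.wordProd_cons]
    refine Prod.ext ?_ ?_
    · simp [mul_assoc]
    · simp only [hris, List.count_cons]
      by_cases h : p.1 = (π ω)⁻¹ * s i * π ω
      · rw [if_pos (hcond.mpr h)]
        have hbeq : ((π ω)⁻¹ * s i * π ω == p.1) = true := by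
          simp [h]
        simp only [hbeq, if_pos, pow_succ]
        norm_num
      · rw [if_neg (fun hc => h (hcond.mp hc))]
        have hbeq : ((π ω)⁻¹ * s i * π ω == p.1) = false := by
          rw [beq_eq_false_iff_ne]
          exact fun hc => h hc.symm
        simp [hbeq]



open CoxeterSystem (alternatingWord)

lemma prod_map_alt {G : Type*} [Monoid G] (f : B → G) (i i' : B) (m : ℕ) :
    ((alternatingWord i i' (2*m)).map f).prod = (f i * f i') ^ m := by
  induction m with
  | zero => simp [CoxeterSystem.alternatingWord]
  | succ m ih =>
    have h1 : 2 * (m+1) = (2*m+1) + 1 := by ring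
    rw [h1, CoxeterSystem.alternatingWord_succ']
    rw [CoxeterSystem.alternatingWord_succ']
    have h2 : ¬ Even (2*m+1) := by simp [Nat.even_add_one, parity_simps]
    have h3 : Even (2*m) := even_two_mul m
    rw [if_neg h2, if_pos h3]
    simp only [List.map_cons, List.prod_cons, ih]
    rw [pow_succ']
    rw [mul_assoc]

lemma ris_alt (i i' : B) (m : ℕ) :
    ris (alternatingWord i i' m)
      = ((List.range m).reverse).map
          (fun n => (π (alternatingWord i i' n))⁻¹ * π (alternatingWord i i' (n+1))) := by
  induction m with
  | zero => simp [CoxeterSystem.alternatingWord]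
  | succ m ih =>
    rw [CoxeterSystem.alternatingWord_succ' i i' m]
    have hris : ris ((if Even m then i' else i) :: alternatingWord i i' m)
        = ((π (alternatingWord i i' m))⁻¹ * (s (if Even m then i' else i))
            * (π (alternatingWord i i' m))) :: ris (alternatingWord i i' m) := rfl
    rw [hris, ih]
    have hrange : (List.range (m+1)).reverse = m :: (List.range m).reverse := by
      rw [List.range_succ, List.reverse_append]; rfl
    rw [hrange, List.map_cons]
    congr 1
    have : s (if Even m then i' else i) * π (alternatingWord i i' m)
        = π (alternatingWord i i' (m+1)) := by
      rw [CoxeterSystem.alternatingWord_succ', cs.wordProd_cons]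
    rw [mul_assoc, this]

lemma ris_append (ω₁ ω₂ : List B) :
    ris (ω₁ ++ ω₂)
      = (ris ω₁).map (fun t => (π ω₂)⁻¹ * t * π ω₂) ++ ris ω₂ := by
  induction ω₁ with
  | nil => simp
  | cons i ω₁ ih =>
    have h1 : ris ((i :: ω₁) ++ ω₂)
        = ((π (ω₁ ++ ω₂))⁻¹ * s i * π (ω₁ ++ ω₂)) :: ris (ω₁ ++ ω₂) := rfl
    have h2 : ris (i :: ω₁) = ((π ω₁)⁻¹ * s i * π ω₁) :: ris ω₁ := rfl
    rw [h1, ih, h2, List.map_cons]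
    simp only [List.cons_append]
    congr 1
    rw [cs.wordProd_append]
    group

lemma alt_split (i i' : B) (n : ℕ) :
    ∀ m : ℕ, alternatingWord i i' (m + n)
      = alternatingWord (if Even n then i else i') (if Even n then i' else i) m
          ++ alternatingWord i i' n := by
  intro m
  induction m with
  | zero => simp [CoxeterSystem.alternatingWord]
  | succ m ih =>
    have h1 : m + 1 + n = (m + n) + 1 := by ring
    rw [h1, CoxeterSystem.alternatingWord_succ' i i' (m+n), ih,
      CoxeterSystem.alternatingWord_succ']
    rw [← List.cons_append]
    congr 2
    by_cases hn : Even n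
    · simp only [if_pos hn]
      by_cases hm : Even m
      · rw [if_pos (Nat.even_add.mpr (by tauto)), if_pos hm]
      · rw [if_neg (by rw [Nat.even_add]; tauto), if_neg hm]
    · simp only [if_neg hn]
      by_cases hm : Even m
      · rw [if_neg (by rw [Nat.even_add]; tauto), if_pos hm]
      · rw [if_pos (Nat.even_add.mpr (by tauto)), if_neg hm]

section DihedralAlgebra

private lemma conj_pow_invol (b x : W) (hb : b * b = 1) (k : ℕ) :
    b * x ^ k * b = (b * x * b) ^ k := by
  induction k with
  | zero => simpa using hb
  | succ k ih =>
    rw [pow_succ, pow_succ, ← ih]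
    have h1 : b * x ^ k * b * (b * x * b) = b * x ^ k * (b * b) * x * b := by group
    rw [h1, hb, mul_one, mul_assoc (b * x ^ k) x b, ← mul_assoc]
    group

variable (i i' : B)

private lemma sps (k : ℕ) :
    s i' * (s i * s i') ^ k * s i' = ((s i * s i') ^ k)⁻¹ := by
  rw [conj_pow_invol (s i') ((s i * s i')) (cs.simple_mul_simple_self i') k]
  have h : s i' * (s i * s i') * s i' = (s i * s i')⁻¹ := by
    rw [mul_inv_rev, cs.inv_simple, cs.inv_simple]
    have : s i' * (s i * s i') * s i' = s i' * s i * (s i' * s i') := by group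
    rw [this, cs.simple_mul_simple_self, mul_one]
  rw [h, inv_pow]

private lemma aps (k : ℕ) :
    s i * (s i * s i') ^ k * s i = ((s i * s i') ^ k)⁻¹ := by
  rw [conj_pow_invol (s i) ((s i * s i')) (cs.simple_mul_simple_self i) k]
  have h : s i * (s i * s i') * s i = (s i * s i')⁻¹ := by
    rw [mul_inv_rev, cs.inv_simple, cs.inv_simple]
    have : s i * (s i * s i') * s i = (s i * s i) * (s i' * s i) := by group
    rw [this, cs.simple_mul_simple_self, one_mul]
  rw [h, inv_pow]

private lemma sps' (k : ℕ) :
    s i' * (s i * s i') ^ k = ((s i * s i') ^ k)⁻¹ * s i' := by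
  have h := sps cs i i' k
  calc s i' * (s i * s i') ^ k
      = (s i' * (s i * s i') ^ k * s i') * s i' := by
        rw [mul_assoc _ (s i') (s i'), cs.simple_mul_simple_self, mul_one]
    _ = ((s i * s i') ^ k)⁻¹ * s i' := by rw [h]

private lemma aps' (k : ℕ) :
    s i * ((s i * s i') ^ k)⁻¹ = (s i * s i') ^ k * s i := by
  have h := aps cs i i' k
  have h2 : s i * ((s i * s i') ^ k)⁻¹ * s i = (s i * s i') ^ k := by
    have h3 := congrArg Inv.inv h
    simp only [mul_inv_rev, cs.inv_simple, inv_inv] at h3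
    rw [← mul_assoc] at h3
    exact h3
  calc s i * ((s i * s i') ^ k)⁻¹
      = (s i * ((s i * s i') ^ k)⁻¹ * s i) * s i := by
        rw [mul_assoc _ (s i) (s i), cs.simple_mul_simple_self, mul_one]
    _ = (s i * s i') ^ k * s i := by rw [h2]

/-- The key dihedral commutation. -/
lemma alt_comm (m : ℕ) (hm : (s i * s i') ^ m = 1) (n : ℕ) :
    π (alternatingWord (if Even m then i else i') (if Even m then i' else i) n)
        * π (alternatingWord i i' m)
      = π (alternatingWord i i' m) * π (alternatingWord i i' n) := by
  have hps := cs.prod_alternatingWord_eq_mul_pow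
  by_cases hme : Even m
  · have hme' : Even m := hme
    obtain ⟨k, hk⟩ := hme
    have hmdiv : m / 2 = k := by omega
    have hz2 : ((s i * s i') ^ k) * ((s i * s i') ^ k) = 1 := by
      rw [← pow_add, (by omega : k + k = m), hm]
    have hzinv : ((s i * s i') ^ k)⁻¹ = (s i * s i') ^ k :=
      inv_eq_of_mul_eq_one_right hz2
    have hbz : s i' * (s i * s i') ^ k = (s i * s i') ^ k * s i' := by
      rw [sps' cs i i' k, hzinv]
    rw [if_pos hme', if_pos hme', hps i i' n, hps i i' m, if_pos hme', one_mul, hmdiv]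
    by_cases hne : Even n
    · rw [if_pos hne, one_mul, ← pow_add, ← pow_add, Nat.add_comm]
    · rw [if_neg hne]
      rw [mul_assoc (s i'), ← pow_add]
      rw [← mul_assoc ((s i * s i') ^ k) (s i'), ← hbz, mul_assoc (s i'), ← pow_add,
        Nat.add_comm]
  · have hme' : ¬ Even m := hme
    obtain ⟨k, hk⟩ := Nat.not_even_iff_odd.mp hme
    have hmdiv : m / 2 = k := by omega
    have hw : s i' * s i = (s i * s i')⁻¹ := by
      rw [mul_inv_rev, cs.inv_simple, cs.inv_simple]
    have hzz : ∀ r : ℕ, (s i * s i') ^ (m + r) = (s i * s i') ^ r := by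
      intro r; rw [pow_add, hm, one_mul]
    rw [if_neg hme', if_neg hme', hps i' i n, hps i i' m, hps i i' n, if_neg hme', hmdiv,
      hw, inv_pow]
    by_cases hne : Even n
    · simp only [if_pos hne, one_mul]
      rw [← mul_assoc, ← sps' cs i i' (n/2), mul_assoc (s i'), ← pow_add,
        mul_assoc (s i'), ← pow_add, Nat.add_comm k (n/2)]
    · simp only [if_neg hne]
      have hlhs : s i * ((s i * s i') ^ (n/2))⁻¹ * (s i' * (s i * s i') ^ k)
          = (s i * s i') ^ (n/2 + 1 + k) := by
        rw [aps' cs i i' (n/2)]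
        have h4 : (s i * s i') ^ (n / 2) * s i * (s i' * (s i * s i') ^ k)
            = (s i * s i') ^ (n/2) * (s i * s i') * (s i * s i') ^ k := by group
        rw [h4, ← pow_succ, ← pow_add]
      have hrhs : s i' * (s i * s i') ^ k * (s i' * (s i * s i') ^ (n/2))
          = ((s i * s i') ^ k)⁻¹ * (s i * s i') ^ (n/2) := by
        rw [sps' cs i i' k]
        have h5 : ((s i * s i') ^ k)⁻¹ * s i' * (s i' * (s i * s i') ^ (n/2))
            = ((s i * s i') ^ k)⁻¹ * (s i' * s i') * (s i * s i') ^ (n/2) := by group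
        rw [h5, cs.simple_mul_simple_self, mul_one]
      rw [hlhs, hrhs, eq_inv_mul_iff_mul_eq, ← pow_add,
        (by omega : k + (n / 2 + 1 + k) = m + n / 2), hzz]

end DihedralAlgebra

lemma refPerm_liftable : M.IsLiftable (refPerm cs) := by
  intro i i'
  by_cases h0 : M i i' = 0
  · rw [h0, pow_zero]
  have hsm : (s i * s i') ^ (M i i') = 1 := cs.simple_mul_simple_pow i i'
  have hprod : (refPerm cs i * refPerm cs i') ^ (M i i')
      = ((alternatingWord i i' (2 * M i i')).map (refPerm cs)).prod :=
    (prod_map_alt (refPerm cs) i i' (M i i')).symm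
  rw [hprod]
  have hsplit : alternatingWord i i' (2 * M i i')
      = alternatingWord (if Even (M i i') then i else i') (if Even (M i i') then i' else i)
          (M i i') ++ alternatingWord i i' (M i i') := by
    rw [(by ring : 2 * M i i' = M i i' + M i i')]
    exact alt_split i i' (M i i') (M i i')
  have hpi1 : π (alternatingWord i i' (2 * M i i')) = 1 := by
    rw [cs.prod_alternatingWord_eq_mul_pow, if_pos (even_two_mul _),
      (by omega : 2 * M i i' / 2 = M i i'), hsm, one_mul]
  have hconj : (ris (alternatingWord (if Even (M i i') then i else i')
        (if Even (M i i') then i' else i) (M i i'))).map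
        (fun t => (π (alternatingWord i i' (M i i')))⁻¹ * t * π (alternatingWord i i' (M i i')))
      = ris (alternatingWord i i' (M i i')) := by
    rw [ris_alt, ris_alt, List.map_map]
    congr 1
    funext n
    simp only [Function.comp_apply]
    have hc1 := alt_comm cs i i' (M i i') hsm n
    have hc2 := alt_comm cs i i' (M i i') hsm (n+1)
    set P := π (alternatingWord i i' (M i i'))
    set pn := π (alternatingWord i i' n)
    set pn1 := π (alternatingWord i i' (n+1))
    set qn := π (alternatingWord (if Even (M i i') then i else i')
      (if Even (M i i') then i' else i) n)
    set qn1 := π (alternatingWord (if Even (M i i') then i else i')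
      (if Even (M i i') then i' else i) (n+1))
    have e1 : qn = P * pn * P⁻¹ := by rw [eq_mul_inv_iff_mul_eq]; exact hc1
    have e2 : qn1 = P * pn1 * P⁻¹ := by rw [eq_mul_inv_iff_mul_eq]; exact hc2
    rw [e1, e2]
    group
  apply Equiv.ext
  intro p
  rw [prod_map_refPerm, hpi1]
  have hcount : (ris (alternatingWord i i' (2 * M i i'))).count p.1
      = 2 * ((ris (alternatingWord i i' (M i i'))).count p.1) := by
    rw [hsplit, ris_append, hconj, List.count_append]
    omega
  rw [hcount, pow_mul]
  simp

/-- The Bourbaki homomorphism into permutations of `W × ℤˣ`. -/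
def refHom : W →* Equiv.Perm (W × ℤˣ) := cs.lift ⟨refPerm cs, refPerm_liftable cs⟩

lemma refHom_simple (i : B) : refHom cs (s i) = refPerm cs i :=
  cs.lift_apply_simple (refPerm_liftable cs) i

lemma refHom_wordProd (ω : List B) :
    refHom cs (π ω) = ((ω.map (refPerm cs))).prod := by
  induction ω with
  | nil => simp [cs.wordProd_nil]
  | cons i ω ih => rw [cs.wordProd_cons, map_mul, ih, refHom_simple, List.map_cons,
      List.prod_cons]

/-- The sign `μ(w,t)`; equals `-1` iff `t` is a right inversion of `w`. -/
def mu (w t : W) : ℤˣ := (refHom cs w (t, 1)).2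

lemma mu_wordProd (ω : List B) (t : W) :
    mu cs (π ω) t = (-1) ^ ((ris ω).count t) := by
  unfold mu
  rw [refHom_wordProd, prod_map_refPerm]
  simp

lemma refHom_apply (w : W) (p : W × ℤˣ) :
    refHom cs w p = (w * p.1 * w⁻¹, p.2 * mu cs w p.1) := by
  obtain ⟨ω, rfl⟩ := cs.wordProd_surjective w
  rw [refHom_wordProd, prod_map_refPerm]
  refine Prod.ext rfl ?_
  rw [show mu cs (π ω) p.1 = (-1) ^ ((ris ω).count p.1) from mu_wordProd cs ω p.1]
  simp [mul_comm]

lemma mu_mul (u v t : W) : mu cs (u * v) t = mu cs v t * mu cs u (v * t * v⁻¹) := by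
  have h := congrArg (fun (f : Equiv.Perm (W × ℤˣ)) => f (t, 1)) (map_mul (refHom cs) u v)
  simp only [Equiv.Perm.mul_apply] at h
  rw [refHom_apply cs (u*v), refHom_apply cs v, refHom_apply cs u] at h
  have h2 := congrArg Prod.snd h
  simp only at h2
  simpa using h2

/-- The set of right inversions of `w`. -/
def NN (w : W) : Set W := {t | mu cs w t = -1}

lemma mem_NN_iff_mem_ris {ω : List B} (hω : cs.IsReduced ω) {t : W} :
    t ∈ NN cs (π ω) ↔ t ∈ ris ω := by
  have hmu := mu_wordProd cs ω t
  constructor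
  · intro ht
    by_contra hmem
    have h1 : mu cs (π ω) t = 1 := by
      rw [hmu, List.count_eq_zero_of_not_mem hmem, pow_zero]
    have ht' : mu cs (π ω) t = -1 := ht
    rw [h1] at ht'
    exact (by decide : (1:ℤˣ) ≠ -1) ht'
  · intro hmem
    have hcount : (ris ω).count t = 1 :=
      List.count_eq_one_of_mem hω.nodup_rightInvSeq hmem
    show mu cs (π ω) t = -1
    rw [hmu, hcount, pow_one]

lemma NN_wordProd {ω : List B} (hω : cs.IsReduced ω) :
    NN cs (π ω) = {t | t ∈ ris ω} := by
  ext t; exact mem_NN_iff_mem_ris cs hω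

lemma ncard_NN (w : W) : (NN cs w).ncard = ℓ w := by
  obtain ⟨ω, hred, rfl⟩ : ∃ ω, cs.IsReduced ω ∧ w = π ω := by
    obtain ⟨ω, h1, h2⟩ := cs.exists_reduced_word' w
    exact ⟨ω, h1, h2⟩
  rw [NN_wordProd cs hred]
  have : {t | t ∈ ris ω} = ((ris ω).toFinset : Set W) := by
    ext t; simp
  rw [this, Set.ncard_coe_finset, List.toFinset_card_of_nodup hred.nodup_rightInvSeq,
    cs.length_rightInvSeq]
  exact hred.symm

lemma lis_eq_map_conj (ω : List B) :
    lis ω = (ris ω).map (fun t => π ω * t * (π ω)⁻¹) := by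
  induction ω with
  | nil => simp
  | cons i ω ih =>
    have hl : lis (i :: ω) = s i :: (lis ω).map (MulAut.conj (s i)) := rfl
    have hr : ris (i :: ω) = ((π ω)⁻¹ * s i * π ω) :: ris ω := rfl
    rw [hl, hr, List.map_cons, ih, List.map_map]
    congr 1
    · rw [cs.wordProd_cons]; group
    · apply List.map_congr_left
      intro t _
      simp only [Function.comp_apply, MulAut.conj_apply, cs.wordProd_cons]
      group

private lemma conj_inj (a b : W) : Function.Injective (fun r : W => a * r * b) := by
  intro x y hxy
  simp only at hxy
  exact mul_left_cancel (mul_right_cancel hxy)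

lemma mu_self {t : W} (ht : cs.IsReflection t) : mu cs t t = -1 := by
  obtain ⟨w, i, rfl⟩ := ht
  obtain ⟨α, rfl⟩ := cs.wordProd_surjective w
  have hω : π (α ++ ([i] ++ α.reverse)) = π α * s i * (π α)⁻¹ := by
    rw [cs.wordProd_append, cs.wordProd_append, cs.wordProd_singleton, cs.wordProd_reverse]
    group
  have key : mu cs (π (α ++ ([i] ++ α.reverse))) (π α * s i * (π α)⁻¹) = -1 := by
    rw [mu_wordProd]
    have h1 : ris (α ++ ([i] ++ α.reverse))
        = (ris α).map (fun r => (π ([i] ++ α.reverse))⁻¹ * r * π ([i] ++ α.reverse))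
            ++ ris ([i] ++ α.reverse) := ris_append cs α _
    have h2 : ris ([i] ++ α.reverse)
        = [π α * s i * (π α)⁻¹] ++ ris α.reverse := by
      rw [ris_append cs [i] α.reverse]
      congr 1
      have h3 : ris [i] = [s i] := by simp
      rw [h3, List.map_singleton, cs.wordProd_reverse, inv_inv]
    have hc : π ([i] ++ α.reverse) = s i * (π α)⁻¹ := by
      rw [cs.wordProd_append, cs.wordProd_singleton, cs.wordProd_reverse]
    have hcount1 : ((ris α).map
        (fun r => (π ([i] ++ α.reverse))⁻¹ * r * π ([i] ++ α.reverse))).count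
          (π α * s i * (π α)⁻¹)
        = (ris α).count (s i) := by
      rw [hc]
      have ht' : π α * s i * (π α)⁻¹
          = (fun r : W => (s i * (π α)⁻¹)⁻¹ * r * (s i * (π α)⁻¹)) (s i) := by
        simp only []; group
      rw [ht']
      exact List.count_map_of_injective _ _ (conj_inj _ _) _
    have hcount3 : (ris α.reverse).count (π α * s i * (π α)⁻¹)
        = (ris α).count (s i) := by
      rw [cs.rightInvSeq_reverse, List.count_reverse, lis_eq_map_conj]
      have ht' : π α * s i * (π α)⁻¹ = (fun r : W => π α * r * (π α)⁻¹) (s i) := rfl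
      rw [ht']
      exact List.count_map_of_injective _ _ (conj_inj _ _) _
    rw [h1, List.count_append, hcount1, h2, List.count_append, hcount3]
    have h4 : List.count (π α * s i * (π α)⁻¹) [π α * s i * (π α)⁻¹] = 1 := by simp
    rw [h4]
    exact Odd.neg_one_pow ⟨(ris α).count (s i), by ring⟩
  rw [hω] at key
  exact key

/-- Strong exchange: inversion set members are reflections shortening `w`. -/
lemma mem_NN_sub {w t : W} (ht : t ∈ NN cs w) :
    cs.IsReflection t ∧ ℓ (w * t) < ℓ w := by
  obtain ⟨ω, hred, rfl⟩ : ∃ ω, cs.IsReduced ω ∧ w = π ω := by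
    obtain ⟨ω, h1, h2⟩ := cs.exists_reduced_word' w
    exact ⟨ω, h1, h2⟩
  have hmem := (mem_NN_iff_mem_ris cs hred).mp ht
  exact cs.isRightInversion_of_mem_rightInvSeq hred hmem

/-- Strong exchange characterization of the inversion set. -/
lemma mem_NN_iff (w t : W) :
    t ∈ NN cs w ↔ cs.IsReflection t ∧ ℓ (w * t) < ℓ w := by
  constructor
  · exact mem_NN_sub cs
  · rintro ⟨href, hlt⟩
    by_contra hne
    have h1 : mu cs w t = 1 := by
      rcases Int.units_eq_one_or (mu cs w t) with h | h
      · exact h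
      · exact absurd h hne
    have h2 : mu cs ((w * t) * t) t = mu cs t t * mu cs (w * t) (t * t * t⁻¹) :=
      mu_mul cs (w * t) t t
    rw [href.mul_self, one_mul, href.inv] at h2
    rw [mul_assoc, href.mul_self, mul_one] at h2
    rw [h1, mu_self cs href] at h2
    have h4 : mu cs (w * t) t = -1 := by
      rcases Int.units_eq_one_or (mu cs (w * t) t) with h | h
      · rw [h] at h2; exact absurd h2 (by decide)
      · exact h
    have h5 := (mem_NN_sub cs (show t ∈ NN cs (w * t) from h4)).2
    rw [mul_assoc, href.mul_self, mul_one] at h5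
    omega

lemma NN_one : NN cs 1 = (∅ : Set W) := by
  ext t
  rw [mem_NN_iff]
  simp

lemma exists_simple_mem_NN {w : W} (hw : w ≠ 1) : ∃ i : B, s i ∈ NN cs w := by
  obtain ⟨i, hi⟩ := cs.exists_rightDescent_of_ne_one hw
  exact ⟨i, (mem_NN_iff cs w (s i)).mpr ⟨cs.isReflection_simple i, hi⟩⟩

lemma mem_lis_of_left_inversion {ω : List B} (hred : cs.IsReduced ω) {t : W}
    (href : cs.IsReflection t) (hlt : ℓ (t * π ω) < ℓ (π ω)) : t ∈ lis ω := by
  have h1 : ℓ ((π ω.reverse) * t) < ℓ (π ω.reverse) := by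
    rw [cs.wordProd_reverse]
    have e1 : ℓ ((π ω)⁻¹ * t) = ℓ (t * π ω) := by
      rw [← cs.length_inv ((π ω)⁻¹ * t), mul_inv_rev, inv_inv, href.inv]
    rw [e1, cs.length_inv]
    exact hlt
  have h2 : t ∈ NN cs (π ω.reverse) :=
    (mem_NN_iff cs _ t).mpr ⟨href, h1⟩
  have h3 := (mem_NN_iff_mem_ris cs ((cs.isReduced_reverse_iff ω).mpr hred)).mp h2
  rw [cs.rightInvSeq_reverse] at h3
  exact List.mem_reverse.mp h3

/-- Left exchange property. -/
lemma left_exchange {ω : List B} (hred : cs.IsReduced ω) {t : W}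
    (href : cs.IsReflection t) (hlt : ℓ (t * π ω) < ℓ (π ω)) :
    ∃ j < ω.length, t = (lis ω).getD j 1 ∧ t * π ω = π (ω.eraseIdx j) := by
  have hmem := mem_lis_of_left_inversion cs hred href hlt
  obtain ⟨j, hj, hget⟩ := List.mem_iff_getElem.mp hmem
  have hj' : j < ω.length := by
    have := cs.length_leftInvSeq ω
    omega
  have hgetD : (lis ω).getD j 1 = t := by
    rw [List.getD_eq_getElem _ 1 hj, hget]
  refine ⟨j, hj', hgetD.symm, ?_⟩
  rw [hgetD.symm] at *
  exact cs.getD_leftInvSeq_mul_wordProd ω j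

/-- Any word can be reduced to a reduced word using only its own letters. -/
lemma reduce_word (ω : List B) :
    ∃ ω' : List B, cs.IsReduced ω' ∧ π ω' = π ω ∧ ∀ b ∈ ω', b ∈ ω := by
  generalize hn : ω.length = n
  induction n using Nat.strong_induction_on generalizing ω with
  | _ n ih =>
    by_cases hred : cs.IsReduced ω
    · exact ⟨ω, hred, rfl, fun b hb => hb⟩
    cases ω with
    | nil => exact absurd (by simp [CoxeterSystem.IsReduced]) hred
    | cons i ρ =>
      obtain ⟨ρ', hρ'red, hρ'prod, hρ'mem⟩ := ih ρ.length (by simp [← hn]) ρ rfl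
      by_cases hred2 : cs.IsReduced (i :: ρ')
      · refine ⟨i :: ρ', hred2, ?_, ?_⟩
        · rw [cs.wordProd_cons, cs.wordProd_cons, hρ'prod]
        · intro b hb
          rcases List.mem_cons.mp hb with h | h
          · exact h ▸ List.mem_cons_self (a := i) (l := ρ)
          · exact List.mem_cons_of_mem i (hρ'mem b h)
      · -- ℓ (s i * π ρ') < ℓ (π ρ'), use exchange
        have hlen : ℓ (s i * π ρ') < ℓ (π ρ') := by
          have h1 : ℓ (s i * π ρ') ≠ ℓ (π ρ') := cs.length_simple_mul_ne (π ρ') i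
          have h2 : ℓ (s i * π ρ') ≤ ℓ (π ρ') + 1 := by
            have := cs.length_mul_le (s i) (π ρ')
            rw [cs.length_simple] at this
            omega
          have h3 : ¬ (ℓ (s i * π ρ') = ℓ (π ρ') + 1) := by
            intro hc
            apply hred2
            unfold CoxeterSystem.IsReduced
            rw [cs.wordProd_cons, hc, List.length_cons, hρ'red]
          omega
        obtain ⟨j, hj, _, herase⟩ :=
          left_exchange cs hρ'red (cs.isReflection_simple i) hlen
        have hprod : π (ρ'.eraseIdx j) = π (i :: ρ) := by
          rw [← herase, cs.wordProd_cons, hρ'prod]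
        have hlen2 : (ρ'.eraseIdx j).length < n := by
          rw [List.length_eraseIdx_of_lt hj]
          have h4 : ρ'.length = ℓ (π ρ') := hρ'red.symm
          have h5 : ℓ (π ρ') ≤ ρ.length := hρ'prod ▸ cs.length_wordProd_le ρ
          simp at hn
          omega
        obtain ⟨ω', hred', hprod', hmem'⟩ :=
          ih (ρ'.eraseIdx j).length hlen2 (ρ'.eraseIdx j) rfl
        refine ⟨ω', hred', by rw [hprod', hprod], ?_⟩
        intro b hb
        have := hmem' b hb
        have hmem2 : b ∈ ρ' := List.mem_of_mem_eraseIdx this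
        exact List.mem_cons_of_mem i (hρ'mem b hmem2)

/-- The standard parabolic subgroup generated by simple reflections indexed by `K`. -/
def WP (K : Set B) : Subgroup W := Subgroup.closure (cs.simple '' K)

lemma wordProd_mem_WP {K : Set B} {ω : List B} (hω : ∀ b ∈ ω, b ∈ K) :
    π ω ∈ WP cs K := by
  induction ω with
  | nil => simp [cs.wordProd_nil, Subgroup.one_mem]
  | cons i ω ih =>
    rw [cs.wordProd_cons]
    exact mul_mem (Subgroup.subset_closure ⟨i, hω i (List.mem_cons_self (a := i) (l := ω)), rfl⟩)
      (ih (fun b hb => hω b (List.mem_cons_of_mem i hb)))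

lemma mem_WP_iff {K : Set B} {w : W} :
    w ∈ WP cs K ↔ ∃ ω : List B, (∀ b ∈ ω, b ∈ K) ∧ π ω = w := by
  constructor
  · intro hw
    induction hw using Subgroup.closure_induction with
    | mem x hx =>
      obtain ⟨b, hb, rfl⟩ := hx
      exact ⟨[b], by simpa using hb, cs.wordProd_singleton b⟩
    | one => exact ⟨[], by simp, cs.wordProd_nil⟩
    | mul x y _ _ hx hy =>
      obtain ⟨ω₁, h1, rfl⟩ := hx
      obtain ⟨ω₂, h2, rfl⟩ := hy
      exact ⟨ω₁ ++ ω₂, by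
        intro b hb
        rcases List.mem_append.mp hb with h | h
        · exact h1 b h
        · exact h2 b h, cs.wordProd_append ω₁ ω₂⟩
    | inv x _ hx =>
      obtain ⟨ω, h1, rfl⟩ := hx
      exact ⟨ω.reverse, fun b hb => h1 b (List.mem_reverse.mp hb), cs.wordProd_reverse ω⟩
  · rintro ⟨ω, hmem, rfl⟩
    exact wordProd_mem_WP cs hmem

lemma exists_reduced_word_of_mem_WP {K : Set B} {w : W} (hw : w ∈ WP cs K) :
    ∃ ω : List B, cs.IsReduced ω ∧ (∀ b ∈ ω, b ∈ K) ∧ π ω = w := by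
  obtain ⟨ω, hmem, rfl⟩ := (mem_WP_iff cs).mp hw
  obtain ⟨ω', hred, hprod, hmem'⟩ := reduce_word cs ω
  exact ⟨ω', hred, fun b hb => hmem b (hmem' b hb), hprod⟩

/-- A set of indices is saturated if it is closed under equality of simple reflections. -/
def Saturated (K : Set B) : Prop := ∀ b c : B, cs.simple b = cs.simple c → b ∈ K → c ∈ K

lemma mem_WP_coxSupport (w : W) : w ∈ WP cs (coxSupport cs w) := by
  obtain ⟨ω, hred, hw⟩ := cs.exists_reduced_word' w
  rw [hw]
  exact wordProd_mem_WP cs (fun b hb => ⟨ω, hred, rfl, hb⟩)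

lemma saturated_coxSupport (w : W) : Saturated cs (coxSupport cs w) := by
  intro b c hbc hb
  obtain ⟨ω, hred, hπ, hmem⟩ := hb
  obtain ⟨ω₁, ω₂, rfl⟩ := List.append_of_mem hmem
  refine ⟨ω₁ ++ c :: ω₂, ?_, ?_, by simp⟩
  · unfold CoxeterSystem.IsReduced at hred ⊢
    rw [cs.wordProd_append, cs.wordProd_cons, ← hbc, ← cs.wordProd_cons, ← cs.wordProd_append]
    rw [hred]
    simp
  · rw [cs.wordProd_append, cs.wordProd_cons, ← hbc, ← cs.wordProd_cons, ← cs.wordProd_append]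
    exact hπ

lemma simple_mem_WP {K : Set B} (sat : Saturated cs K) {b : B} (h : s b ∈ WP cs K) :
    b ∈ K := by
  obtain ⟨ω, hred, hmem, hπ⟩ := exists_reduced_word_of_mem_WP cs h
  have hlen : ω.length = 1 := by
    have h1 : ℓ (π ω) = ω.length := hred
    rw [hπ, cs.length_simple] at h1
    omega
  obtain ⟨c, rfl⟩ := List.length_eq_one_iff.mp hlen
  have hc : π [c] = s c := cs.wordProd_singleton c
  rw [hc] at hπ
  exact sat c b hπ (hmem c (by simp))

lemma coxSupport_subset_of_mem_WP {K : Set B} (sat : Saturated cs K) :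
    ∀ w : W, w ∈ WP cs K → coxSupport cs w ⊆ K := by
  have main : ∀ n : ℕ, ∀ w : W, ℓ w = n → w ∈ WP cs K → coxSupport cs w ⊆ K := by
    intro n
    induction n using Nat.strong_induction_on with
    | _ n ih =>
      intro w hlen hw b hb
      obtain ⟨ω, hred, hπ, hmem⟩ := hb
      rcases Nat.eq_zero_or_pos n with h0 | hpos
      · exfalso
        have : w = 1 := cs.length_eq_zero_iff.mp (by rw [hlen, h0])
        rw [this] at hπ
        have : ω.length = 0 := by
          have h1 : ℓ (π ω) = ω.length := hred
          rw [hπ] at h1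
          simp at h1
          omega
        rw [List.length_eq_zero_iff.mp this] at hmem
        simp at hmem
      obtain ⟨κ, hκred, hκmem, hκπ⟩ := exists_reduced_word_of_mem_WP cs hw
      cases κ with
      | nil =>
        exfalso
        rw [cs.wordProd_nil] at hκπ
        rw [← hκπ] at hlen
        simp at hlen
        omega
      | cons k₀ κt =>
        have hk₀K : k₀ ∈ K := hκmem k₀ (by simp)
        have hdesc : ℓ (s k₀ * w) < ℓ w := by
          have h1 : s k₀ * w = π κt := by
            rw [← hκπ, cs.wordProd_cons, ← mul_assoc, cs.simple_mul_simple_self, one_mul]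
          rw [h1]
          have h2 : ℓ (π κt) ≤ κt.length := cs.length_wordProd_le κt
          have h3 : (k₀ :: κt).length = ℓ w := by rw [← hκπ]; exact hκred.symm
          simp at h3
          omega
        have hdescω : ℓ (s k₀ * π ω) < ℓ (π ω) := by rw [hπ]; exact hdesc
        obtain ⟨j, hj, hgetD, herase⟩ :=
          left_exchange cs hred (cs.isReflection_simple k₀) hdescω
        have hw' : s k₀ * w ∈ WP cs K := by
          refine mul_mem (Subgroup.subset_closure ⟨k₀, hk₀K, rfl⟩) hw
        have hlen' : ℓ (s k₀ * w) = n - 1 := by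
          have h4 : ℓ w ≤ 1 + ℓ (s k₀ * w) := by
            have h5 := cs.length_mul_le (s k₀) (s k₀ * w)
            rw [← mul_assoc, cs.simple_mul_simple_self, one_mul, cs.length_simple] at h5
            omega
          omega
        have hred' : cs.IsReduced (ω.eraseIdx j) := by
          unfold CoxeterSystem.IsReduced
          rw [← herase, hπ, List.length_eraseIdx_of_lt hj, hlen']
          have hωn : ω.length = n := by rw [← hlen, ← hπ]; exact hred.symm
          omega
        have hsub : coxSupport cs (s k₀ * w) ⊆ K := by
          apply ih (n-1) (by omega) (s k₀ * w) hlen' hw'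
        have hsubmem : ∀ c ∈ ω.eraseIdx j, c ∈ K := by
          intro c hc
          apply hsub
          exact ⟨ω.eraseIdx j, hred', by rw [← herase, hπ], hc⟩
        -- either b survives in the erased word, or b is the erased letter
        have hsplit : b ∈ ω.eraseIdx j ∨ b = ω[j] := by
          rw [List.eraseIdx_eq_take_drop_succ]
          have hω : ω = ω.take j ++ ω.drop j := (List.take_append_drop j ω).symm
          have hdropj : ω.drop j = ω[j] :: ω.drop (j+1) := List.drop_eq_getElem_cons hj
          rw [hω] at hmem
          rcases List.mem_append.mp hmem with h | h
          · left; exact List.mem_append.mpr (Or.inl h)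
          · rw [hdropj] at h
            rcases List.mem_cons.mp h with h | h
            · right; exact h
            · left; exact List.mem_append.mpr (Or.inr h)
        rcases hsplit with h | h
        · exact hsubmem b h
        · -- b = ω[j] : use the formula for lis entries
          have hget : ω[j]? = some ω[j] := by
            rw [List.getElem?_eq_getElem hj]
          have hformula := cs.getD_leftInvSeq ω j
          rw [hget] at hformula
          simp only [Option.map_some, Option.getD_some] at hformula
          rw [← hgetD] at hformula
          have hsb : s (ω[j]) = (π (ω.take j))⁻¹ * s k₀ * π (ω.take j) := by
            rw [hformula]
            group
          have htakeK : ∀ c ∈ ω.take j, c ∈ K := by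
            intro c hc
            apply hsubmem
            rw [List.eraseIdx_eq_take_drop_succ]
            exact List.mem_append.mpr (Or.inl hc)
          have hsbmem : s (ω[j]) ∈ WP cs K := by
            rw [hsb]
            have h1 : π (ω.take j) ∈ WP cs K := wordProd_mem_WP cs htakeK
            have h2 : s k₀ ∈ WP cs K := Subgroup.subset_closure ⟨k₀, hk₀K, rfl⟩
            exact mul_mem (mul_mem (inv_mem h1) h2) h1
          rw [h]
          exact simple_mem_WP cs sat hsbmem
  intro w hw
  exact main (ℓ w) w rfl hw

/-- The reflections lying in the standard parabolic `WP K`. -/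
def TK (K : Set B) : Set W := {t | cs.IsReflection t ∧ t ∈ WP cs K}

lemma ris_mem_WP {K : Set B} {κ : List B} (hkk : ∀ b ∈ κ, b ∈ K) :
    ∀ t ∈ ris κ, t ∈ WP cs K := by
  induction κ with
  | nil => simp
  | cons i κ ih =>
    intro t ht
    have hcons : ris (i :: κ) = ((π κ)⁻¹ * s i * π κ) :: ris κ := rfl
    rw [hcons] at ht
    rcases List.mem_cons.mp ht with h | h
    · rw [h]
      have h1 : π κ ∈ WP cs K :=
        wordProd_mem_WP cs (fun b hb => hkk b (List.mem_cons_of_mem i hb))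
      have h2 : s i ∈ WP cs K :=
        Subgroup.subset_closure ⟨i, hkk i (List.mem_cons_self (a := i) (l := κ)), rfl⟩
      exact mul_mem (mul_mem (inv_mem h1) h2) h1
    · exact ih (fun b hb => hkk b (List.mem_cons_of_mem i hb)) t h

lemma NN_subset_TK {K : Set B} {z : W} (hz : z ∈ WP cs K) :
    NN cs z ⊆ TK cs K := by
  obtain ⟨κ, hred, hmem, hπ⟩ := exists_reduced_word_of_mem_WP cs hz
  intro t ht
  rw [← hπ] at ht
  have h1 := (mem_NN_iff_mem_ris cs hred).mp ht
  exact ⟨cs.isReflection_of_mem_rightInvSeq κ h1, ris_mem_WP cs hmem t h1⟩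

lemma conj_mem_TK_iff {K : Set B} {z : W} (hz : z ∈ WP cs K) (t : W) :
    z⁻¹ * t * z ∈ TK cs K ↔ t ∈ TK cs K := by
  constructor
  · rintro ⟨h1, h2⟩
    constructor
    · have := (cs.isReflection_conj_iff z⁻¹ t).mp (by
        rw [inv_inv]; exact h1)
      exact this
    · have h3 : t = z * (z⁻¹ * t * z) * z⁻¹ := by group
      rw [h3]
      exact mul_mem (mul_mem hz h2) (inv_mem hz)
  · rintro ⟨h1, h2⟩
    constructor
    · have h4 := (cs.isReflection_conj_iff z⁻¹ t).mpr h1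
      rwa [inv_inv] at h4
    · exact mul_mem (mul_mem (inv_mem hz) h2) hz

-- Pointwise cocycle case lemmas.
lemma mu_neg_one_or (w t : W) : mu cs w t = 1 ∨ mu cs w t = -1 := Int.units_eq_one_or _

lemma mem_NN_mul_of_left {u v t : W} (h1 : t ∈ NN cs v) (h2 : v * t * v⁻¹ ∉ NN cs u) :
    t ∈ NN cs (u * v) := by
  have h2' : mu cs u (v * t * v⁻¹) = 1 := by
    rcases mu_neg_one_or cs u (v * t * v⁻¹) with h | h
    · exact h
    · exact absurd h h2
  show mu cs (u * v) t = -1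
  rw [mu_mul, h2', show mu cs v t = -1 from h1, mul_one]

lemma mem_NN_mul_of_right {u v t : W} (h1 : t ∉ NN cs v) (h2 : v * t * v⁻¹ ∈ NN cs u) :
    t ∈ NN cs (u * v) := by
  have h1' : mu cs v t = 1 := by
    rcases mu_neg_one_or cs v t with h | h
    · exact h
    · exact absurd h h1
  show mu cs (u * v) t = -1
  rw [mu_mul, h1', show mu cs u (v * t * v⁻¹) = -1 from h2, one_mul]

lemma not_mem_NN_mul_of_both {u v t : W} (h1 : t ∈ NN cs v) (h2 : v * t * v⁻¹ ∈ NN cs u) :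
    t ∉ NN cs (u * v) := by
  intro hc
  have : mu cs (u * v) t = -1 := hc
  rw [mu_mul, show mu cs v t = -1 from h1, show mu cs u (v * t * v⁻¹) = -1 from h2] at this
  simp at this

lemma not_mem_NN_mul_of_neither {u v t : W} (h1 : t ∉ NN cs v) (h2 : v * t * v⁻¹ ∉ NN cs u) :
    t ∉ NN cs (u * v) := by
  intro hc
  have h1' : mu cs v t = 1 := by
    rcases mu_neg_one_or cs v t with h | h
    · exact h
    · exact absurd h h1
  have h2' : mu cs u (v * t * v⁻¹) = 1 := by
    rcases mu_neg_one_or cs u (v * t * v⁻¹) with h | h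
    · exact h
    · exact absurd h h2
  have : mu cs (u * v) t = -1 := hc
  rw [mu_mul, h1', h2'] at this
  simp at this

lemma conj_of_mem_NN_mul {u v t : W} (h1 : t ∈ NN cs (u * v)) (h2 : t ∉ NN cs v) :
    v * t * v⁻¹ ∈ NN cs u := by
  by_contra hc
  exact not_mem_NN_mul_of_neither cs h2 hc h1

lemma mem_of_mem_NN_mul {u v t : W} (h1 : t ∈ NN cs (u * v)) (h2 : v * t * v⁻¹ ∉ NN cs u) :
    t ∈ NN cs v := by
  by_contra hc
  exact not_mem_NN_mul_of_neither cs hc h2 h1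

section FiniteW

variable [Finite W]

/-- Additivity of length for products with no inversions in `TK`. -/
lemma NN_mul_of_disjoint {K : Set B} {u z : W} (hu : ∀ t ∈ NN cs u, t ∉ TK cs K)
    (hz : z ∈ WP cs K) :
    NN cs (u * z) = NN cs z ∪ (fun t => z⁻¹ * t * z) '' NN cs u := by
  ext t
  constructor
  · intro ht
    by_cases hv : t ∈ NN cs z
    · exact Or.inl hv
    · right
      have := conj_of_mem_NN_mul cs ht hv
      exact ⟨z * t * z⁻¹, this, by group⟩
  · intro ht
    rcases ht with h | ⟨r, hr, hrt⟩
    · apply mem_NN_mul_of_left cs h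
      intro hc
      have htk : t ∈ TK cs K := NN_subset_TK cs hz h
      have : z * t * z⁻¹ ∈ TK cs K := by
        have := (conj_mem_TK_iff cs (inv_mem hz) t)
        rw [inv_inv] at this
        exact this.mpr htk
      exact hu _ hc this
    · subst hrt
      apply mem_NN_mul_of_right cs
      · intro hc
        have htk := NN_subset_TK cs hz hc
        have : r ∈ TK cs K := by
          have h5 := (conj_mem_TK_iff cs hz r).mp htk
          exact h5
        exact hu r hr this
      · have : z * (z⁻¹ * r * z) * z⁻¹ = r := by group
        rw [this]
        exact hr

lemma length_mul_of_disjoint {K : Set B} {u z : W} (hu : ∀ t ∈ NN cs u, t ∉ TK cs K)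
    (hz : z ∈ WP cs K) : ℓ (u * z) = ℓ u + ℓ z := by
  have hset := NN_mul_of_disjoint cs hu hz
  have hdisj : Disjoint (NN cs z) ((fun t => z⁻¹ * t * z) '' NN cs u) := by
    rw [Set.disjoint_left]
    rintro t ht ⟨r, hr, rfl⟩
    have htk : z⁻¹ * r * z ∈ TK cs K := NN_subset_TK cs hz ht
    exact hu r hr ((conj_mem_TK_iff cs hz r).mp htk)
  have hinj : Function.Injective (fun t : W => z⁻¹ * t * z) := conj_inj _ _
  rw [← ncard_NN cs (u * z), hset,
    Set.ncard_union_eq hdisj (Set.toFinite _) (Set.toFinite _),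
    Set.ncard_image_of_injective _ hinj, ncard_NN, ncard_NN, Nat.add_comm]

/-- The key counting lemma: conjugation by a "minimal" element preserving length maps
inversion sets to inversion sets. -/
lemma NN_conj_of_length_eq {K : Set B} {u z : W} (hu : ∀ t ∈ NN cs u, t ∉ TK cs K)
    (hz : z ∈ WP cs K) (hlen : ℓ (u * z * u⁻¹) = ℓ z) :
    NN cs (u * z * u⁻¹) = (fun t => u * t * u⁻¹) '' NN cs z := by
  set w' := u * z * u⁻¹ with hw'
  have huz : w' * u = u * z := by rw [hw']; group
  set P : Set W := {t | u * t * u⁻¹ ∈ NN cs w'} with hP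
  have hPimg : P = (fun t => u⁻¹ * t * u) '' NN cs w' := by
    ext t
    constructor
    · intro ht
      exact ⟨u * t * u⁻¹, ht, by group⟩
    · rintro ⟨r, hr, rfl⟩
      show u * (u⁻¹ * r * u) * u⁻¹ ∈ NN cs w'
      have : u * (u⁻¹ * r * u) * u⁻¹ = r := by group
      rw [this]
      exact hr
  have hPcard : P.ncard = ℓ z := by
    rw [hPimg, Set.ncard_image_of_injective _ (conj_inj (u⁻¹) u), ncard_NN, hlen]
  -- N z ⊆ P
  have hsub : NN cs z ⊆ P := by
    intro t ht
    have h1 : t ∈ NN cs (u * z) := by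
      rw [NN_mul_of_disjoint cs hu hz]
      exact Or.inl ht
    rw [← huz] at h1
    have h2 : t ∉ NN cs u := by
      intro hc
      exact hu t hc (NN_subset_TK cs hz ht)
    exact conj_of_mem_NN_mul cs h1 h2
  have heq : NN cs z = P :=
    Set.eq_of_subset_of_ncard_le hsub (by rw [hPcard, ncard_NN]) (Set.toFinite _)
  ext r
  constructor
  · intro hr
    refine ⟨u⁻¹ * r * u, ?_, by group⟩
    rw [heq]
    show u * (u⁻¹ * r * u) * u⁻¹ ∈ NN cs w'
    have : u * (u⁻¹ * r * u) * u⁻¹ = r := by group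
    rw [this]; exact hr
  · rintro ⟨t, ht, rfl⟩
    rw [heq] at ht
    exact ht

section Longest

variable {K : Set B} {w₀ : W}
variable (hmem : w₀ ∈ WP cs K) (hmax : ∀ z ∈ WP cs K, cs.length z ≤ cs.length w₀)

include hmem hmax

lemma NN_longest : NN cs w₀ = TK cs K := by
  apply Set.Subset.antisymm (NN_subset_TK cs hmem)
  intro t ⟨href, htK⟩
  by_contra hc
  have h1 : ℓ (w₀ * t) ≠ ℓ w₀ := href.length_mul_left_ne w₀
  have h2 : ¬ (ℓ (w₀ * t) < ℓ w₀) := fun hlt => hc ((mem_NN_iff cs w₀ t).mpr ⟨href, hlt⟩)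
  have h3 : ℓ (w₀ * t) ≤ ℓ w₀ := hmax _ (mul_mem hmem htK)
  omega

lemma length_TK : (TK cs K).ncard = ℓ w₀ := by
  rw [← NN_longest cs hmem hmax, ncard_NN]

lemma NN_longest_mul {g : W} (hg : g ∈ WP cs K) :
    NN cs (w₀ * g) = TK cs K \ NN cs g := by
  have hNg : NN cs g ⊆ TK cs K := NN_subset_TK cs hg
  ext t
  constructor
  · intro ht
    by_cases h1 : t ∈ NN cs g
    · exfalso
      have h2 : g * t * g⁻¹ ∈ NN cs w₀ := by
        rw [NN_longest cs hmem hmax]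
        have h3 := (conj_mem_TK_iff cs (inv_mem hg) t)
        rw [inv_inv] at h3
        exact h3.mpr (hNg h1)
      exact not_mem_NN_mul_of_both cs h1 h2 ht
    · have h2 := conj_of_mem_NN_mul cs ht h1
      rw [NN_longest cs hmem hmax] at h2
      have h3 : t ∈ TK cs K := by
        have h4 := (conj_mem_TK_iff cs (inv_mem hg) t)
        rw [inv_inv] at h4
        exact h4.mp h2
      exact ⟨h3, h1⟩
  · rintro ⟨htK, hng⟩
    apply mem_NN_mul_of_right cs hng
    rw [NN_longest cs hmem hmax]
    have h4 := (conj_mem_TK_iff cs (inv_mem hg) t)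
    rw [inv_inv] at h4
    exact h4.mpr htK

lemma length_longest_mul {g : W} (hg : g ∈ WP cs K) :
    ℓ (w₀ * g) + ℓ g = ℓ w₀ := by
  have h1 : NN cs g ⊆ TK cs K := NN_subset_TK cs hg
  have h2 := NN_longest_mul cs hmem hmax hg
  have h3 : ℓ (w₀ * g) = (TK cs K).ncard - (NN cs g).ncard := by
    rw [← ncard_NN cs (w₀ * g), h2, Set.ncard_diff h1 (Set.toFinite _)]
  have h4 : (NN cs g).ncard ≤ (TK cs K).ncard :=
    Set.ncard_le_ncard h1 (Set.toFinite _)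
  rw [h3, ncard_NN, length_TK cs hmem hmax]
  rw [ncard_NN, length_TK cs hmem hmax] at h4
  omega

lemma longest_mul_self : w₀ * w₀ = 1 := by
  have h1 : NN cs (w₀ * w₀) = ∅ := by
    rw [NN_longest_mul cs hmem hmax hmem, NN_longest cs hmem hmax, Set.diff_self]
  by_contra hc
  obtain ⟨i, hi⟩ := exists_simple_mem_NN cs hc
  rw [h1] at hi
  exact hi

lemma longest_inv : w₀⁻¹ = w₀ :=
  inv_eq_of_mul_eq_one_right (longest_mul_self cs hmem hmax)

lemma longest_unique {z : W} (hz : z ∈ WP cs K) (hzmax : ∀ y ∈ WP cs K, ℓ y ≤ ℓ z) :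
    z = w₀ := by
  have h1 : NN cs (z * w₀) = ∅ := by
    rw [NN_longest_mul cs hz hzmax hmem, NN_longest cs hmem hmax, Set.diff_self]
  have h2 : z * w₀ = 1 := by
    by_contra hc
    obtain ⟨i, hi⟩ := exists_simple_mem_NN cs hc
    rw [h1] at hi
    exact hi
  calc z = z * w₀ * w₀⁻¹ := by group
    _ = w₀⁻¹ := by rw [h2, one_mul]
    _ = w₀ := longest_inv cs hmem hmax

lemma longest_descent {k : B} (hk : k ∈ K) : ℓ (w₀ * s k) < ℓ w₀ := by
  have h1 : s k ∈ NN cs w₀ := by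
    rw [NN_longest cs hmem hmax]
    exact ⟨cs.isReflection_simple k, Subgroup.subset_closure ⟨k, hk, rfl⟩⟩
  exact (mem_NN_sub cs h1).2

lemma longest_descent_mem (sat : Saturated cs K) {b : B} (hb : ℓ (w₀ * s b) < ℓ w₀) :
    b ∈ K := by
  have h1 : s b ∈ NN cs w₀ := (mem_NN_iff cs w₀ (s b)).mpr ⟨cs.isReflection_simple b, hb⟩
  rw [NN_longest cs hmem hmax] at h1
  exact simple_mem_WP cs sat h1.2

lemma longest_of_all_descents {z : W} (hz : z ∈ WP cs K)
    (hdesc : ∀ k ∈ K, ℓ (z * s k) < ℓ z) : z = w₀ := by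
  set g₀ := w₀ * z with hg₀
  have hg₀mem : g₀ ∈ WP cs K := mul_mem hmem hz
  have hzg : z = w₀ * g₀ := by
    rw [hg₀, ← mul_assoc, longest_mul_self cs hmem hmax, one_mul]
  by_cases h1 : g₀ = 1
  · rw [h1] at hzg
    rw [hzg, mul_one]
  · obtain ⟨κ, hκred, hκmem, hκπ⟩ := exists_reduced_word_of_mem_WP cs hg₀mem
    rcases List.eq_nil_or_concat κ with hnil | ⟨κ₀, k, rfl⟩
    · exfalso
      rw [hnil, cs.wordProd_nil] at hκπ
      exact h1 hκπ.symm
    · rw [List.concat_eq_append] at hκred hκmem hκπ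
      have hkK : k ∈ K := hκmem k (by simp)
      have hdesc2 : ℓ (g₀ * s k) < ℓ g₀ := by
        have h2 : g₀ * s k = π κ₀ := by
          rw [← hκπ, cs.wordProd_append, cs.wordProd_singleton, mul_assoc,
            cs.simple_mul_simple_self, mul_one]
        rw [h2]
        have h3 : ℓ (π κ₀) ≤ κ₀.length := cs.length_wordProd_le κ₀
        have h4 : (κ₀ ++ [k]).length = ℓ g₀ := by rw [← hκπ]; exact hκred.symm
        simp at h4
        omega
      have hg₀sk : g₀ * s k ∈ WP cs K :=
        mul_mem hg₀mem (Subgroup.subset_closure ⟨k, hkK, rfl⟩)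
      have h5 := length_longest_mul cs hmem hmax hg₀sk
      have h6 := length_longest_mul cs hmem hmax hg₀mem
      have h7 : w₀ * (g₀ * s k) = z * s k := by rw [← mul_assoc, ← hzg]
      rw [h7] at h5
      rw [← hzg] at h6
      have h8 := hdesc k hkK
      omega

lemma longest_conj_simple (sat : Saturated cs K) {k : B} (hk : k ∈ K) :
    ∃ c ∈ K, w₀ * s k * w₀ = s c := by
  have h1 : s k * w₀ ∈ WP cs K :=
    mul_mem (Subgroup.subset_closure ⟨k, hk, rfl⟩) hmem
  have h2 : ℓ (s k * w₀) = ℓ (w₀ * s k) := by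
    rw [← cs.length_inv (s k * w₀), mul_inv_rev, cs.inv_simple,
      longest_inv cs hmem hmax]
  have h3 := length_longest_mul cs hmem hmax h1
  have h5 := length_longest_mul cs hmem hmax
    (Subgroup.subset_closure (Set.mem_image_of_mem _ hk) : s k ∈ WP cs K)
  rw [cs.length_simple] at h5
  rw [h2] at h3
  have h6 : ℓ (w₀ * (s k * w₀)) = 1 := by omega
  obtain ⟨c, hc⟩ := cs.length_eq_one_iff.mp h6
  refine ⟨c, ?_, by rw [← mul_assoc] at hc; exact hc⟩
  apply simple_mem_WP cs sat
  rw [← hc]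
  exact mul_mem hmem h1

lemma length_mul_longest {z : W} (hz : z ∈ WP cs K) :
    ℓ (z * w₀) + ℓ z = ℓ w₀ := by
  have h1 : ℓ (z * w₀) = ℓ (w₀ * z⁻¹) := by
    rw [← cs.length_inv (z * w₀), mul_inv_rev, longest_inv cs hmem hmax]
  have h2 := length_longest_mul cs hmem hmax (inv_mem hz)
  rw [cs.length_inv] at h2
  rw [h1]
  exact h2

lemma length_conj_longest {z : W} (hz : z ∈ WP cs K) :
    ℓ (w₀ * z * w₀) = ℓ z := by
  have h1 := length_mul_longest cs hmem hmax hz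
  have h2 := length_longest_mul cs hmem hmax (mul_mem hz hmem)
  rw [mul_assoc]
  omega

lemma coxSupport_conj_longest (sat : Saturated cs K) {x : W} (hx : x ∈ WP cs K)
    (hsupp : coxSupport cs x = K) : coxSupport cs (w₀ * x * w₀) = K := by
  classical
  -- the conjugation-by-w₀ letter map
  set σ : B → B := fun b =>
    if h : ∃ c ∈ K, w₀ * s b * w₀ = s c then h.choose else b with hσdef
  have hσ : ∀ k ∈ K, σ k ∈ K ∧ w₀ * s k * w₀ = s (σ k) := by
    intro k hk
    have hex := longest_conj_simple cs hmem hmax sat hk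
    rw [hσdef]
    simp only [dif_pos hex]
    exact ⟨hex.choose_spec.1, hex.choose_spec.2⟩
  have hword : ∀ κ : List B, (∀ b ∈ κ, b ∈ K) → w₀ * π κ * w₀ = π (κ.map σ) := by
    intro κ
    induction κ with
    | nil =>
      intro _
      rw [cs.wordProd_nil, List.map_nil, cs.wordProd_nil, mul_one,
        longest_mul_self cs hmem hmax]
    | cons i κ ih =>
      intro hk
      have hiK : i ∈ K := hk i (List.mem_cons_self (a := i) (l := κ))
      rw [List.map_cons, cs.wordProd_cons, cs.wordProd_cons]
      have h1 : w₀ * (s i * π κ) * w₀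
          = (w₀ * s i * w₀) * (w₀ * π κ * w₀) := by
        have hw2 := longest_mul_self cs hmem hmax
        calc w₀ * (s i * π κ) * w₀ = w₀ * s i * (w₀ * w₀) * π κ * w₀ := by
              rw [hw2, mul_one]; group
          _ = (w₀ * s i * w₀) * (w₀ * π κ * w₀) := by group
      rw [h1, (hσ i hiK).2, ih (fun b hb => hk b (List.mem_cons_of_mem i hb))]
  have hsub1 : coxSupport cs (w₀ * x * w₀) ⊆ K :=
    coxSupport_subset_of_mem_WP cs sat _ (mul_mem (mul_mem hmem hx) hmem)
  apply Set.Subset.antisymm hsub1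
  -- key step: letters of a reduced word of x are mapped into the support of the conjugate
  have hstep : ∀ k ∈ K, σ k ∈ coxSupport cs (w₀ * x * w₀) := by
    intro k hk
    have hk' : k ∈ coxSupport cs x := hsupp ▸ hk
    obtain ⟨ω, hred, hπ, hmemk⟩ := hk'
    have hωK : ∀ b ∈ ω, b ∈ K := by
      intro b hb
      rw [← hsupp]
      exact ⟨ω, hred, hπ, hb⟩
    have hmap := hword ω hωK
    rw [hπ] at hmap
    have hredmap : cs.IsReduced (ω.map σ) := by
      unfold CoxeterSystem.IsReduced
      rw [← hmap, List.length_map, length_conj_longest cs hmem hmax hx, ← hπ]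
      exact hred
    exact ⟨ω.map σ, hredmap, hmap.symm, List.mem_map_of_mem (f := σ) hmemk⟩
  intro k hk
  have h1 : σ k ∈ K := (hσ k hk).1
  have h2 : σ (σ k) ∈ coxSupport cs (w₀ * x * w₀) := hstep (σ k) h1
  have h3 : s (σ (σ k)) = s k := by
    have e1 := (hσ (σ k) h1).2
    have e2 := (hσ k hk).2
    rw [← e2] at e1
    have hw2 := longest_mul_self cs hmem hmax
    rw [← e1]
    calc w₀ * (w₀ * s k * w₀) * w₀
        = (w₀ * w₀) * s k * (w₀ * w₀) := by group
      _ = s k := by rw [hw2]; group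
  exact saturated_coxSupport cs (w₀ * x * w₀) (σ (σ k)) k h3 h2

end Longest

lemma exists_longest (K : Set B) :
    ∃ w₀, w₀ ∈ WP cs K ∧ ∀ z ∈ WP cs K, ℓ z ≤ ℓ w₀ := by
  obtain ⟨a, ha, hamax⟩ := Set.Finite.exists_maximalFor cs.length
    ((WP cs K : Set W)) (Set.toFinite _) ⟨1, Subgroup.one_mem _⟩
  refine ⟨a, ha, ?_⟩
  intro z hz
  by_contra hc
  push_neg at hc
  have := hamax (j := z) hz (le_of_lt hc)
  omega

lemma exists_min_coset (v : W) (K : Set B) :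
    ∃ u : W, v⁻¹ * u ∈ WP cs K ∧ ∀ g : W, v⁻¹ * g ∈ WP cs K → ℓ u ≤ ℓ g := by
  obtain ⟨a, ha, hamin⟩ := Set.Finite.exists_minimalFor cs.length
    ({g : W | v⁻¹ * g ∈ WP cs K}) (Set.toFinite _)
    ⟨v, by simp [Subgroup.one_mem]⟩
  refine ⟨a, ha, ?_⟩
  intro g hg
  by_contra hc
  push_neg at hc
  have := hamin (j := g) hg (le_of_lt hc)
  omega

section Tau

variable {K : Set B} {u : W}
variable (hu : ∀ t ∈ NN cs u, t ∉ TK cs K)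

include hu

lemma conj_length_ge {y : W} (hy : y ∈ WP cs K) : ℓ y ≤ ℓ (u * y * u⁻¹) := by
  have h1 : ℓ (u * y) = ℓ u + ℓ y := length_mul_of_disjoint cs hu hy
  have h2 : (u * y * u⁻¹) * u = u * y := by group
  have h3 : ℓ ((u * y * u⁻¹) * u) ≤ ℓ (u * y * u⁻¹) + ℓ u := cs.length_mul_le _ _
  rw [h2, h1] at h3
  omega

lemma A_step {z : W} (hz : z ∈ WP cs K) (hA : ℓ (u * z * u⁻¹) = ℓ z) {k : B}
    (hk : k ∈ K) (hdesc : ℓ (z * s k) < ℓ z) :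
    ℓ (u * (z * s k) * u⁻¹) = ℓ (z * s k) := by
  have hzk : z * s k ∈ WP cs K :=
    mul_mem hz (Subgroup.subset_closure ⟨k, hk, rfl⟩)
  have hlow : ℓ (z * s k) ≤ ℓ (u * (z * s k) * u⁻¹) := conj_length_ge cs hu hzk
  have hsk : s k ∈ NN cs z := (mem_NN_iff cs z (s k)).mpr ⟨cs.isReflection_simple k, hdesc⟩
  have hconj := NN_conj_of_length_eq cs hu hz hA
  have ht : u * s k * u⁻¹ ∈ NN cs (u * z * u⁻¹) := by
    rw [hconj]
    exact ⟨s k, hsk, rfl⟩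
  have hlt := (mem_NN_sub cs ht).2
  have he : (u * z * u⁻¹) * (u * s k * u⁻¹) = u * (z * s k) * u⁻¹ := by group
  rw [he, hA] at hlt
  have hd : ℓ (z * s k) = ℓ z - 1 ∧ 1 ≤ ℓ z := by
    rcases cs.length_mul_simple z k with h | h
    · omega
    · omega
  omega

lemma A_prefix : ∀ n : ℕ, ∀ ρ : List B, ρ.length = n → cs.IsReduced ρ →
    (∀ b ∈ ρ, b ∈ K) → ℓ (u * π ρ * u⁻¹) = ℓ (π ρ) →
    ∀ m : ℕ, ℓ (u * π (ρ.take m) * u⁻¹) = ℓ (π (ρ.take m)) := by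
  intro n
  induction n using Nat.strong_induction_on with
  | _ n ih =>
    intro ρ hlen hred hK hA m
    by_cases hm : ρ.length ≤ m
    · rw [List.take_of_length_le hm]
      exact hA
    · rcases List.eq_nil_or_concat ρ with rfl | ⟨ρ₀, b, rfl⟩
      · simp at hm
      · rw [List.concat_eq_append] at *
        have hb : b ∈ K := hK b (by simp)
        have hρ₀red : cs.IsReduced ρ₀ := by
          have := hred.take (ρ₀.length)
          rwa [List.take_append_of_le_length (le_refl _), List.take_length] at this
        have hprod : π (ρ₀ ++ [b]) = π ρ₀ * s b := by
          rw [cs.wordProd_append, cs.wordProd_singleton]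
        have hdesc : ℓ (π (ρ₀ ++ [b]) * s b) < ℓ (π (ρ₀ ++ [b])) := by
          have hsimp : π (ρ₀ ++ [b]) * s b = π ρ₀ := by
            rw [hprod, mul_assoc, cs.simple_mul_simple_self, mul_one]
          rw [hsimp]
          have h1 : ℓ (π ρ₀) ≤ ρ₀.length := cs.length_wordProd_le ρ₀
          have h2 : ℓ (π (ρ₀ ++ [b])) = ρ₀.length + 1 := by
            rw [hred]
            simp
          omega
        have hA₀ : ℓ (u * π ρ₀ * u⁻¹) = ℓ (π ρ₀) := by
          have h3 := A_step cs hu (wordProd_mem_WP cs hK) hA hb hdesc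
          rw [hprod, mul_assoc (π ρ₀) (s b) (s b), cs.simple_mul_simple_self, mul_one] at h3
          exact h3
        have hm' : m ≤ ρ₀.length := by
          simp at hm ⊢
          rw [List.length_append, List.length_singleton] at hlen
          omega
        rw [List.take_append_of_le_length hm']
        have hlen₀ : ρ₀.length < n := by
          rw [← hlen, List.length_append, List.length_singleton]
          omega
        exact ih ρ₀.length hlen₀ ρ₀ rfl hρ₀red
          (fun c hc => hK c (List.mem_append.mpr (Or.inl hc))) hA₀ m

lemma A_inv {z : W} (hA : ℓ (u * z * u⁻¹) = ℓ z) :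
    ℓ (u * z⁻¹ * u⁻¹) = ℓ z⁻¹ := by
  have h1 : u * z⁻¹ * u⁻¹ = (u * z * u⁻¹)⁻¹ := by group
  rw [h1, cs.length_inv, cs.length_inv]
  exact hA

lemma simple_conj_of_A (sat : Saturated cs K) {y : W} (hy : y ∈ WP cs K)
    (hA : ℓ (u * y * u⁻¹) = ℓ y) {k : B} (hk : k ∈ coxSupport cs y) :
    ∃ c : B, u * s k * u⁻¹ = s c := by
  obtain ⟨ω, hred, hπ, hmem⟩ := hk
  have hωK : ∀ b ∈ ω, b ∈ K := fun b hb =>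
    coxSupport_subset_of_mem_WP cs sat y hy ⟨ω, hred, hπ, hb⟩
  obtain ⟨j, hj, hget⟩ := List.mem_iff_getElem.mp hmem
  have hA' : ℓ (u * π ω * u⁻¹) = ℓ (π ω) := by rw [hπ]; exact hA
  have hpre := A_prefix cs hu ω.length ω rfl hred hωK hA' (j+1)
  have hρ₁red : cs.IsReduced (ω.take (j+1)) := hred.take (j+1)
  have hρ₁K : ∀ b ∈ ω.take (j+1), b ∈ K := fun b hb => hωK b (List.mem_of_mem_take hb)
  have hA₂ : ℓ (u * π (ω.take (j+1)).reverse * u⁻¹) = ℓ (π (ω.take (j+1)).reverse) := by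
    rw [cs.wordProd_reverse]
    exact A_inv cs hu hpre
  have hrevred : cs.IsReduced (ω.take (j+1)).reverse :=
    (cs.isReduced_reverse_iff (ω.take (j+1))).mpr hρ₁red
  have hrevK : ∀ b ∈ (ω.take (j+1)).reverse, b ∈ K :=
    fun b hb => hρ₁K b (List.mem_reverse.mp hb)
  have hfin := A_prefix cs hu (ω.take (j+1)).reverse.length (ω.take (j+1)).reverse rfl
    hrevred hrevK hA₂ 1
  have htake : (ω.take (j+1)).reverse.take 1 = [k] := by
    have h1 : ω.take (j+1) = ω.take j ++ [ω[j]] := by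
      rw [List.take_succ]
      congr 1
      rw [List.getElem?_eq_getElem hj]
      rfl
    rw [h1, List.reverse_append, List.reverse_singleton, List.singleton_append,
      List.take_cons, List.take_zero, hget]
    exact Nat.one_pos
  rw [htake, cs.wordProd_singleton] at hfin
  rw [cs.length_simple] at hfin
  exact cs.length_eq_one_iff.mp hfin

end Tau

lemma length_conj_le {K : Set B} {u : W} (hconj : ∀ k ∈ K, ∃ c, u * s k * u⁻¹ = s c)
    {z : W} (hz : z ∈ WP cs K) : ℓ (u * z * u⁻¹) ≤ ℓ z := by
  obtain ⟨κ, hred, hK, hπ⟩ := exists_reduced_word_of_mem_WP cs hz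
  have main : ∀ κ' : List B, (∀ b ∈ κ', b ∈ K) →
      ∃ κ'' : List B, κ''.length = κ'.length ∧ u * π κ' * u⁻¹ = π κ'' := by
    intro κ'
    induction κ' with
    | nil =>
      intro _
      exact ⟨[], rfl, by simp⟩
    | cons i κ' ih =>
      intro hmem
      obtain ⟨c, hc⟩ := hconj i (hmem i (List.mem_cons_self (a := i) (l := κ')))
      obtain ⟨κ'', hlen, hκ''⟩ := ih (fun b hb => hmem b (List.mem_cons_of_mem i hb))
      refine ⟨c :: κ'', by simp [hlen], ?_⟩
      rw [cs.wordProd_cons, cs.wordProd_cons, ← hκ'', ← hc]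
      group
  obtain ⟨κ'', hlen, heq⟩ := main κ hK
  rw [← hπ, heq]
  calc ℓ (π κ'') ≤ κ''.length := cs.length_wordProd_le κ''
    _ = κ.length := hlen
    _ = ℓ (π κ) := hred.symm

end FiniteW

end StmtAux

/-- For `w` of minimal length in its conjugacy class:
`J(v⁻¹ w v) = D(v⁻¹)` if and only if `v` is the longest element of `W_{J(w)}`. -/
theorem stmt_7 {B W : Type*} [Group W] [Finite W] {M : CoxeterMatrix B}
    (cs : CoxeterSystem M W) (w : W)
    (hmin : ∀ v : W, cs.length w ≤ cs.length (v⁻¹ * w * v))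
    (wJ : W) (hwJmem : wJ ∈ Subgroup.closure (cs.simple '' coxSupport cs w))
    (hwJmax : ∀ v ∈ Subgroup.closure (cs.simple '' coxSupport cs w),
      cs.length v ≤ cs.length wJ)
    (v : W) :
    coxSupport cs (v⁻¹ * w * v) =
        {b : B | cs.length (cs.simple b * v⁻¹) < cs.length v⁻¹} ↔ v = wJ := by
  classical
  open StmtAux in
  constructor
  · intro hEq
    set x := v⁻¹ * w * v with hx
    set K := coxSupport cs x with hK
    have sat : Saturated cs K := saturated_coxSupport cs x
    have hE : ∀ b : B, cs.length (v * cs.simple b) < cs.length v ↔ b ∈ K := by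
      intro b
      have h1 : cs.length (cs.simple b * v⁻¹) = cs.length (v * cs.simple b) := by
        rw [← cs.length_inv (cs.simple b * v⁻¹), mul_inv_rev, inv_inv, cs.inv_simple]
      have h2 : b ∈ K ↔ cs.length (cs.simple b * v⁻¹) < cs.length v⁻¹ := by
        rw [hEq]; rfl
      rw [h2, h1, cs.length_inv]
    obtain ⟨w₀, hw₀mem, hw₀max⟩ := exists_longest cs K
    obtain ⟨u, humem, humin⟩ := exists_min_coset cs v K
    have hu : ∀ t ∈ NN cs u, t ∉ TK cs K := by
      rintro t ht ⟨href, hWP⟩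
      have h2 := (mem_NN_sub cs ht).2
      have h3 : v⁻¹ * (u * t) ∈ WP cs K := by
        rw [← mul_assoc]; exact mul_mem humem hWP
      have h4 := humin (u * t) h3
      omega
    set y₀ := u⁻¹ * v with hy₀
    have hy₀mem : y₀ ∈ WP cs K := by
      have h5 := inv_mem humem
      rw [mul_inv_rev, inv_inv] at h5
      exact h5
    have hvuy : v = u * y₀ := by rw [hy₀]; group
    have hvlen : cs.length v = cs.length u + cs.length y₀ := by
      rw [hvuy]; exact length_mul_of_disjoint cs hu hy₀mem
    have hy₀desc : ∀ k ∈ K, cs.length (y₀ * cs.simple k) < cs.length y₀ := by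
      intro k hk
      have h4 : cs.length (v * cs.simple k) < cs.length v := (hE k).mpr hk
      have h5 : cs.length (v * cs.simple k) = cs.length u + cs.length (y₀ * cs.simple k) := by
        rw [hvuy, mul_assoc]
        exact length_mul_of_disjoint cs hu
          (mul_mem hy₀mem (Subgroup.subset_closure ⟨k, hk, rfl⟩))
      omega
    have hy₀eq : y₀ = w₀ := longest_of_all_descents cs hw₀mem hw₀max hy₀mem hy₀desc
    have hxmem : x ∈ WP cs K := mem_WP_coxSupport cs x
    have hw₀₂ : w₀ * w₀ = 1 := longest_mul_self cs hw₀mem hw₀max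
    have hvw₀ : v = u * w₀ := by rw [hvuy, hy₀eq]
    have hyuv : w₀ * x * w₀ = u⁻¹ * w * u := by
      rw [hx, hvw₀]
      have h6 : w₀ * ((u * w₀)⁻¹ * w * (u * w₀)) * w₀ = u⁻¹ * w * u * (w₀ * w₀) := by
        group
      rw [h6, hw₀₂, mul_one]
    have hysupp : coxSupport cs (w₀ * x * w₀) = K :=
      coxSupport_conj_longest cs hw₀mem hw₀max sat hxmem rfl
    have hymem : w₀ * x * w₀ ∈ WP cs K := mul_mem (mul_mem hw₀mem hxmem) hw₀mem
    have hylen_ge : cs.length w ≤ cs.length (w₀ * x * w₀) := by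
      rw [hyuv]; exact hmin u
    have hww : u * (w₀ * x * w₀) * u⁻¹ = w := by rw [hyuv]; group
    have hylen_le : cs.length (w₀ * x * w₀) ≤ cs.length w := by
      have h7 := conj_length_ge cs hu hymem
      rw [hww] at h7
      exact h7
    have hA : cs.length (u * (w₀ * x * w₀) * u⁻¹) = cs.length (w₀ * x * w₀) := by
      rw [hww]; omega
    have hu1 : u = 1 := by
      by_contra hne
      obtain ⟨c, hc⟩ := cs.exists_rightDescent_of_ne_one hne
      have hcdesc : cs.length (u * cs.simple c) < cs.length u := hc
      have hcK : c ∉ K := by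
        intro hcK
        exact hu (cs.simple c)
          ((mem_NN_iff cs u (cs.simple c)).mpr ⟨cs.isReflection_simple c, hcdesc⟩)
          ⟨cs.isReflection_simple c, Subgroup.subset_closure ⟨c, hcK, rfl⟩⟩
      have hconj : ∀ k ∈ K, ∃ c', u * cs.simple k * u⁻¹ = cs.simple c' := by
        intro k hk
        exact simple_conj_of_A cs hu sat hymem hA
          (show k ∈ coxSupport cs (w₀ * x * w₀) from hysupp ▸ hk)
      have h6 : cs.length (u * w₀ * u⁻¹) ≤ cs.length w₀ :=
        length_conj_le cs hconj hw₀mem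
      have h7 : cs.length (v * cs.simple c) < cs.length v := by
        have heq2 : v * cs.simple c = (u * w₀ * u⁻¹) * (u * cs.simple c) := by
          rw [hvw₀]; group
        have h8 : cs.length (v * cs.simple c)
            ≤ cs.length (u * w₀ * u⁻¹) + cs.length (u * cs.simple c) := by
          rw [heq2]; exact cs.length_mul_le _ _
        have h9 : cs.length y₀ = cs.length w₀ := by rw [hy₀eq]
        omega
      exact hcK ((hE c).mp h7)
    have hveq : v = w₀ := by rw [hvw₀, hu1, one_mul]
    have hweq : w = w₀ * x * w₀ := by rw [← hww, hu1]; group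
    have hsuppw : coxSupport cs w = K := by rw [hweq]; exact hysupp
    have hwJmem' : wJ ∈ WP cs K := by
      rw [← hsuppw]; exact hwJmem
    have hwJmax' : ∀ z ∈ WP cs K, cs.length z ≤ cs.length wJ := by
      intro z hz
      apply hwJmax
      rw [hsuppw]
      exact hz
    have hfin : wJ = w₀ := longest_unique cs hw₀mem hw₀max hwJmem' hwJmax'
    rw [hveq, hfin]
  · intro hv
    rw [hv]
    have sat : Saturated cs (coxSupport cs w) := saturated_coxSupport cs w
    have hwJmem' : wJ ∈ WP cs (coxSupport cs w) := hwJmem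
    have hwJmax' : ∀ z ∈ WP cs (coxSupport cs w), cs.length z ≤ cs.length wJ := hwJmax
    have hinv : wJ⁻¹ = wJ := longest_inv cs hwJmem' hwJmax'
    have hwmem : w ∈ WP cs (coxSupport cs w) := mem_WP_coxSupport cs w
    have h1 : coxSupport cs (wJ⁻¹ * w * wJ) = coxSupport cs w := by
      rw [hinv]
      exact coxSupport_conj_longest cs hwJmem' hwJmax' sat hwmem rfl
    rw [h1]
    ext b
    simp only [Set.mem_setOf_eq]
    have hconv : cs.length (cs.simple b * wJ⁻¹) = cs.length (wJ * cs.simple b) := by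
      rw [← cs.length_inv (cs.simple b * wJ⁻¹), mul_inv_rev, inv_inv, cs.inv_simple]
    rw [hconv, cs.length_inv]
    constructor
    · intro hb
      exact longest_descent cs hwJmem' hwJmax' hb
    · intro hb
      exact longest_descent_mem cs hwJmem' hwJmax' sat hb
end
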